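/- arXiv:1707.07164 — 9 statements merged into one kernel-verified Lean document; each statement's English description precedes it below -/
import Mathlib

section
/- Let θ : [0,∞) → ℝ^N solve the inertial Kuramoto model for N identical oscillators with all-to-all coupling, and suppose Σ_{i=1}^N θ_i(0) = 0 and Σ_{i=1}^N ω_i(0) = 0. Then the kinetic energy vanishes asymptotically: lim_{t→∞} E_K(t) = 0; in particular lim_{t→∞} ω_i(t) = 0 for each i = 1,…,N. -/
open Filter

theorem sin_swap_sum (n : ℕ) (a b : Fin n → ℝ) :
    ∑ i, ∑ j, Real.sin (a j - a i) * (b j - b i)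
      = -2 * ∑ i, b i * ∑ j, Real.sin (a j - a i) := by
  have h1 : ∑ i, ∑ j, Real.sin (a j - a i) * b j
      = - ∑ i, ∑ j, Real.sin (a j - a i) * b i := by
    rw [Finset.sum_comm]
    rw [← Finset.sum_neg_distrib]
    refine Finset.sum_congr rfl fun i _ => ?_
    rw [← Finset.sum_neg_distrib]
    refine Finset.sum_congr rfl fun j _ => ?_
    have : a i - a j = -(a j - a i) := by ring
    rw [this, Real.sin_neg]; ring
  have h2 : ∀ i j : Fin n, Real.sin (a j - a i) * (b j - b i)
      = Real.sin (a j - a i) * b j - Real.sin (a j - a i) * b i := fun i j => by ring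
  have h3 : ∑ i, b i * ∑ j, Real.sin (a j - a i)
      = ∑ i, ∑ j, Real.sin (a j - a i) * b i := by
    refine Finset.sum_congr rfl fun i _ => ?_
    rw [Finset.mul_sum]
    exact Finset.sum_congr rfl fun j _ => mul_comm _ _
  simp_rw [h2, Finset.sum_sub_distrib, h1, h3]
  ring

theorem barbalat {g : ℝ → ℝ} {C M : ℝ} (hC : 0 ≤ C)
    (hcont : Continuous g) (hg0 : ∀ t, 0 ≤ g t)
    (hlip : ∀ s t : ℝ, 0 ≤ t → t ≤ s → g t - C * (s - t) ≤ g s)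
    (hM : ∀ T : ℝ, 0 ≤ T → (∫ s in (0:ℝ)..T, g s) ≤ M) :
    Tendsto g atTop (nhds 0) := by
  set F : ℝ → ℝ := fun T => ∫ s in (0:ℝ)..T, g s with hF
  have hInt : ∀ a b : ℝ, IntervalIntegrable g MeasureTheory.volume a b :=
    fun a b => hcont.intervalIntegrable a b
  have hadd : ∀ a b : ℝ, F b = F a + ∫ s in a..b, g s := by
    intro a b
    rw [hF]
    exact (intervalIntegral.integral_add_adjacent_intervals (hInt 0 a) (hInt a b)).symm
  have hFmono : Monotone F := by
    intro a b hab
    have h0 : 0 ≤ ∫ s in a..b, g s :=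
      intervalIntegral.integral_nonneg hab (fun x _ => hg0 x)
    rw [hadd a b]; linarith
  have hFbdd : BddAbove (Set.range F) := by
    refine ⟨max M 0, ?_⟩
    rintro _ ⟨T, rfl⟩
    rcases le_or_gt 0 T with h | h
    · exact le_trans (hM T h) (le_max_left _ _)
    · have : F T ≤ F 0 := hFmono h.le
      simp only [hF, intervalIntegral.integral_same] at this
      exact le_trans this (le_max_right _ _)
  set L := ⨆ T, F T with hL
  have hFleL : ∀ T, F T ≤ L := fun T => le_ciSup hFbdd T
  rw [Metric.tendsto_atTop]
  intro ε hε
  set δ := ε / (2 * (C + 1)) with hδdef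
  have hδ : 0 < δ := by positivity
  have hδε : δ * (2 * (C + 1)) = ε := by
    rw [hδdef]; field_simp
  have hLlt : L - ε * δ / 2 < L := by nlinarith
  obtain ⟨T0, hT0⟩ := exists_lt_of_lt_ciSup hLlt
  refine ⟨max T0 0, fun t ht => ?_⟩
  have ht0 : (0:ℝ) ≤ t := le_trans (le_max_right _ _) ht
  rw [Real.dist_eq, sub_zero, abs_of_nonneg (hg0 t)]
  by_contra hcontra
  push_neg at hcontra
  have hbelow : ∀ s ∈ Set.Icc t (t + δ), ε / 2 ≤ g s := by
    intro s hs
    have h1 := hlip s t ht0 hs.1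
    have h2 : C * (s - t) ≤ C * δ := by
      apply mul_le_mul_of_nonneg_left _ hC
      linarith [hs.2]
    have h3 : C * δ ≤ ε / 2 := by nlinarith
    linarith
  have hconst : (∫ s in t..(t + δ), (ε / 2 : ℝ)) = δ * (ε / 2) := by
    simp [intervalIntegral.integral_const]; ring
  have hint2 : δ * (ε / 2) ≤ ∫ s in t..(t + δ), g s := by
    rw [← hconst]
    apply intervalIntegral.integral_mono_on (by linarith) (intervalIntegrable_const)
      (hInt t (t + δ))
    exact hbelow
  have hstep : F t + δ * (ε / 2) ≤ F (t + δ) := by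
    rw [hadd t (t + δ)]; linarith
  have hFt : F T0 ≤ F t := hFmono (le_trans (le_max_left _ _) ht)
  have : L < F (t + δ) := by nlinarith
  exact absurd (hFleL (t + δ)) (not_le.mpr this)

theorem kuramoto_aux (N : ℕ) (hN : 1 ≤ N)
    (m γ κ : ℝ) (hm : 0 < m) (hγ : 0 < γ) (hκ : 0 < κ)
    (θ : ℝ → Fin N → ℝ) (ω : Fin N → ℝ → ℝ)
    (hθd : ∀ i, ∀ t : ℝ, HasDerivAt (fun s => θ s i) (ω i t) t)
    (hω1 : ∀ i, ContDiff ℝ 1 (ω i))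
    (hode : ∀ t ≥ (0:ℝ), ∀ i,
      m * deriv (ω i) t = -γ * ω i t + (κ / N) * ∑ j, Real.sin (θ t j - θ t i)) :
    Tendsto (fun t => ∑ i, (ω i t) ^ 2) atTop (nhds 0) := by
  have hNR : (0:ℝ) < N := by exact_mod_cast hN
  have hωdiff : ∀ i, Differentiable ℝ (ω i) := fun i => (hω1 i).differentiable one_ne_zero
  have hωcont : ∀ i, Continuous (ω i) := fun i => (hωdiff i).continuous
  set g : ℝ → ℝ := fun t => ∑ i, (ω i t) ^ 2 with hgdef
  have hgcont : Continuous g := by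
    apply continuous_finset_sum
    exact fun i _ => (hωcont i).pow 2
  have hgnn : ∀ t, 0 ≤ g t := fun t => Finset.sum_nonneg fun i _ => sq_nonneg _
  have hg' : ∀ t, HasDerivAt g (∑ i, 2 * ω i t * deriv (ω i) t) t := by
    intro t
    apply HasDerivAt.fun_sum
    intro i _
    have h := ((hωdiff i t).hasDerivAt).fun_pow 2
    refine h.congr_deriv ?_
    push_cast
    ring
  set V : ℝ → ℝ := fun t => (κ / (2 * N)) * ∑ i, ∑ j, (1 - Real.cos (θ t j - θ t i))
    with hVdef
  have hVnn : ∀ t, 0 ≤ V t := by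
    intro t
    apply mul_nonneg (by positivity)
    refine Finset.sum_nonneg fun i _ => Finset.sum_nonneg fun j _ => ?_
    linarith [Real.cos_le_one (θ t j - θ t i)]
  have hV' : ∀ t, HasDerivAt V
      ((κ / (2 * N)) * ∑ i, ∑ j, Real.sin (θ t j - θ t i) * (ω j t - ω i t)) t := by
    intro t
    apply HasDerivAt.const_mul
    apply HasDerivAt.fun_sum
    intro i _
    apply HasDerivAt.fun_sum
    intro j _
    have hij : HasDerivAt (fun s => θ s j - θ s i) (ω j t - ω i t) t :=
      (hθd j t).sub (hθd i t)
    have hcos := hij.cos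
    have := hcos.const_sub 1
    convert this using 1
    ring
  set E : ℝ → ℝ := fun t => (m / 2) * g t + V t with hEdef
  have hEnn : ∀ t, 0 ≤ E t := fun t =>
    add_nonneg (mul_nonneg (by positivity) (hgnn t)) (hVnn t)
  have hEderiv : ∀ t : ℝ, 0 ≤ t → HasDerivAt E (-γ * g t) t := by
    intro t ht
    have h := ((hg' t).const_mul (m / 2)).fun_add (hV' t)
    refine h.congr_deriv ?_
    have e1 : (m / 2) * (∑ i, 2 * ω i t * deriv (ω i) t)
        = ∑ i, ω i t * (m * deriv (ω i) t) := by
      rw [Finset.mul_sum]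
      exact Finset.sum_congr rfl fun i _ => by ring
    have e2 : ∑ i, ω i t * (m * deriv (ω i) t)
        = ∑ i, ω i t * (-γ * ω i t + (κ / N) * ∑ j, Real.sin (θ t j - θ t i)) :=
      Finset.sum_congr rfl fun i _ => by rw [hode t ht i]
    have e3 : ∑ i, ω i t * (-γ * ω i t + (κ / N) * ∑ j, Real.sin (θ t j - θ t i))
        = -γ * g t + (κ / N) * ∑ i, ω i t * ∑ j, Real.sin (θ t j - θ t i) := by
      have h : ∀ i ∈ Finset.univ,
          ω i t * (-γ * ω i t + (κ / N) * ∑ j, Real.sin (θ t j - θ t i))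
            = -γ * (ω i t) ^ 2
              + (κ / N) * (ω i t * ∑ j, Real.sin (θ t j - θ t i)) :=
        fun i _ => by ring
      rw [Finset.sum_congr rfl h, Finset.sum_add_distrib, ← Finset.mul_sum,
        ← Finset.mul_sum]
    have e4 := sin_swap_sum N (θ t) (fun i => ω i t)
    rw [e1, e2, e3, e4]
    field_simp
    ring
  have key : ∀ T : ℝ, 0 ≤ T → E 0 - E T = γ * ∫ s in (0:ℝ)..T, g s := by
    intro T hT
    have h := intervalIntegral.integral_eq_sub_of_hasDerivAt
      (f := E) (f' := fun t => -γ * g t)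
      (fun t ht => by
        rw [Set.uIcc_of_le hT] at ht
        exact hEderiv t ht.1)
      ((continuous_const.mul hgcont).intervalIntegrable 0 T)
    rw [intervalIntegral.integral_const_mul] at h
    linarith
  have hintnn : ∀ T : ℝ, 0 ≤ T → 0 ≤ ∫ s in (0:ℝ)..T, g s := fun T hT =>
    intervalIntegral.integral_nonneg hT fun x _ => hgnn x
  have hEmono : ∀ T : ℝ, 0 ≤ T → E T ≤ E 0 := by
    intro T hT
    have h1 := key T hT
    have h2 := hintnn T hT
    nlinarith
  set B : ℝ := Real.sqrt (2 * E 0 / m) with hBdef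
  have hB : 0 ≤ B := Real.sqrt_nonneg _
  have hBsq : B ^ 2 = 2 * E 0 / m :=
    Real.sq_sqrt (div_nonneg (by linarith [hEnn 0]) hm.le)
  have hgB : ∀ t : ℝ, 0 ≤ t → g t ≤ B ^ 2 := by
    intro t ht
    have h1 := hEmono t ht
    rw [show E t = m / 2 * g t + V t from rfl] at h1
    have h2 := hVnn t
    have h3 : m / 2 * g t ≤ E 0 := le_trans (by linarith) h1
    rw [hBsq]
    calc g t = (m / 2 * g t) * (2 / m) := by field_simp
      _ ≤ E 0 * (2 / m) := mul_le_mul_of_nonneg_right h3 (by positivity)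
      _ = 2 * E 0 / m := by ring
  have hωB : ∀ t : ℝ, 0 ≤ t → ∀ i, |ω i t| ≤ B := by
    intro t ht i
    have h1 : (ω i t) ^ 2 ≤ g t := by
      rw [hgdef]
      exact Finset.single_le_sum (fun j _ => sq_nonneg (ω j t)) (Finset.mem_univ i)
    have h2 : (ω i t) ^ 2 ≤ B ^ 2 := le_trans h1 (hgB t ht)
    have := Real.sqrt_le_sqrt h2
    rwa [Real.sqrt_sq_eq_abs, Real.sqrt_sq hB] at this
  have hsinB : ∀ (t : ℝ) (i : Fin N), |∑ j, Real.sin (θ t j - θ t i)| ≤ N := by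
    intro t i
    refine le_trans (Finset.abs_sum_le_sum_abs _ _) ?_
    have := Finset.sum_le_card_nsmul Finset.univ
      (fun j => |Real.sin (θ t j - θ t i)|) 1
      (fun j _ => Real.abs_sin_le_one _)
    simpa using this
  have hω'B : ∀ t : ℝ, 0 ≤ t → ∀ i, |deriv (ω i) t| ≤ (γ * B + κ) / m := by
    intro t ht i
    have h1 : |m * deriv (ω i) t| ≤ γ * B + κ := by
      rw [hode t ht i]
      refine le_trans (abs_add_le _ _) ?_
      have ha : |-γ * ω i t| ≤ γ * B := by
        rw [abs_mul, abs_neg, abs_of_pos hγ]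
        exact mul_le_mul_of_nonneg_left (hωB t ht i) hγ.le
      have hb : |κ / ↑N * ∑ j, Real.sin (θ t j - θ t i)| ≤ κ := by
        rw [abs_mul, abs_of_pos (by positivity : (0:ℝ) < κ / N)]
        calc κ / ↑N * |∑ j, Real.sin (θ t j - θ t i)|
            ≤ κ / ↑N * N := mul_le_mul_of_nonneg_left (hsinB t i) (by positivity)
          _ = κ := by field_simp
      linarith
    rw [abs_mul, abs_of_pos hm] at h1
    rw [le_div_iff₀ hm]
    linarith [abs_nonneg (deriv (ω i) t)]
  set C : ℝ := (N : ℝ) * (2 * B * ((γ * B + κ) / m)) with hCdef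
  have hCnn : 0 ≤ C := by positivity
  have hg'B : ∀ t : ℝ, 0 ≤ t → |∑ i, 2 * ω i t * deriv (ω i) t| ≤ C := by
    intro t ht
    refine le_trans (Finset.abs_sum_le_sum_abs _ _) ?_
    have hterm : ∀ i : Fin N, |2 * ω i t * deriv (ω i) t| ≤ 2 * B * ((γ * B + κ) / m) := by
      intro i
      rw [abs_mul, abs_mul, abs_two]
      have h1 := hωB t ht i
      have h2 := hω'B t ht i
      have h3 := abs_nonneg (ω i t)
      have h4 := abs_nonneg (deriv (ω i) t)
      nlinarith
    calc ∑ i, |2 * ω i t * deriv (ω i) t| ≤ ∑ _i : Fin N, 2 * B * ((γ * B + κ) / m) :=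
          Finset.sum_le_sum fun i _ => hterm i
      _ = C := by rw [Finset.sum_const, Finset.card_univ, Fintype.card_fin,
                      nsmul_eq_mul, hCdef]
  have hglip : ∀ s t : ℝ, 0 ≤ t → t ≤ s → g t - C * (s - t) ≤ g s := by
    intro s t ht hts
    have hmv := Convex.norm_image_sub_le_of_norm_hasDerivWithin_le
      (f := g) (f' := fun u => ∑ i, 2 * ω i u * deriv (ω i) u) (s := Set.Ici (0:ℝ))
      (fun x hx => (hg' x).hasDerivWithinAt)
      (fun x hx => by simpa [Real.norm_eq_abs] using hg'B x hx)
      (convex_Ici 0) ht (le_trans ht hts)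
    rw [Real.norm_eq_abs, Real.norm_eq_abs,
      abs_of_nonneg (by linarith : (0:ℝ) ≤ s - t)] at hmv
    have := neg_abs_le (g s - g t)
    linarith
  have hM : ∀ T : ℝ, 0 ≤ T → (∫ s in (0:ℝ)..T, g s) ≤ E 0 / γ := by
    intro T hT
    have h1 := key T hT
    have h2 := hEnn T
    rw [le_div_iff₀ hγ]
    nlinarith
  exact barbalat hCnn hgcont hgnn hglip hM

/-- Asymptotic vanishing of the kinetic energy for the inertial
Kuramoto model of identical oscillators with all-to-all coupling, under zero
initial phase and frequency averages: `E_K(t) → 0` and each `ω_i(t) → 0` as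
`t → ∞`. -/
theorem kuramoto_inertia_kinetic_energy_decay
    (N : ℕ) (hN : 1 ≤ N)
    (m γ κ : ℝ) (hm : 0 < m) (hγ : 0 < γ) (hκ : 0 < κ)
    (θ : ℝ → Fin N → ℝ)
    (hreg : ∀ i, ContDiff ℝ 2 (fun t => θ t i))
    (hode : ∀ t ≥ (0:ℝ), ∀ i,
      m * deriv (deriv (fun s => θ s i)) t
        = -γ * deriv (fun s => θ s i) t
          + (κ / N) * ∑ j, Real.sin (θ t j - θ t i))
    (hθ0 : ∑ i, θ 0 i = 0)
    (hω0 : ∑ i, deriv (fun s => θ s i) 0 = 0)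
    (EK : ℝ → ℝ)
    (hEK : EK = fun t => (m / 2) * ∑ i, (deriv (fun s => θ s i) t) ^ 2) :
    Tendsto EK atTop (nhds 0) ∧
    ∀ i, Tendsto (fun t => deriv (fun s => θ s i) t) atTop (nhds 0) := by
  have hdθ : ∀ i, Differentiable ℝ (fun t => θ t i) :=
    fun i => (hreg i).differentiable (by norm_num)
  have hω1 : ∀ i, ContDiff ℝ 1 (deriv (fun s => θ s i)) := by
    intro i
    have h2 : ContDiff ℝ ((1:ℕ) + 1) (fun t => θ t i) := by exact_mod_cast hreg i
    exact (contDiff_succ_iff_deriv.mp h2).2.2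
  have hgto := kuramoto_aux N hN m γ κ hm hγ hκ θ (fun i => deriv (fun s => θ s i))
    (fun i t => (hdθ i t).hasDerivAt) hω1 hode
  constructor
  · rw [hEK]
    have h := hgto.const_mul (m / 2)
    simpa using h
  · intro i
    have hsq : Tendsto (fun t => (deriv (fun s => θ s i) t) ^ 2) atTop (nhds 0) := by
      have hle : ∀ t : ℝ, (deriv (fun s => θ s i) t) ^ 2
          ≤ ∑ j, (deriv (fun s => θ s j) t) ^ 2 := fun t =>
        Finset.single_le_sum (f := fun j => (deriv (fun s => θ s j) t) ^ 2)
          (fun j _ => sq_nonneg _) (Finset.mem_univ i)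
      exact squeeze_zero (fun t => sq_nonneg _) hle hgto
    have habs : Tendsto (fun t => |deriv (fun s => θ s i) t|) atTop (nhds 0) := by
      have h := hsq.sqrt
      simpa [Real.sqrt_sq_eq_abs] using h
    exact (tendsto_zero_iff_abs_tendsto_zero _).mpr habs
end

section
/- Let α > 0, let y : [0,∞) → ℝ be a nonnegative continuously differentiable function, and let β : [0,∞) → ℝ be a bounded continuous function such that y'(t) + α·y(t) = β(t) for all t > 0. Then for all t ≥ 0, y(t) ≤ y(0)·e^{−αt} + (1/α)·sup_{s ∈ [t/2, t]} |β(s)| + (sup_{s ≥ 0} |β(s)| / α)·e^{−αt/2}. In particular, if β(t) → 0 as t → ∞, then y(t) → 0 as t → ∞. -/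
open Filter

private lemma int_exp' (α a b : ℝ) (hα : α ≠ 0) :
    ∫ s in a..b, Real.exp (α * s) = (Real.exp (α * b) - Real.exp (α * a)) / α := by
  have h : ∀ x ∈ Set.uIcc a b,
      HasDerivAt (fun s => Real.exp (α * s) / α) (Real.exp (α * x)) x := by
    intro x _
    have h1 : HasDerivAt (fun s : ℝ => α * s) α x := by
      simpa using (hasDerivAt_id x).const_mul α
    have h2 := h1.exp
    have h3 := h2.div_const α
    rw [mul_div_cancel_right₀ _ hα] at h3
    exact h3
  rw [intervalIntegral.integral_eq_sub_of_hasDerivAt h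
    ((Real.continuous_exp.comp (continuous_const.mul continuous_id)).intervalIntegrable a b)]
  ring

private lemma integral_bound' (α a b C : ℝ) (hα : 0 < α) (hab : a ≤ b)
    (β : ℝ → ℝ) (hβc : Continuous β)
    (hC : ∀ s ∈ Set.Icc a b, |β s| ≤ C) :
    ∫ s in a..b, β s * Real.exp (α * s)
      ≤ C * (Real.exp (α * b) - Real.exp (α * a)) / α := by
  have hec : Continuous fun s : ℝ => Real.exp (α * s) :=
    Real.continuous_exp.comp (continuous_const.mul continuous_id)
  have h1 : ∫ s in a..b, β s * Real.exp (α * s)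
      ≤ ∫ s in a..b, C * Real.exp (α * s) := by
    apply intervalIntegral.integral_mono_on hab
    · exact (hβc.mul hec).intervalIntegrable a b
    · exact (continuous_const.mul hec).intervalIntegrable a b
    · intro s hs
      exact mul_le_mul_of_nonneg_right (le_trans (le_abs_self _) (hC s hs))
        (Real.exp_pos _).le
  rw [intervalIntegral.integral_const_mul, int_exp' α a b hα.ne'] at h1
  calc _ ≤ _ := h1
    _ = C * (Real.exp (α * b) - Real.exp (α * a)) / α := by ring

/-- A generalized Grönwall-type lemma. If `y ≥ 0` is `C¹`,
`β` is bounded and continuous, and `y' + α·y = β` for `t > 0` with `α > 0`,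
then `y(t) ≤ y(0)·e^{−αt} + (1/α)·sup_{[t/2,t]}|β| + (sup_{s≥0}|β|/α)·e^{−αt/2}`,
and if `β(t) → 0` then `y(t) → 0` as `t → ∞`. -/
theorem gronwall_type_decay_lemma
    (α : ℝ) (hα : 0 < α)
    (y β : ℝ → ℝ)
    (hy : ContDiff ℝ 1 y)
    (hynn : ∀ t ≥ (0:ℝ), 0 ≤ y t)
    (hβc : Continuous β)
    (hβb : BddAbove ((fun s => |β s|) '' Set.Ici (0:ℝ)))
    (hode : ∀ t > (0:ℝ), deriv y t + α * y t = β t) :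
    (∀ t ≥ (0:ℝ),
      y t ≤ y 0 * Real.exp (-α * t)
        + (1 / α) * sSup ((fun s => |β s|) '' Set.Icc (t / 2) t)
        + (sSup ((fun s => |β s|) '' Set.Ici (0:ℝ)) / α)
          * Real.exp (-α * t / 2)) ∧
    (Tendsto β atTop (nhds 0) → Tendsto y atTop (nhds 0)) := by
  have hy' : Continuous (deriv y) := hy.continuous_deriv le_rfl
  have hyc : Continuous y := hy.continuous
  -- extend the ODE to t = 0 by continuity
  have hode' : ∀ t : ℝ, 0 ≤ t → deriv y t + α * y t = β t := by
    intro t ht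
    rcases ht.lt_or_eq with h | h
    · exact hode t h
    · subst h
      have hf : Continuous (fun s => deriv y s + α * y s - β s) := by
        exact (hy'.add (continuous_const.mul hyc)).sub hβc
      have h1 : Tendsto (fun s => deriv y s + α * y s - β s)
          (nhdsWithin 0 (Set.Ioi 0)) (nhds (deriv y 0 + α * y 0 - β 0)) :=
        (hf.tendsto 0).mono_left nhdsWithin_le_nhds
      have h2 : Tendsto (fun s => deriv y s + α * y s - β s)
          (nhdsWithin 0 (Set.Ioi 0)) (nhds 0) := by
        apply Tendsto.congr' _ tendsto_const_nhds
        filter_upwards [self_mem_nhdsWithin] with s hs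
        simp [hode s hs]
      have := tendsto_nhds_unique h1 h2
      linarith
  have hec : Continuous fun s : ℝ => Real.exp (α * s) :=
    Real.continuous_exp.comp (continuous_const.mul continuous_id)
  -- FTC identity
  have key : ∀ t : ℝ, 0 ≤ t →
      y t * Real.exp (α * t) - y 0 = ∫ s in (0:ℝ)..t, β s * Real.exp (α * s) := by
    intro t ht
    have := intervalIntegral.integral_eq_sub_of_hasDerivAt
      (f := fun s => y s * Real.exp (α * s))
      (f' := fun s => β s * Real.exp (α * s)) (a := 0) (b := t)
      ?_ ((hβc.mul hec).intervalIntegrable 0 t)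
    · simpa [mul_zero, Real.exp_zero] using this.symm
    · intro x hx
      rw [Set.uIcc_of_le ht] at hx
      have hd : HasDerivAt y (deriv y x) x :=
        ((hy.differentiable one_ne_zero) x).hasDerivAt
      have h1 : HasDerivAt (fun s : ℝ => α * s) α x := by
        simpa using (hasDerivAt_id x).const_mul α
      have he : HasDerivAt (fun s => Real.exp (α * s)) (Real.exp (α * x) * α) x := h1.exp
      have hm := hd.mul he
      refine HasDerivAt.congr_deriv hm ?_
      have h0 := hode' x hx.1
      show deriv y x * Real.exp (α * x) + y x * (Real.exp (α * x) * α)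
          = β x * Real.exp (α * x)
      linear_combination (Real.exp (α * x)) * h0
  -- the main estimate
  have main : ∀ t ≥ (0:ℝ),
      y t ≤ y 0 * Real.exp (-α * t)
        + (1 / α) * sSup ((fun s => |β s|) '' Set.Icc (t / 2) t)
        + (sSup ((fun s => |β s|) '' Set.Ici (0:ℝ)) / α)
          * Real.exp (-α * t / 2) := by
    intro t ht
    set M1 := sSup ((fun s => |β s|) '' Set.Icc (t / 2) t) with hM1
    set M2 := sSup ((fun s => |β s|) '' Set.Ici (0:ℝ)) with hM2
    have ht2 : (0:ℝ) ≤ t / 2 := by linarith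
    have ht2' : t / 2 ≤ t := by linarith
    have hbdd1 : BddAbove ((fun s => |β s|) '' Set.Icc (t / 2) t) :=
      (isCompact_Icc.image (hβc.abs)).bddAbove
    have hM1b : ∀ s ∈ Set.Icc (t / 2) t, |β s| ≤ M1 := fun s hs =>
      le_csSup hbdd1 ⟨s, hs, rfl⟩
    have hM2b : ∀ s ∈ Set.Icc (0:ℝ) (t / 2), |β s| ≤ M2 := fun s hs =>
      le_csSup hβb ⟨s, hs.1, rfl⟩
    have hM1nn : 0 ≤ M1 := le_trans (abs_nonneg _) (hM1b t ⟨ht2', le_rfl⟩)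
    have hM2nn : 0 ≤ M2 := le_trans (abs_nonneg _) (hM2b 0 ⟨le_rfl, ht2⟩)
    have hsplit : ∫ s in (0:ℝ)..t, β s * Real.exp (α * s)
        = (∫ s in (0:ℝ)..(t/2), β s * Real.exp (α * s))
          + ∫ s in (t/2)..t, β s * Real.exp (α * s) :=
      (intervalIntegral.integral_add_adjacent_intervals
        ((hβc.mul hec).intervalIntegrable _ _)
        ((hβc.mul hec).intervalIntegrable _ _)).symm
    have hb1 : ∫ s in (0:ℝ)..(t/2), β s * Real.exp (α * s)
        ≤ M2 * (Real.exp (α * (t/2)) - Real.exp (α * 0)) / α :=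
      integral_bound' α 0 (t/2) M2 hα ht2 β hβc hM2b
    have hb2 : ∫ s in (t/2)..t, β s * Real.exp (α * s)
        ≤ M1 * (Real.exp (α * t) - Real.exp (α * (t/2))) / α :=
      integral_bound' α (t/2) t M1 hα ht2' β hβc hM1b
    have hid := key t ht
    have hexp : (0:ℝ) < Real.exp (α * t) := Real.exp_pos _
    -- combine
    have hIle : ∫ s in (0:ℝ)..t, β s * Real.exp (α * s)
        ≤ M2 * Real.exp (α * (t/2)) / α + M1 * Real.exp (α * t) / α := by
      rw [hsplit]
      have e1 : M2 * (Real.exp (α * (t/2)) - Real.exp (α * 0)) / α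
          ≤ M2 * Real.exp (α * (t/2)) / α := by
        apply div_le_div_of_nonneg_right _ hα.le
        nlinarith [Real.exp_pos (α * 0)]
      have e2 : M1 * (Real.exp (α * t) - Real.exp (α * (t/2))) / α
          ≤ M1 * Real.exp (α * t) / α := by
        apply div_le_div_of_nonneg_right _ hα.le
        nlinarith [Real.exp_pos (α * (t/2))]
      linarith
    have hyt : y t = y 0 * Real.exp (-α * t)
        + Real.exp (-α * t) * ∫ s in (0:ℝ)..t, β s * Real.exp (α * s) := by
      have hne : Real.exp (α * t) ≠ 0 := hexp.ne'
      have hinv : Real.exp (-α * t) = (Real.exp (α * t))⁻¹ := by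
        rw [neg_mul, Real.exp_neg]
      rw [hinv]
      field_simp
      linarith [hid]
    rw [hyt]
    have hexp2 : Real.exp (-α * t) * Real.exp (α * (t/2)) = Real.exp (-α * t / 2) := by
      rw [← Real.exp_add]; congr 1; ring
    have hexp3 : Real.exp (-α * t) * Real.exp (α * t) = 1 := by
      rw [← Real.exp_add]; norm_num
    have henn : 0 ≤ Real.exp (-α * t) := (Real.exp_pos _).le
    have h4 : Real.exp (-α * t) * ∫ s in (0:ℝ)..t, β s * Real.exp (α * s)
        ≤ Real.exp (-α * t) * (M2 * Real.exp (α * (t/2)) / α + M1 * Real.exp (α * t) / α) :=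
      mul_le_mul_of_nonneg_left hIle henn
    have h5 : Real.exp (-α * t) * (M2 * Real.exp (α * (t/2)) / α + M1 * Real.exp (α * t) / α)
        = (M2 / α) * Real.exp (-α * t / 2) + (1 / α) * M1 := by
      calc Real.exp (-α * t) * (M2 * Real.exp (α * (t/2)) / α + M1 * Real.exp (α * t) / α)
          = M2 / α * (Real.exp (-α * t) * Real.exp (α * (t/2)))
            + (1 / α) * (M1 * (Real.exp (-α * t) * Real.exp (α * t))) := by ring
        _ = (M2 / α) * Real.exp (-α * t / 2) + (1 / α) * M1 := by
            rw [hexp2, hexp3]; ring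
    linarith
  refine ⟨main, ?_⟩
  -- second part
  intro hβ0
  have hsupnn : ∀ t : ℝ, 0 ≤ t → 0 ≤ sSup ((fun s => |β s|) '' Set.Icc (t / 2) t) := by
    intro t ht
    have hbdd1 : BddAbove ((fun s => |β s|) '' Set.Icc (t / 2) t) :=
      (isCompact_Icc.image (hβc.abs)).bddAbove
    exact le_trans (abs_nonneg (β t)) (le_csSup hbdd1 ⟨t, ⟨by linarith, le_rfl⟩, rfl⟩)
  have hsup : Tendsto (fun t => sSup ((fun s => |β s|) '' Set.Icc (t / 2) t))
      atTop (nhds 0) := by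
    rw [NormedAddCommGroup.tendsto_nhds_zero]
    intro ε hε
    have h := NormedAddCommGroup.tendsto_nhds_zero.mp hβ0 (ε / 2) (by positivity)
    obtain ⟨T, hT⟩ := eventually_atTop.mp h
    filter_upwards [eventually_ge_atTop (max (2 * T) 0)] with t ht
    have ht0 : 0 ≤ t := le_trans (le_max_right _ _) ht
    have htT : 2 * T ≤ t := le_trans (le_max_left _ _) ht
    have hle : sSup ((fun s => |β s|) '' Set.Icc (t / 2) t) ≤ ε / 2 := by
      refine csSup_le ⟨|β t|, ⟨t, ⟨by linarith, le_rfl⟩, rfl⟩⟩ ?_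
      rintro x ⟨s, hs, rfl⟩
      have : T ≤ s := by linarith [hs.1]
      have := hT s this
      rw [Real.norm_eq_abs] at this
      linarith
    rw [Real.norm_eq_abs, abs_of_nonneg (hsupnn t ht0)]
    linarith
  have hexp1 : Tendsto (fun t : ℝ => Real.exp (-α * t)) atTop (nhds 0) := by
    apply Real.tendsto_exp_atBot.comp
    exact Tendsto.const_mul_atTop_of_neg (by linarith : -α < 0) tendsto_id
  have hexp2 : Tendsto (fun t : ℝ => Real.exp (-α * t / 2)) atTop (nhds 0) := by
    apply Real.tendsto_exp_atBot.comp
    apply Tendsto.atBot_div_const (by norm_num : (0:ℝ) < 2)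
    exact Tendsto.const_mul_atTop_of_neg (by linarith : -α < 0) tendsto_id
  have hrhs : Tendsto (fun t => y 0 * Real.exp (-α * t)
        + (1 / α) * sSup ((fun s => |β s|) '' Set.Icc (t / 2) t)
        + (sSup ((fun s => |β s|) '' Set.Ici (0:ℝ)) / α)
          * Real.exp (-α * t / 2)) atTop (nhds 0) := by
    have h1 := hexp1.const_mul (y 0)
    have h2 := hsup.const_mul (1 / α)
    have h3 := hexp2.const_mul (sSup ((fun s => |β s|) '' Set.Ici (0:ℝ)) / α)
    simpa using (h1.add h2).add h3
  refine squeeze_zero' ?_ ?_ hrhs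
  · filter_upwards [eventually_ge_atTop (0:ℝ)] with t ht
    exact hynn t ht
  · filter_upwards [eventually_ge_atTop (0:ℝ)] with t ht
    exact main t ht
end

section
/- Let θ : [0,∞) → ℝ^N solve the inertial Kuramoto model for N identical oscillators with all-to-all coupling, and suppose Σ_{i=1}^N θ_i(0) = 0 and Σ_{i=1}^N ω_i(0) = 0. Then the angular accelerations vanish asymptotically: lim_{t→∞} θ_i''(t) = 0 for each i = 1,…,N. -/
open Filter Set

/-- If `f` has derivative `f' ≥ c` on `[a,b]`, then `c*(b-a) ≤ f b - f a`. -/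
lemma aux_sub_ge {f f' : ℝ → ℝ} {a b c : ℝ} (hab : a ≤ b)
    (hf : ∀ x ∈ Set.Icc a b, HasDerivAt f (f' x) x)
    (hc : ∀ x ∈ Set.Icc a b, c ≤ f' x) :
    c * (b - a) ≤ f b - f a := by
  have key : ∀ x ∈ Set.Icc a b, HasDerivAt (fun y => f y - c * y) (f' x - c) x := by
    intro x hx
    have h := (hf x hx).sub ((hasDerivAt_id' x).const_mul c)
    rwa [mul_one] at h
  have hmono : MonotoneOn (fun x => f x - c * x) (Set.Icc a b) := by
    apply monotoneOn_of_deriv_nonneg (convex_Icc a b)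
    · exact fun x hx => (key x hx).continuousAt.continuousWithinAt
    · intro x hx
      rw [interior_Icc] at hx
      exact (key x (Ioo_subset_Icc_self hx)).differentiableAt.differentiableWithinAt
    · intro x hx
      rw [interior_Icc] at hx
      rw [(key x (Ioo_subset_Icc_self hx)).deriv]
      have := hc x (Ioo_subset_Icc_self hx)
      linarith
  have := hmono (Set.left_mem_Icc.2 hab) (Set.right_mem_Icc.2 hab) hab
  simp only at this
  nlinarith

/-- Barbalat-type: if `v → 0`, `v' = f` on `[0,∞)`, and `f` has derivative bounded by `K`
on `[0,∞)`, then `f → 0`. -/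
lemma aux_barbalat {v f f' : ℝ → ℝ} {K : ℝ} (hK : 0 < K)
    (hv : Tendsto v atTop (nhds 0))
    (hvd : ∀ t, (0:ℝ) ≤ t → HasDerivAt v (f t) t)
    (hfd : ∀ t, (0:ℝ) ≤ t → HasDerivAt f (f' t) t)
    (hf'K : ∀ t, (0:ℝ) ≤ t → |f' t| ≤ K) :
    Tendsto f atTop (nhds 0) := by
  rw [NormedAddCommGroup.tendsto_nhds_zero]
  intro ε hε
  set δ : ℝ := ε / (2 * K) with hδ
  have hδpos : 0 < δ := by positivity
  have hsmall : (0:ℝ) < ε * δ / 8 := by positivity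
  have h1 : ∀ᶠ t in atTop, |v t| < ε * δ / 8 := by
    have := (NormedAddCommGroup.tendsto_nhds_zero.mp hv) _ hsmall
    simpa using this
  have h2 : ∀ᶠ t in atTop, |v (t + δ)| < ε * δ / 8 := by
    exact (tendsto_atTop_add_const_right atTop δ tendsto_id).eventually h1
  filter_upwards [h1, h2, eventually_ge_atTop (0:ℝ)] with t hv1 hv2 ht
  by_contra hcon
  push_neg at hcon
  rw [Real.norm_eq_abs] at hcon
  have hIcc : ∀ x ∈ Set.Icc t (t + δ), (0:ℝ) ≤ x := fun x hx => le_trans ht hx.1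
  have hKδ : K * δ = ε / 2 := by
    rw [hδ]; field_simp
  have hvdiff : |v (t + δ) - v t| < ε * δ / 4 := by
    calc |v (t + δ) - v t| ≤ |v (t + δ)| + |v t| := abs_sub _ _
    _ < ε * δ / 8 + ε * δ / 8 := by linarith
    _ = ε * δ / 4 := by ring
  rcases le_or_gt ε (f t) with hpos | hneg
  · -- f t ≥ ε : f ≥ ε/2 on [t, t+δ]
    have hge : ∀ x ∈ Set.Icc t (t + δ), ε / 2 ≤ f x := by
      intro x hx
      have := aux_sub_ge hx.1 (fun y hy => hfd y (le_trans ht hy.1))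
        (fun y hy => (neg_le_of_abs_le (hf'K y (le_trans ht hy.1))))
      have hxub : x - t ≤ δ := by linarith [hx.2]
      have hxl : 0 ≤ x - t := by linarith [hx.1]
      have hmul : K * (x - t) ≤ K * δ := mul_le_mul_of_nonneg_left hxub hK.le
      linarith
    have := aux_sub_ge (by linarith : t ≤ t + δ)
      (fun y hy => hvd y (hIcc y hy)) hge
    have : ε / 2 * δ ≤ v (t + δ) - v t := by simpa using this
    have : v (t + δ) - v t ≤ |v (t + δ) - v t| := le_abs_self _
    nlinarith [le_abs_self (v (t + δ) - v t)]
  · -- f t ≤ -ε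
    have hneg' : f t ≤ -ε := by
      rcases abs_cases (f t) with ⟨h1, _⟩ | ⟨h1, _⟩
      · linarith
      · linarith
    have hle : ∀ x ∈ Set.Icc t (t + δ), f x ≤ -(ε / 2) := by
      intro x hx
      have := aux_sub_ge hx.1 (fun y hy => ((hfd y (le_trans ht hy.1)).neg))
        (fun y hy => (neg_le_of_abs_le (by simpa using (hf'K y (le_trans ht hy.1)))))
      have hxub : x - t ≤ δ := by linarith [hx.2]
      have hxl : 0 ≤ x - t := by linarith [hx.1]
      have hmul : K * (x - t) ≤ K * δ := mul_le_mul_of_nonneg_left hxub hK.le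
      simp only [Pi.neg_apply] at this
      linarith
    have := aux_sub_ge (c := ε / 2) (by linarith : t ≤ t + δ)
      (fun y hy => (hvd y (hIcc y hy)).neg) (fun y hy => by linarith [hle y hy])
    have h5 : ε / 2 * δ ≤ -v (t + δ) - -v t := by simpa using this
    nlinarith [le_abs_self (v t - v (t + δ)), abs_sub_comm (v (t + δ)) (v t)]

/-- Energy-based Barbalat: if `E' = -g ≤ 0` on `[0,∞)`, `E` bounded below,
`g` has bounded derivative on `[0,∞)`, then `g → 0`. -/
lemma aux_energy {E g g' : ℝ → ℝ} {K M : ℝ} (hK : 0 < K)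
    (hE : ∀ t, (0:ℝ) ≤ t → HasDerivAt E (-(g t)) t)
    (hg : ∀ t, (0:ℝ) ≤ t → HasDerivAt g (g' t) t)
    (hg0 : ∀ t, (0:ℝ) ≤ t → 0 ≤ g t)
    (hg'K : ∀ t, (0:ℝ) ≤ t → |g' t| ≤ K)
    (hM : ∀ t, (0:ℝ) ≤ t → -M ≤ E t) :
    Tendsto g atTop (nhds 0) := by
  -- E is antitone on [0,∞)
  have hanti : AntitoneOn E (Set.Ici (0:ℝ)) := by
    apply antitoneOn_of_deriv_nonpos (convex_Ici 0)
    · exact fun x hx => (hE x hx).continuousAt.continuousWithinAt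
    · intro x hx
      rw [interior_Ici] at hx
      exact (hE x (le_of_lt hx)).differentiableAt.differentiableWithinAt
    · intro x hx
      rw [interior_Ici] at hx
      rw [(hE x (le_of_lt hx)).deriv]
      linarith [hg0 x (le_of_lt hx)]
  set Et : ℝ → ℝ := fun t => E (max t 0) with hEt
  have hanti' : Antitone Et := by
    intro s t hst
    exact hanti (Set.mem_Ici.2 (le_max_right s 0)) (Set.mem_Ici.2 (le_max_right t 0))
      (max_le_max hst le_rfl)
  have hbdd : BddBelow (Set.range Et) := by
    refine ⟨-M, ?_⟩
    rintro x ⟨t, rfl⟩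
    exact hM _ (le_max_right t 0)
  have hconv : Tendsto Et atTop (nhds (⨅ t, Et t)) := tendsto_atTop_ciInf hanti' hbdd
  have hEconv : Tendsto E atTop (nhds (⨅ t, Et t)) := by
    apply hconv.congr'
    filter_upwards [eventually_ge_atTop (0:ℝ)] with t ht
    simp [hEt, max_eq_left ht]
  rw [NormedAddCommGroup.tendsto_nhds_zero]
  intro ε hε
  set δ : ℝ := ε / (2 * K) with hδ
  have hδpos : 0 < δ := by positivity
  have hKδ : K * δ = ε / 2 := by rw [hδ]; field_simp
  have hDiff : Tendsto (fun t => E t - E (t + δ)) atTop (nhds 0) := by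
    have h2 : Tendsto (fun t => E (t + δ)) atTop (nhds (⨅ t, Et t)) :=
      hEconv.comp (tendsto_atTop_add_const_right atTop δ tendsto_id)
    simpa using hEconv.sub h2
  have hsmall : (0:ℝ) < ε / 2 * δ := by positivity
  have hD := (NormedAddCommGroup.tendsto_nhds_zero.mp hDiff) _ hsmall
  filter_upwards [hD, eventually_ge_atTop (0:ℝ)] with t hDt ht
  rw [Real.norm_eq_abs] at hDt ⊢
  rw [abs_of_nonneg (hg0 t ht)]
  by_contra hcon
  push_neg at hcon
  have hge : ∀ x ∈ Set.Icc t (t + δ), ε / 2 ≤ g x := by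
    intro x hx
    have h := aux_sub_ge (c := -K) hx.1 (fun y hy => hg y (le_trans ht hy.1))
      (fun y hy => neg_le_of_abs_le (hg'K y (le_trans ht hy.1)))
    have hxub : x - t ≤ δ := by linarith [hx.2]
    have hxl : 0 ≤ x - t := by linarith [hx.1]
    have hmul : K * (x - t) ≤ K * δ := mul_le_mul_of_nonneg_left hxub hK.le
    linarith
  have h := aux_sub_ge (c := ε / 2) (by linarith : t ≤ t + δ)
    (fun y hy => by simpa using (hE y (le_trans ht hy.1)).neg)
    (fun y hy => hge y hy)
  have h2 : ε / 2 * δ ≤ E t - E (t + δ) := by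
    have : ε / 2 * (t + δ - t) ≤ -E (t + δ) - -E t := h
    nlinarith [this]
  linarith [le_abs_self (E t - E (t + δ))]

/-- Asymptotic vanishing of the angular accelerations for the
inertial Kuramoto model of identical oscillators with all-to-all coupling,
under zero initial phase and frequency averages: `θ_i''(t) → 0` as `t → ∞`. -/
theorem kuramoto_inertia_acceleration_decay
    (N : ℕ) (hN : 1 ≤ N)
    (m γ κ : ℝ) (hm : 0 < m) (hγ : 0 < γ) (hκ : 0 < κ)
    (θ : ℝ → Fin N → ℝ)
    (hreg : ∀ i, ContDiff ℝ 2 (fun t => θ t i))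
    (hode : ∀ t ≥ (0:ℝ), ∀ i,
      m * deriv (deriv (fun s => θ s i)) t
        = -γ * deriv (fun s => θ s i) t
          + (κ / N) * ∑ j, Real.sin (θ t j - θ t i))
    (hθ0 : ∑ i, θ 0 i = 0)
    (hω0 : ∑ i, deriv (fun s => θ s i) 0 = 0) :
    ∀ i, Tendsto (fun t => deriv (deriv (fun s => θ s i)) t)
      atTop (nhds 0) := by
  have hNne : (N:ℝ) ≠ 0 := Nat.cast_ne_zero.mpr (by omega)
  have hNpos : (0:ℝ) < N := by positivity
  -- notation
  set v : Fin N → ℝ → ℝ := fun i => deriv (fun s => θ s i) with hv_def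
  set a : Fin N → ℝ → ℝ := fun i => deriv (v i) with ha_def
  set F : Fin N → ℝ → ℝ := fun i t => κ / N * ∑ j, Real.sin (θ t j - θ t i) with hF_def
  -- differentiability
  have hθd : ∀ i, Differentiable ℝ (fun s => θ s i) :=
    fun i => (hreg i).differentiable two_ne_zero
  have hvd : ∀ i, Differentiable ℝ (v i) := by
    intro i
    have h2 : ContDiff ℝ ((1:ℕ∞) + 1) (fun t => θ t i) := by exact_mod_cast hreg i
    exact ((contDiff_succ_iff_deriv.mp h2).2.2).differentiable (by simp)
  have hΘ : ∀ i t, HasDerivAt (fun s => θ s i) (v i t) t :=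
    fun i t => (hθd i t).hasDerivAt
  have hva : ∀ i t, HasDerivAt (v i) (a i t) t :=
    fun i t => (hvd i t).hasDerivAt
  -- the ODE in first-order form
  have hode' : ∀ t, 0 ≤ t → ∀ i, a i t = (-γ * v i t + F i t) / m := by
    intro t ht i
    have h := hode t ht i
    have hA : deriv (deriv fun s => θ s i) t = a i t := rfl
    have hV : deriv (fun s => θ s i) t = v i t := rfl
    rw [hA, hV] at h
    have hFi : F i t = κ / N * ∑ j, Real.sin (θ t j - θ t i) := rfl
    rw [hFi, ← h]
    field_simp
  -- derivative of the forcing term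
  have hFd : ∀ i t, HasDerivAt (F i)
      (κ / N * ∑ j, Real.cos (θ t j - θ t i) * (v j t - v i t)) t := by
    intro i t
    apply HasDerivAt.const_mul
    apply HasDerivAt.fun_sum
    intro j _
    exact (Real.hasDerivAt_sin (θ t j - θ t i)).comp t ((hΘ j t).sub (hΘ i t))
  -- energy
  set Eng : ℝ → ℝ := fun s => m / 2 * ∑ i, (v i s)^2
      - κ / (2*N) * ∑ i, ∑ j, Real.cos (θ s j - θ s i) with hEng_def
  set G : ℝ → ℝ := fun s => γ * ∑ i, (v i s)^2 with hG_def
  set G' : ℝ → ℝ := fun s => γ * ∑ i, 2 * v i s * a i s with hG'_def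
  have hsum1 : ∀ t, HasDerivAt (fun s => ∑ i, (v i s)^2)
      (∑ i, 2 * v i t * a i t) t := by
    intro t
    apply HasDerivAt.fun_sum
    intro i _
    exact (by simpa using (hva i t).pow 2 : HasDerivAt (v i ^ 2) (2 * v i t * a i t) t)
  have hsum2 : ∀ t, HasDerivAt (fun s => ∑ i, ∑ j, Real.cos (θ s j - θ s i))
      (∑ i, ∑ j, -Real.sin (θ t j - θ t i) * (v j t - v i t)) t := by
    intro t
    apply HasDerivAt.fun_sum
    intro i _
    apply HasDerivAt.fun_sum
    intro j _
    exact (Real.hasDerivAt_cos (θ t j - θ t i)).comp t ((hΘ j t).sub (hΘ i t))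
  -- swap identity
  have hswap : ∀ t, (∑ i, ∑ j, Real.sin (θ t j - θ t i) * v j t)
      = -∑ i, ∑ j, Real.sin (θ t j - θ t i) * v i t := by
    intro t
    rw [Finset.sum_comm]
    rw [← Finset.sum_neg_distrib]
    refine Finset.sum_congr rfl fun j _ => ?_
    rw [← Finset.sum_neg_distrib]
    refine Finset.sum_congr rfl fun i _ => ?_
    rw [← neg_mul, ← Real.sin_neg]
    ring_nf
  -- energy dissipation
  have hEd : ∀ t, 0 ≤ t → HasDerivAt Eng (-(G t)) t := by
    intro t ht
    have hd := ((hsum1 t).const_mul (m/2)).sub ((hsum2 t).const_mul (κ/(2*N)))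
    have key : m / 2 * (∑ i, 2 * v i t * a i t)
        - κ/(2*N) * (∑ i, ∑ j, -Real.sin (θ t j - θ t i) * (v j t - v i t))
        = -(G t) := by
      have hma : ∀ i : Fin N, m * a i t
          = -γ * v i t + κ / N * ∑ j, Real.sin (θ t j - θ t i) := by
        intro i
        exact hode t ht i
      have hdouble : (∑ i, ∑ j, -Real.sin (θ t j - θ t i) * (v j t - v i t))
          = 2 * ∑ i, (∑ j, Real.sin (θ t j - θ t i)) * v i t := by
        have expand : ∀ i j : Fin N, -Real.sin (θ t j - θ t i) * (v j t - v i t)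
            = -(Real.sin (θ t j - θ t i) * v j t) + Real.sin (θ t j - θ t i) * v i t :=
          fun i j => by ring
        simp_rw [expand, Finset.sum_add_distrib, Finset.sum_neg_distrib]
        rw [hswap t]
        simp_rw [← Finset.sum_mul]
        ring
      have hfirst : m / 2 * (∑ i, 2 * v i t * a i t)
          = -γ * ∑ i, (v i t)^2
            + κ / N * ∑ i, (∑ j, Real.sin (θ t j - θ t i)) * v i t := by
        rw [Finset.mul_sum, Finset.mul_sum, Finset.mul_sum, ← Finset.sum_add_distrib]
        refine Finset.sum_congr rfl fun i _ => ?_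
        have h1 : m / 2 * (2 * v i t * a i t) = v i t * (m * a i t) := by ring
        rw [h1, hma i]
        ring
      rw [hdouble, hfirst, hG_def]
      field_simp
      ring
    rw [← key]
    exact hd
  -- Energy is antitone on [0,∞)
  have hGnonneg : ∀ t, 0 ≤ G t :=
    fun t => mul_nonneg hγ.le (Finset.sum_nonneg fun i _ => sq_nonneg _)
  have hanti : AntitoneOn Eng (Set.Ici (0:ℝ)) := by
    apply antitoneOn_of_deriv_nonpos (convex_Ici 0)
    · exact fun x hx => (hEd x hx).continuousAt.continuousWithinAt
    · intro x hx; rw [interior_Ici] at hx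
      exact (hEd x hx.le).differentiableAt.differentiableWithinAt
    · intro x hx; rw [interior_Ici] at hx
      rw [(hEd x hx.le).deriv]
      linarith [hGnonneg x]
  have hcos_bound : ∀ t, ∑ i, ∑ j, Real.cos (θ t j - θ t i) ≤ (N:ℝ) * N := by
    intro t
    calc ∑ i, ∑ j, Real.cos (θ t j - θ t i)
        ≤ ∑ _i : Fin N, ∑ _j : Fin N, (1:ℝ) :=
          Finset.sum_le_sum fun i _ => Finset.sum_le_sum fun j _ => Real.cos_le_one _
      _ = (N:ℝ) * N := by simp [Finset.sum_const, mul_comm]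
  have hpot : ∀ t, κ / (2*N) * ∑ i, ∑ j, Real.cos (θ t j - θ t i) ≤ κ * N / 2 := by
    intro t
    have h2 : κ / (2*N) * ∑ i, ∑ j, Real.cos (θ t j - θ t i)
        ≤ κ / (2*N) * ((N:ℝ) * N) :=
      mul_le_mul_of_nonneg_left (hcos_bound t) (by positivity)
    have h3 : κ / (2*N) * ((N:ℝ)*N) = κ * N / 2 := by field_simp
    linarith
  have hsumsq_nonneg : ∀ t, (0:ℝ) ≤ ∑ i, (v i t)^2 :=
    fun t => Finset.sum_nonneg fun i _ => sq_nonneg _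
  have hEngLB : ∀ t, -(κ * N / 2) ≤ Eng t := by
    intro t
    have h1 : 0 ≤ m / 2 * ∑ i, (v i t)^2 := mul_nonneg (by positivity) (hsumsq_nonneg t)
    have := hpot t
    rw [hEng_def]
    dsimp only
    linarith
  set B : ℝ := (Eng 0 + κ * N / 2) * 2 / m with hB_def
  have hsq : ∀ t, 0 ≤ t → ∀ i, (v i t)^2 ≤ B := by
    intro t ht i
    have hE0 : Eng t ≤ Eng 0 := hanti (Set.self_mem_Ici) (Set.mem_Ici.2 ht) ht
    have h1 : m / 2 * ∑ i, (v i t)^2 ≤ Eng 0 + κ * N / 2 := by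
      have h2 := hpot t
      have h3 : Eng t = m / 2 * ∑ i, (v i t)^2
          - κ / (2*N) * ∑ i, ∑ j, Real.cos (θ t j - θ t i) := by rw [hEng_def]
      clear_value Eng B
      linarith
    have hsingle : (v i t)^2 ≤ ∑ i, (v i t)^2 :=
      Finset.single_le_sum (f := fun j => (v j t)^2) (fun j _ => sq_nonneg _) (Finset.mem_univ i)
    rw [hB_def, le_div_iff₀ hm]
    have hmul := mul_le_mul_of_nonneg_right hsingle hm.le
    linarith
  set Cv : ℝ := Real.sqrt B with hCv_def
  have hCv0 : 0 ≤ Cv := Real.sqrt_nonneg _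
  have hvB : ∀ t, 0 ≤ t → ∀ i, |v i t| ≤ Cv := by
    intro t ht i
    rw [hCv_def, ← Real.sqrt_sq_eq_abs]
    exact Real.sqrt_le_sqrt (hsq t ht i)
  have hFb : ∀ i t, |F i t| ≤ κ := by
    intro i t
    have h1 : |∑ j, Real.sin (θ t j - θ t i)| ≤ (N:ℝ) := by
      calc |∑ j, Real.sin (θ t j - θ t i)|
          ≤ ∑ j, |Real.sin (θ t j - θ t i)| := Finset.abs_sum_le_sum_abs _ _
        _ ≤ ∑ _j : Fin N, (1:ℝ) := Finset.sum_le_sum fun j _ =>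
            abs_le.mpr ⟨Real.neg_one_le_sin _, Real.sin_le_one _⟩
        _ = (N:ℝ) := by simp
    have h2 : |F i t| = κ / N * |∑ j, Real.sin (θ t j - θ t i)| := by
      rw [hF_def]
      dsimp only
      rw [abs_mul, abs_of_nonneg (by positivity : (0:ℝ) ≤ κ / N)]
    rw [h2]
    calc κ / N * |∑ j, Real.sin (θ t j - θ t i)| ≤ κ / N * N :=
          mul_le_mul_of_nonneg_left h1 (by positivity)
      _ = κ := by field_simp
  set Ca : ℝ := (γ * Cv + κ) / m with hCa_def
  have hCa0 : 0 ≤ Ca := by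
    rw [hCa_def]
    apply div_nonneg _ hm.le
    nlinarith
  have hab : ∀ t, 0 ≤ t → ∀ i, |a i t| ≤ Ca := by
    intro t ht i
    rw [hode' t ht i, hCa_def, abs_div, abs_of_pos hm]
    have h1 : |-γ * v i t + F i t| ≤ γ * Cv + κ := by
      calc |-γ * v i t + F i t| ≤ |(-γ) * v i t| + |F i t| := abs_add_le _ _
        _ = γ * |v i t| + |F i t| := by rw [abs_mul, abs_neg, abs_of_pos hγ]
        _ ≤ γ * Cv + κ := add_le_add (mul_le_mul_of_nonneg_left (hvB t ht i) hγ.le) (hFb i t)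
    gcongr
  set K₁ : ℝ := γ * N * (2 * Cv * Ca) + 1 with hK₁
  have hK₁0 : 0 ≤ γ * (N:ℝ) * (2 * Cv * Ca) :=
    mul_nonneg (mul_nonneg hγ.le hNpos.le) (mul_nonneg (mul_nonneg (by norm_num) hCv0) hCa0)
  have hK₁pos : 0 < K₁ := by rw [hK₁]; linarith
  have hG'd : ∀ t, HasDerivAt G (G' t) t := fun t => (hsum1 t).const_mul γ
  have hG'b : ∀ t, 0 ≤ t → |G' t| ≤ K₁ := by
    intro t ht
    have hterm : ∀ i : Fin N, |2 * v i t * a i t| ≤ 2 * Cv * Ca := by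
      intro i
      rw [abs_mul, abs_mul, abs_two]
      gcongr
      · exact hvB t ht i
      · exact hab t ht i
    calc |G' t| = γ * |∑ i, 2 * v i t * a i t| := by
          rw [hG'_def]; dsimp only; rw [abs_mul, abs_of_pos hγ]
      _ ≤ γ * ∑ i, |2 * v i t * a i t| :=
          mul_le_mul_of_nonneg_left (Finset.abs_sum_le_sum_abs _ _) hγ.le
      _ ≤ γ * ∑ _i : Fin N, (2 * Cv * Ca) :=
          mul_le_mul_of_nonneg_left (Finset.sum_le_sum fun i _ => hterm i) hγ.le
      _ = γ * (N:ℝ) * (2 * Cv * Ca) := by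
          rw [Finset.sum_const, Finset.card_univ, Fintype.card_fin, nsmul_eq_mul]; ring
      _ ≤ K₁ := by rw [hK₁]; linarith
  have hGlim : Tendsto G atTop (nhds 0) :=
    aux_energy hK₁pos hEd (fun t _ => hG'd t) (fun t _ => hGnonneg t) hG'b (fun t _ => hEngLB t)
  have hvsq : ∀ i, Tendsto (fun t => (v i t)^2) atTop (nhds 0) := by
    intro i
    apply squeeze_zero (g := fun t => G t / γ) (fun t => sq_nonneg _)
    · intro t
      have hsingle : (v i t)^2 ≤ ∑ j, (v j t)^2 :=
        Finset.single_le_sum (f := fun j => (v j t)^2) (fun j _ => sq_nonneg _) (Finset.mem_univ i)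
      have : G t / γ = ∑ j, (v j t)^2 := by
        rw [hG_def]; dsimp only; rw [mul_div_cancel_left₀ _ hγ.ne']
      linarith
    · simpa using hGlim.div_const γ
  have hvlim : ∀ i, Tendsto (v i) atTop (nhds 0) := by
    intro i
    rw [tendsto_zero_iff_norm_tendsto_zero]
    have h := (Real.continuous_sqrt.tendsto 0).comp (hvsq i)
    simp only [Function.comp_def, Real.sqrt_sq_eq_abs, Real.sqrt_zero] at h
    simpa [Real.norm_eq_abs] using h
  -- final Barbalat for each oscillator
  intro i
  set f : ℝ → ℝ := fun t => (-γ * v i t + F i t) / m with hf_def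
  set A : ℝ → ℝ := fun t =>
    (-γ * a i t + κ / N * ∑ j, Real.cos (θ t j - θ t i) * (v j t - v i t)) / m with hA_def
  set K₂ : ℝ := (γ * Ca + 2 * κ * Cv) / m + 1 with hK₂
  have hK₂0 : 0 ≤ (γ * Ca + 2 * κ * Cv) / m := by
    apply div_nonneg _ hm.le
    nlinarith
  have hK₂pos : 0 < K₂ := by rw [hK₂]; linarith
  have hfd : ∀ t, HasDerivAt f (A t) t := by
    intro t
    exact (((hva i t).const_mul (-γ)).add (hFd i t)).div_const m
  have hAb : ∀ t, 0 ≤ t → |A t| ≤ K₂ := by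
    intro t ht
    have hterm : ∀ j : Fin N, |Real.cos (θ t j - θ t i) * (v j t - v i t)| ≤ 2 * Cv := by
      intro j
      rw [abs_mul]
      calc |Real.cos (θ t j - θ t i)| * |v j t - v i t| ≤ 1 * |v j t - v i t| := by
            gcongr
            exact abs_le.mpr ⟨Real.neg_one_le_cos _, Real.cos_le_one _⟩
        _ = |v j t - v i t| := one_mul _
        _ ≤ |v j t| + |v i t| := abs_sub _ _
        _ ≤ Cv + Cv := add_le_add (hvB t ht j) (hvB t ht i)
        _ = 2 * Cv := by ring
    have hF'b : |κ / N * ∑ j, Real.cos (θ t j - θ t i) * (v j t - v i t)| ≤ 2 * κ * Cv := by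
      rw [abs_mul, abs_of_nonneg (by positivity : (0:ℝ) ≤ κ / N)]
      calc κ / N * |∑ j, Real.cos (θ t j - θ t i) * (v j t - v i t)|
          ≤ κ / N * ∑ j, |Real.cos (θ t j - θ t i) * (v j t - v i t)| :=
            mul_le_mul_of_nonneg_left (Finset.abs_sum_le_sum_abs _ _) (by positivity)
        _ ≤ κ / N * ∑ _j : Fin N, (2 * Cv) :=
            mul_le_mul_of_nonneg_left (Finset.sum_le_sum fun j _ => hterm j) (by positivity)
        _ = κ / N * ((N:ℝ) * (2 * Cv)) := by
            rw [Finset.sum_const, Finset.card_univ, Fintype.card_fin, nsmul_eq_mul]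
        _ = 2 * κ * Cv := by field_simp
    have hnum : |-γ * a i t + κ / N * ∑ j, Real.cos (θ t j - θ t i) * (v j t - v i t)|
        ≤ γ * Ca + 2 * κ * Cv := by
      calc |-γ * a i t + κ / N * ∑ j, Real.cos (θ t j - θ t i) * (v j t - v i t)|
          ≤ |(-γ) * a i t| + |κ / N * ∑ j, Real.cos (θ t j - θ t i) * (v j t - v i t)| :=
            abs_add_le _ _
        _ = γ * |a i t| + |κ / N * ∑ j, Real.cos (θ t j - θ t i) * (v j t - v i t)| := by
            rw [abs_mul, abs_neg, abs_of_pos hγ]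
        _ ≤ γ * Ca + 2 * κ * Cv :=
            add_le_add (mul_le_mul_of_nonneg_left (hab t ht i) hγ.le) hF'b
    rw [hA_def]
    dsimp only
    rw [abs_div, abs_of_pos hm, hK₂]
    have : |-γ * a i t + κ / N * ∑ j, Real.cos (θ t j - θ t i) * (v j t - v i t)| / m
        ≤ (γ * Ca + 2 * κ * Cv) / m := by gcongr
    linarith
  have hvd' : ∀ t, 0 ≤ t → HasDerivAt (v i) (f t) t := by
    intro t ht
    have := hva i t
    rwa [hode' t ht i] at this
  have hflim : Tendsto f atTop (nhds 0) :=
    aux_barbalat hK₂pos (hvlim i) hvd' (fun t _ => hfd t) hAb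
  have halim : Tendsto (a i) atTop (nhds 0) := by
    apply hflim.congr'
    filter_upwards [eventually_ge_atTop (0:ℝ)] with t ht
    exact (hode' t ht i).symm
  exact halim
end

section
/- Let θ : [0,∞) → ℝ^N solve the inertial Kuramoto model for N identical oscillators with all-to-all coupling, and suppose the initial data satisfy (m/N)·Σ_{i=1}^N ω_i(0)² ≤ κ·R_p(0)². Then complete synchronization emerges asymptotically: lim_{t→∞} |ω_i(t) − ω_j(t)| = 0 for all 1 ≤ i, j ≤ N. -/
open Filter

lemma barbalat_sq (f : ℝ → ℝ) (hf : Continuous f) (M L : ℝ) (hM : 0 < M)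
    (hLip : ∀ s ∈ Set.Ici (0:ℝ), ∀ t ∈ Set.Ici (0:ℝ), |f s - f t| ≤ M * |s - t|)
    (hint : ∀ T, (∫ t in (0:ℝ)..T, (f t)^2) ≤ L) :
    Tendsto f atTop (nhds 0) := by
  have hfi : ∀ a b : ℝ, IntervalIntegrable (fun t => (f t)^2) MeasureTheory.volume a b :=
    fun a b => ((hf.pow 2).intervalIntegrable a b)
  set F : ℝ → ℝ := fun T => ∫ t in (0:ℝ)..T, (f t)^2 with hF
  have hadd : ∀ a b : ℝ, F b - F a = ∫ t in a..b, (f t)^2 := by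
    intro a b
    have := intervalIntegral.integral_add_adjacent_intervals (hfi 0 a) (hfi a b)
    simp only [hF]
    linarith [this]
  have hFmono : Monotone F := by
    intro a b hab
    have h1 : 0 ≤ ∫ t in a..b, (f t)^2 :=
      intervalIntegral.integral_nonneg hab (fun x _ => sq_nonneg _)
    have := hadd a b
    linarith
  have hbdd : BddAbove (Set.range F) := ⟨L, by rintro x ⟨T, rfl⟩; exact hint T⟩
  have hconv : Tendsto F atTop (nhds (⨆ T, F T)) := tendsto_atTop_ciSup hFmono hbdd
  set c := ⨆ T, F T with hc
  have hFle : ∀ T, F T ≤ c := fun T => le_ciSup hbdd T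
  rw [Metric.tendsto_atTop]
  intro ε hε
  set h : ℝ := ε / (2 * M) with hh
  have hhpos : 0 < h := div_pos hε (by linarith)
  set δ : ℝ := (ε / 2)^2 * h with hδ
  have hδpos : 0 < δ := mul_pos (pow_pos (by linarith) 2) hhpos
  have hev : ∀ᶠ T in atTop, c - δ < F T := by
    exact hconv.eventually (eventually_gt_nhds (show c - δ < c by linarith))
  obtain ⟨T₀, hT₀⟩ := hev.exists_forall_of_atTop
  refine ⟨max T₀ 0, fun t ht => ?_⟩
  have ht0 : (0:ℝ) ≤ t := le_trans (le_max_right _ _) ht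
  have htT : T₀ ≤ t := le_trans (le_max_left _ _) ht
  rw [Real.dist_eq, sub_zero]
  by_contra hcon
  push_neg at hcon
  have hlow : ∀ s ∈ Set.Icc t (t + h), (ε/2)^2 ≤ (f s)^2 := by
    intro s hs
    have hs0 : (0:ℝ) ≤ s := le_trans ht0 hs.1
    have hl := hLip s (Set.mem_Ici.mpr hs0) t (Set.mem_Ici.mpr ht0)
    have habs : |s - t| ≤ h := by
      rw [abs_of_nonneg (by linarith [hs.1])]; linarith [hs.2]
    have hMh : M * |s - t| ≤ M * h :=
      mul_le_mul_of_nonneg_left habs (le_of_lt hM)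
    have hMh2 : M * h = ε / 2 := by
      rw [hh, mul_div_assoc', div_eq_iff (by positivity)]; ring
    have h1 : |f s - f t| ≤ ε / 2 := by linarith
    have h2 : ε / 2 ≤ |f s| := by
      have := abs_sub_abs_le_abs_sub (f t) (f s)
      rw [abs_sub_comm] at this
      linarith
    calc (ε/2)^2 ≤ |f s|^2 := by
          apply pow_le_pow_left₀ (by linarith) h2 2
      _ = (f s)^2 := sq_abs _
  have hintlow : δ ≤ ∫ s in t..(t+h), (f s)^2 := by
    have hmono := intervalIntegral.integral_mono_on (by linarith : t ≤ t + h)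
      (intervalIntegrable_const) (hfi t (t+h)) hlow
    have hconst : (∫ _ in t..(t+h), (ε/2)^2) = h * (ε/2)^2 := by
      rw [intervalIntegral.integral_const, smul_eq_mul, add_sub_cancel_left]
    rw [hconst] at hmono
    calc δ = h * (ε/2)^2 := by rw [hδ]; ring
      _ ≤ _ := hmono
  have h1 : c - δ < F t := hT₀ t htT
  have h2 : F (t + h) ≤ c := hFle _
  have h3 : F (t + h) - F t = ∫ s in t..(t+h), (f s)^2 := hadd _ _
  linarith

/-- Complete frequency synchronization for the inertial Kuramoto
model of identical oscillators with all-to-all coupling, under the initial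
condition `(m/N)·Σ_i ω_i(0)² ≤ κ·R_p(0)²`:
`|ω_i(t) − ω_j(t)| → 0` as `t → ∞` for all `i, j`. -/
theorem kuramoto_inertia_complete_synchronization
    (N : ℕ) (hN : 1 ≤ N)
    (m γ κ : ℝ) (hm : 0 < m) (hγ : 0 < γ) (hκ : 0 < κ)
    (θ : ℝ → Fin N → ℝ)
    (hreg : ∀ i, ContDiff ℝ 2 (fun t => θ t i))
    (hode : ∀ t ≥ (0:ℝ), ∀ i,
      m * deriv (deriv (fun s => θ s i)) t
        = -γ * deriv (fun s => θ s i) t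
          + (κ / N) * ∑ j, Real.sin (θ t j - θ t i))
    (Rp : ℝ → ℝ)
    (hRp : Rp = fun t =>
      ‖(N : ℂ)⁻¹ * ∑ j, Complex.exp (Complex.I * (θ t j : ℂ))‖)
    (hinit : (m / N) * ∑ i, (deriv (fun s => θ s i) 0) ^ 2 ≤ κ * (Rp 0) ^ 2) :
    ∀ i j, Tendsto
      (fun t => |deriv (fun s => θ s i) t - deriv (fun s => θ s j) t|)
      atTop (nhds 0) := by
  have hNpos : (0:ℝ) < N := by exact_mod_cast Nat.pos_of_ne_zero (by omega)
  set ω : Fin N → ℝ → ℝ := fun i => deriv (fun s => θ s i) with hωdef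
  have hθd : ∀ i, Differentiable ℝ (fun s => θ s i) :=
    fun i => (hreg i).differentiable (by norm_num)
  have hω1 : ∀ i, ContDiff ℝ 1 (ω i) := by
    intro i
    have h2 : ContDiff ℝ ((1:WithTop ℕ∞)+1) (fun s => θ s i) := by
      have := hreg i
      have he : ((2:ℕ) : WithTop ℕ∞) = (1:WithTop ℕ∞)+1 := by norm_num
      rw [← he]; exact_mod_cast this
    exact (contDiff_succ_iff_deriv.mp h2).2.2
  have hωd : ∀ i, Differentiable ℝ (ω i) := fun i => (hω1 i).differentiable one_ne_zero
  have hωc : ∀ i, Continuous (ω i) := fun i => (hωd i).continuous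
  set a : Fin N → ℝ → ℝ := fun i => deriv (ω i) with hadef
  -- energy functional
  set E : ℝ → ℝ := fun t => (m/2) * ∑ i, (ω i t)^2
    + (κ/(2*N)) * ∑ i, ∑ j, (1 - Real.cos (θ t j - θ t i)) with hEdef
  have hEderiv : ∀ t, HasDerivAt E
      (m * ∑ i, ω i t * a i t
        + (κ/(2*N)) * ∑ i, ∑ j, Real.sin (θ t j - θ t i) * (ω j t - ω i t)) t := by
    intro t
    have h1 : HasDerivAt (fun t => ∑ i, (ω i t)^2) (∑ i, 2 * ω i t * a i t) t := by
      apply HasDerivAt.fun_sum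
      intro i _
      have := ((hωd i) t).hasDerivAt.fun_pow 2
      simpa [mul_comm, pow_one] using this
    have h2 : ∀ i j : Fin N, HasDerivAt (fun t => 1 - Real.cos (θ t j - θ t i))
        (Real.sin (θ t j - θ t i) * (ω j t - ω i t)) t := by
      intro i j
      have hij : HasDerivAt (fun t => θ t j - θ t i) (ω j t - ω i t) t :=
        ((hθd j t).hasDerivAt).sub ((hθd i t).hasDerivAt)
      have := hij.cos.const_sub 1
      convert this using 1
      exacts [rfl, rfl, by ring]
    have h2' : HasDerivAt (fun t => ∑ i : Fin N, ∑ j : Fin N, (1 - Real.cos (θ t j - θ t i)))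
        (∑ i : Fin N, ∑ j : Fin N, Real.sin (θ t j - θ t i) * (ω j t - ω i t)) t := by
      apply HasDerivAt.fun_sum; intro i _
      apply HasDerivAt.fun_sum; intro j _
      exact h2 i j
    have hsum := (h1.const_mul (m/2)).add (h2'.const_mul (κ/(2*N)))
    have heq : m * ∑ i, ω i t * a i t = (m/2) * ∑ i, 2 * ω i t * a i t := by
      rw [Finset.mul_sum, Finset.mul_sum]
      apply Finset.sum_congr rfl; intro i _; ring
    rw [heq]
    exact hsum
  have hEderiv' : ∀ t ≥ (0:ℝ), HasDerivAt E (-γ * ∑ i, (ω i t)^2) t := by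
    intro t ht
    have hode' : ∀ i, m * a i t = -γ * ω i t + (κ/N) * ∑ j, Real.sin (θ t j - θ t i) :=
      fun i => hode t ht i
    have h1 : m * ∑ i, ω i t * a i t
        = -γ * ∑ i, (ω i t)^2 + (κ/N) * ∑ i, ∑ j, ω i t * Real.sin (θ t j - θ t i) := by
      rw [Finset.mul_sum]
      have hterm : ∀ i ∈ Finset.univ, m * (ω i t * a i t)
          = -γ * (ω i t)^2 + (κ/N) * ∑ j, ω i t * Real.sin (θ t j - θ t i) := by
        intro i _
        calc m * (ω i t * a i t) = ω i t * (m * a i t) := by ring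
          _ = ω i t * (-γ * ω i t + (κ/N) * ∑ j, Real.sin (θ t j - θ t i)) := by
              rw [hode' i]
          _ = -γ * (ω i t)^2 + (κ/N) * (ω i t * ∑ j, Real.sin (θ t j - θ t i)) := by ring
          _ = _ := by rw [Finset.mul_sum]
      rw [Finset.sum_congr rfl hterm, Finset.sum_add_distrib, ← Finset.mul_sum,
        ← Finset.mul_sum]
    set S : ℝ := ∑ i : Fin N, ∑ j : Fin N, ω i t * Real.sin (θ t j - θ t i) with hS
    have hswap : ∑ i : Fin N, ∑ j : Fin N, Real.sin (θ t j - θ t i) * ω j t = -S := by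
      rw [Finset.sum_comm, hS, ← Finset.sum_neg_distrib]
      apply Finset.sum_congr rfl; intro i _
      rw [← Finset.sum_neg_distrib]
      apply Finset.sum_congr rfl; intro j _
      rw [show θ t i - θ t j = -(θ t j - θ t i) from by ring, Real.sin_neg]
      ring
    have hsplit : ∑ i : Fin N, ∑ j : Fin N, Real.sin (θ t j - θ t i) * (ω j t - ω i t)
        = (∑ i : Fin N, ∑ j : Fin N, Real.sin (θ t j - θ t i) * ω j t) - S := by
      rw [hS, ← Finset.sum_sub_distrib]
      apply Finset.sum_congr rfl; intro i _
      rw [← Finset.sum_sub_distrib]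
      apply Finset.sum_congr rfl; intro j _
      ring
    have key : m * ∑ i, ω i t * a i t
        + (κ/(2*N)) * ∑ i, ∑ j, Real.sin (θ t j - θ t i) * (ω j t - ω i t)
        = -γ * ∑ i, (ω i t)^2 := by
      rw [h1, hsplit, hswap]
      have hNne : (N:ℝ) ≠ 0 := ne_of_gt hNpos
      field_simp
      ring
    rw [← key]
    exact hEderiv t
  have hωcont2 : Continuous (fun t => ∑ i, (ω i t)^2) :=
    continuous_finset_sum _ (fun i _ => (hωc i).pow 2)
  have hEnonneg : ∀ t, 0 ≤ E t := by
    intro t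
    have h1 : 0 ≤ ∑ i, (ω i t)^2 := Finset.sum_nonneg fun i _ => sq_nonneg _
    have h2 : 0 ≤ ∑ i : Fin N, ∑ j : Fin N, (1 - Real.cos (θ t j - θ t i)) :=
      Finset.sum_nonneg fun i _ => Finset.sum_nonneg fun j _ => by
        have := Real.cos_le_one (θ t j - θ t i); linarith
    have hk : 0 ≤ κ/(2*N) := by positivity
    have hm2 : 0 ≤ m/2 := by linarith
    exact add_nonneg (mul_nonneg hm2 h1) (mul_nonneg hk h2)
  have hFTC : ∀ T ≥ (0:ℝ), E T = E 0 - γ * ∫ t in (0:ℝ)..T, ∑ i, (ω i t)^2 := by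
    intro T hT
    have hint : ∀ t ∈ Set.uIcc (0:ℝ) T, HasDerivAt E (-γ * ∑ i, (ω i t)^2) t := by
      intro t ht
      rw [Set.uIcc_of_le hT] at ht
      exact hEderiv' t ht.1
    have hcont : IntervalIntegrable (fun t => -γ * ∑ i, (ω i t)^2)
        MeasureTheory.volume 0 T :=
      ((continuous_const.mul hωcont2).intervalIntegrable _ _)
    have hfund := intervalIntegral.integral_eq_sub_of_hasDerivAt hint hcont
    rw [intervalIntegral.integral_const_mul] at hfund
    linarith [hfund]
  have hEsq : ∀ (i : Fin N) (t : ℝ), (m/2) * (ω i t)^2 ≤ E t := by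
    intro i t
    have hsingle : (ω i t)^2 ≤ ∑ k, (ω k t)^2 :=
      Finset.single_le_sum (fun k _ => sq_nonneg (ω k t)) (Finset.mem_univ i)
    have h2 : 0 ≤ ∑ i' : Fin N, ∑ j : Fin N, (1 - Real.cos (θ t j - θ t i')) :=
      Finset.sum_nonneg fun i' _ => Finset.sum_nonneg fun j _ => by
        have := Real.cos_le_one (θ t j - θ t i'); linarith
    have hk : 0 ≤ κ/(2*N) := by positivity
    have hmono : (m/2) * (ω i t)^2 ≤ (m/2) * ∑ k, (ω k t)^2 :=
      mul_le_mul_of_nonneg_left hsingle (by linarith)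
    have hE' : E t = (m/2) * ∑ k, (ω k t)^2
        + (κ/(2*N)) * ∑ i' : Fin N, ∑ j : Fin N, (1 - Real.cos (θ t j - θ t i')) := rfl
    nlinarith [mul_nonneg hk h2]
  clear_value E
  set L : ℝ := E 0 / γ with hL
  have hsqint : ∀ i, ∀ T : ℝ, (∫ t in (0:ℝ)..T, (ω i t)^2) ≤ L := by
    intro i T
    have hL0 : 0 ≤ L := div_nonneg (hEnonneg 0) (le_of_lt hγ)
    rcases le_or_gt T 0 with hT | hT
    · have h0 : 0 ≤ ∫ t in T..(0:ℝ), (ω i t)^2 :=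
        intervalIntegral.integral_nonneg hT (fun x _ => sq_nonneg _)
      rw [intervalIntegral.integral_symm] at h0
      linarith
    · have hT' := le_of_lt hT
      have h1 : (∫ t in (0:ℝ)..T, (ω i t)^2) ≤ ∫ t in (0:ℝ)..T, ∑ k, (ω k t)^2 := by
        apply intervalIntegral.integral_mono_on hT'
          (((hωc i).pow 2).intervalIntegrable _ _) (hωcont2.intervalIntegrable _ _)
        intro x _
        exact Finset.single_le_sum (fun k _ => sq_nonneg (ω k x)) (Finset.mem_univ i)
      have h2 := hFTC T hT'
      have h3 := hEnonneg T
      have h4 : γ * ∫ t in (0:ℝ)..T, ∑ k, (ω k t)^2 ≤ E 0 := by linarith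
      have h5 : (∫ t in (0:ℝ)..T, ∑ k, (ω k t)^2) ≤ L := by
        rw [hL, le_div_iff₀ hγ]
        linarith
      linarith
  set B : ℝ := Real.sqrt (2 * E 0 / m) with hB
  have hB0 : 0 ≤ B := Real.sqrt_nonneg _
  have hωbound : ∀ i, ∀ t ≥ (0:ℝ), |ω i t| ≤ B := by
    intro i t ht
    have hEt : E t ≤ E 0 := by
      have h2 := hFTC t ht
      have h0 : 0 ≤ ∫ s in (0:ℝ)..t, ∑ k, (ω k s)^2 :=
        intervalIntegral.integral_nonneg ht
          (fun x _ => Finset.sum_nonneg fun k _ => sq_nonneg _)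
      nlinarith
    have h1 : (m/2) * (ω i t)^2 ≤ E t := hEsq i t
    have hsq : (ω i t)^2 ≤ 2 * E 0 / m := by
      rw [le_div_iff₀ hm]; nlinarith [h1, hEt]
    calc |ω i t| = Real.sqrt ((ω i t)^2) := (Real.sqrt_sq_eq_abs _).symm
      _ ≤ B := Real.sqrt_le_sqrt hsq
  set C : ℝ := (γ * B + κ)/m with hC
  have hC0 : 0 < C := div_pos (by nlinarith [mul_nonneg hγ.le hB0]) hm
  have habound : ∀ i, ∀ t ∈ Set.Ici (0:ℝ), ‖a i t‖ ≤ C := by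
    intro i t ht
    have ht' : (0:ℝ) ≤ t := ht
    have hode' : m * a i t = -γ * ω i t + (κ/N) * ∑ j, Real.sin (θ t j - θ t i) :=
      hode t ht' i
    have hsin : |∑ j, Real.sin (θ t j - θ t i)| ≤ N := by
      calc |∑ j, Real.sin (θ t j - θ t i)| ≤ ∑ j, |Real.sin (θ t j - θ t i)| :=
            Finset.abs_sum_le_sum_abs _ _
        _ ≤ ∑ _j : Fin N, (1:ℝ) :=
            Finset.sum_le_sum (fun j _ => Real.abs_sin_le_one _)
        _ = N := by simp
    have h1 : |m * a i t| ≤ γ * B + κ := by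
      rw [hode']
      calc |(-γ) * ω i t + (κ/N) * ∑ j, Real.sin (θ t j - θ t i)|
          ≤ |(-γ) * ω i t| + |(κ/N) * ∑ j, Real.sin (θ t j - θ t i)| := abs_add_le _ _
        _ ≤ γ * B + κ := by
            rw [abs_mul, abs_mul, abs_neg, abs_of_pos hγ, abs_of_pos (div_pos hκ hNpos)]
            have hb := hωbound i t ht'
            have hs2 : (κ/N) * |∑ j, Real.sin (θ t j - θ t i)| ≤ (κ/N) * N :=
              mul_le_mul_of_nonneg_left hsin (le_of_lt (div_pos hκ hNpos))
            have : (κ/N) * (N:ℝ) = κ := by field_simp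
            nlinarith [mul_le_mul_of_nonneg_left hb hγ.le]
    rw [abs_mul, abs_of_pos hm] at h1
    rw [Real.norm_eq_abs, hC, le_div_iff₀ hm]
    nlinarith
  have hLip : ∀ i, ∀ s ∈ Set.Ici (0:ℝ), ∀ t ∈ Set.Ici (0:ℝ),
      |ω i s - ω i t| ≤ C * |s - t| := by
    intro i s hs t ht
    have := Convex.norm_image_sub_le_of_norm_deriv_le
      (fun x _ => (hωd i) x) (habound i) (convex_Ici 0) ht hs
    simpa [Real.norm_eq_abs] using this
  have hten : ∀ i, Tendsto (ω i) atTop (nhds 0) := fun i =>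
    barbalat_sq (ω i) (hωc i) C L hC0 (hLip i) (hsqint i)
  intro i j
  have := ((hten i).sub (hten j)).abs
  simpa using this
end

section
/- Let θ : [0,∞) → ℝ^N solve the inertial Kuramoto model on a symmetric network with heterogeneous inertia and friction. Then the frequencies vanish asymptotically: lim_{t→∞} ω_i(t) = 0 for each i = 1,…,N; in particular complete synchronization emerges: lim_{t→∞} |ω_i(t) − ω_j(t)| = 0 for all i, j. -/
open Filter

/-- For the inertial Kuramoto model on a symmetric network with
heterogeneous inertia and friction, the frequencies vanish asymptotically,
and in particular complete synchronization emerges. -/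
theorem kuramoto_heterogeneous_frequency_decay
    (N : ℕ) (hN : 1 ≤ N)
    (m γ : Fin N → ℝ) (hm : ∀ i, 0 < m i) (hγ : ∀ i, 0 < γ i)
    (a : Fin N → Fin N → ℝ)
    (hsym : ∀ i j, a i j = a j i) (hnn : ∀ i j, 0 ≤ a i j)
    (θ : ℝ → Fin N → ℝ)
    (hreg : ∀ i, ContDiff ℝ 2 (fun t => θ t i))
    (hode : ∀ t ≥ (0:ℝ), ∀ i,
      m i * deriv (deriv (fun s => θ s i)) t
        = -γ i * deriv (fun s => θ s i) t
          + ∑ j, a i j * Real.sin (θ t j - θ t i)) :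
    (∀ i, Tendsto (fun t => deriv (fun s => θ s i) t) atTop (nhds 0)) ∧
    (∀ i j, Tendsto
      (fun t => |deriv (fun s => θ s i) t - deriv (fun s => θ s j) t|)
      atTop (nhds 0)) := by
  classical
  set ω : Fin N → ℝ → ℝ := fun i => deriv (fun s => θ s i) with hωdef
  have hθdiff : ∀ i, Differentiable ℝ (fun s => θ s i) := fun i =>
    (hreg i).differentiable (by norm_num)
  have hθd : ∀ (i : Fin N) (t : ℝ), HasDerivAt (fun s => θ s i) (ω i t) t := fun i t =>
    (hθdiff i t).hasDerivAt
  have hω1 : ∀ i, ContDiff ℝ 1 (ω i) := by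
    intro i
    have h2 : ContDiff ℝ ((1:ℕ) + 1) (fun s => θ s i) := by
      exact_mod_cast hreg i
    exact (contDiff_succ_iff_deriv.mp h2).2.2
  have hωdiff : ∀ i, Differentiable ℝ (ω i) := fun i => (hω1 i).differentiable one_ne_zero
  set ω' : Fin N → ℝ → ℝ := fun i => deriv (ω i) with hω'def
  have hωd : ∀ (i : Fin N) (t : ℝ), HasDerivAt (ω i) (ω' i t) t := fun i t =>
    (hωdiff i t).hasDerivAt
  have hodeω : ∀ t, 0 ≤ t → ∀ i,
      m i * ω' i t = -γ i * ω i t + ∑ j, a i j * Real.sin (θ t j - θ t i) := by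
    intro t ht i
    exact hode t ht i
  set E : ℝ → ℝ := fun t =>
    (∑ i, m i * (ω i t * ω i t)) / 2
      - (∑ i, ∑ j, a i j * Real.cos (θ t j - θ t i)) / 2 with hEdef
  set g : ℝ → ℝ := fun t => -∑ i, γ i * (ω i t * ω i t) with hgdef
  -- general derivative of E
  have hD : ∀ t : ℝ, HasDerivAt E
      ((∑ i, m i * (ω' i t * ω i t + ω i t * ω' i t)) / 2
        - (∑ i, ∑ j, a i j * (-Real.sin (θ t j - θ t i) * (ω j t - ω i t))) / 2) t := by
    intro t
    apply HasDerivAt.sub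
    · exact (HasDerivAt.fun_sum fun i _ => ((hωd i t).mul (hωd i t)).const_mul (m i)).div_const 2
    · exact (HasDerivAt.fun_sum fun i _ => HasDerivAt.fun_sum fun j _ =>
        (((hθd j t).sub (hθd i t)).cos).const_mul (a i j)).div_const 2
  have hswap : ∀ t : ℝ,
      (∑ i, ∑ j, a i j * Real.sin (θ t j - θ t i) * ω j t)
        = -∑ i, ∑ j, a i j * Real.sin (θ t j - θ t i) * ω i t := by
    intro t
    rw [Finset.sum_comm, ← Finset.sum_neg_distrib]
    refine Finset.sum_congr rfl fun i _ => ?_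
    rw [← Finset.sum_neg_distrib]
    refine Finset.sum_congr rfl fun j _ => ?_
    rw [hsym j i, show θ t i - θ t j = -(θ t j - θ t i) by ring, Real.sin_neg]
    ring
  -- on [0,∞) the derivative of E is g
  have hE' : ∀ t, 0 ≤ t → HasDerivAt E (g t) t := by
    intro t ht
    have h := hD t
    have e1 : (∑ i, m i * (ω' i t * ω i t + ω i t * ω' i t))
        = ∑ i, (-(2 * (γ i * (ω i t * ω i t)))
            + 2 * ∑ j, a i j * Real.sin (θ t j - θ t i) * ω i t) := by
      refine Finset.sum_congr rfl fun i _ => ?_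
      have h2 := hodeω t ht i
      have e2 : ω i t * ∑ j, a i j * Real.sin (θ t j - θ t i)
          = ∑ j, a i j * Real.sin (θ t j - θ t i) * ω i t := by
        rw [Finset.mul_sum]; exact Finset.sum_congr rfl fun j _ => by ring
      calc m i * (ω' i t * ω i t + ω i t * ω' i t)
          = 2 * (ω i t * (m i * ω' i t)) := by ring
        _ = 2 * (ω i t * (-γ i * ω i t + ∑ j, a i j * Real.sin (θ t j - θ t i))) := by rw [h2]
        _ = -(2 * (γ i * (ω i t * ω i t)))
            + 2 * (ω i t * ∑ j, a i j * Real.sin (θ t j - θ t i)) := by ring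
        _ = _ := by rw [e2]
    have e3 : (∑ i, ∑ j, a i j * (-Real.sin (θ t j - θ t i) * (ω j t - ω i t)))
        = ∑ i, ∑ j, (a i j * Real.sin (θ t j - θ t i) * ω i t
            - a i j * Real.sin (θ t j - θ t i) * ω j t) :=
      Finset.sum_congr rfl fun i _ => Finset.sum_congr rfl fun j _ => by ring
    have hval : (∑ i, m i * (ω' i t * ω i t + ω i t * ω' i t)) / 2
        - (∑ i, ∑ j, a i j * (-Real.sin (θ t j - θ t i) * (ω j t - ω i t))) / 2 = g t := by
      rw [e1, e3]
      rw [Finset.sum_add_distrib]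
      simp only [Finset.sum_sub_distrib]
      rw [hswap t]
      rw [Finset.sum_neg_distrib, ← Finset.mul_sum, ← Finset.mul_sum]
      show _ = -∑ i, γ i * (ω i t * ω i t)
      ring
    rw [← hval]
    exact h
  have hEdiffble : Differentiable ℝ E := fun t => (hD t).differentiableAt
  have hg_nonpos : ∀ t, g t ≤ 0 := fun t =>
    neg_nonpos.mpr (Finset.sum_nonneg fun i _ => mul_nonneg (hγ i).le (mul_self_nonneg _))
  have hanti : AntitoneOn E (Set.Ici (0:ℝ)) := by
    apply antitoneOn_of_deriv_nonpos (convex_Ici 0) hEdiffble.continuous.continuousOn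
      hEdiffble.differentiableOn
    intro x hx
    rw [interior_Ici] at hx
    rw [(hE' x hx.le).deriv]
    exact hg_nonpos x
  set A2 := ∑ i, ∑ j, a i j with hA2
  have hpot_le : ∀ t, (∑ i, ∑ j, a i j * Real.cos (θ t j - θ t i)) ≤ A2 := by
    intro t
    refine Finset.sum_le_sum fun i _ => Finset.sum_le_sum fun j _ => ?_
    calc a i j * Real.cos (θ t j - θ t i) ≤ a i j * 1 :=
          mul_le_mul_of_nonneg_left (Real.cos_le_one _) (hnn i j)
      _ = a i j := mul_one _
  set B := 2 * E 0 + A2 with hB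
  have hSm : ∀ t, 0 ≤ t → (∑ i, m i * (ω i t * ω i t)) ≤ B := by
    intro t ht
    have hEt : E t ≤ E 0 := hanti Set.self_mem_Ici ht ht
    have hid : (∑ i, m i * (ω i t * ω i t))
        = 2 * E t + (∑ i, ∑ j, a i j * Real.cos (θ t j - θ t i)) := by
      simp only [hEdef]; ring
    have := hpot_le t
    rw [hid, hB]
    linarith
  set C : Fin N → ℝ := fun i => Real.sqrt (B / m i) with hC
  have hC0 : ∀ i, 0 ≤ C i := fun i => Real.sqrt_nonneg _
  have hωbound : ∀ t, 0 ≤ t → ∀ i, |ω i t| ≤ C i := by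
    intro t ht i
    have h1 : m i * (ω i t * ω i t) ≤ B :=
      le_trans (Finset.single_le_sum (f := fun i => m i * (ω i t * ω i t))
        (fun i _ => mul_nonneg (hm i).le (mul_self_nonneg _)) (Finset.mem_univ i)) (hSm t ht)
    have h2 : ω i t * ω i t ≤ B / m i := (le_div_iff₀' (hm i)).mpr h1
    calc |ω i t| = Real.sqrt (ω i t * ω i t) := (Real.sqrt_mul_self_eq_abs _).symm
      _ ≤ C i := Real.sqrt_le_sqrt h2
  set Sa : Fin N → ℝ := fun i => ∑ j, a i j with hSadef
  have hSa0 : ∀ i, 0 ≤ Sa i := fun i => Finset.sum_nonneg fun j _ => hnn i j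
  set C' : Fin N → ℝ := fun i => (γ i * C i + Sa i) / m i with hC'def
  have hC'0 : ∀ i, 0 ≤ C' i := fun i =>
    div_nonneg (add_nonneg (mul_nonneg (hγ i).le (hC0 i)) (hSa0 i)) (hm i).le
  have hω'bound : ∀ t, 0 ≤ t → ∀ i, |ω' i t| ≤ C' i := by
    intro t ht i
    have h1 : |m i * ω' i t| ≤ γ i * C i + Sa i := by
      rw [hodeω t ht i]
      calc |(-γ i * ω i t + ∑ j, a i j * Real.sin (θ t j - θ t i))|
          ≤ |(-γ i * ω i t)| + |∑ j, a i j * Real.sin (θ t j - θ t i)| := abs_add_le _ _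
        _ ≤ γ i * C i + Sa i := by
            apply add_le_add
            · rw [abs_mul, abs_neg, abs_of_pos (hγ i)]
              exact mul_le_mul_of_nonneg_left (hωbound t ht i) (hγ i).le
            · calc |∑ j, a i j * Real.sin (θ t j - θ t i)|
                  ≤ ∑ j, |a i j * Real.sin (θ t j - θ t i)| := Finset.abs_sum_le_sum_abs _ _
                _ ≤ Sa i := Finset.sum_le_sum fun j _ => by
                    rw [abs_mul, abs_of_nonneg (hnn i j)]
                    calc a i j * |Real.sin (θ t j - θ t i)| ≤ a i j * 1 :=
                          mul_le_mul_of_nonneg_left (Real.abs_sin_le_one _) (hnn i j)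
                      _ = a i j := mul_one _
    have h2 : m i * |ω' i t| ≤ γ i * C i + Sa i := by
      rwa [abs_mul, abs_of_pos (hm i)] at h1
    exact (le_div_iff₀' (hm i)).mpr h2
  have hgd : ∀ t, HasDerivAt g (-∑ i, γ i * (ω' i t * ω i t + ω i t * ω' i t)) t := fun t =>
    (HasDerivAt.fun_sum fun i _ => ((hωd i t).mul (hωd i t)).const_mul (γ i)).neg
  set M := ∑ i, γ i * (C' i * C i + C i * C' i) with hMdef
  have hM0 : 0 ≤ M := Finset.sum_nonneg fun i _ => mul_nonneg (hγ i).le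
    (add_nonneg (mul_nonneg (hC'0 i) (hC0 i)) (mul_nonneg (hC0 i) (hC'0 i)))
  have hderivg_bound : ∀ x ∈ Set.Ici (0:ℝ), ‖deriv g x‖ ≤ M := by
    intro x hx
    have hx0 : (0:ℝ) ≤ x := hx
    rw [(hgd x).deriv, Real.norm_eq_abs, abs_neg]
    calc |∑ i, γ i * (ω' i x * ω i x + ω i x * ω' i x)|
        ≤ ∑ i, |γ i * (ω' i x * ω i x + ω i x * ω' i x)| := Finset.abs_sum_le_sum_abs _ _
      _ ≤ M := Finset.sum_le_sum fun i _ => by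
          rw [abs_mul, abs_of_pos (hγ i)]
          refine mul_le_mul_of_nonneg_left ?_ (hγ i).le
          calc |ω' i x * ω i x + ω i x * ω' i x|
              ≤ |ω' i x * ω i x| + |ω i x * ω' i x| := abs_add_le _ _
            _ ≤ C' i * C i + C i * C' i := by
                apply add_le_add
                · rw [abs_mul]
                  exact mul_le_mul (hω'bound x hx0 i) (hωbound x hx0 i) (abs_nonneg _) (hC'0 i)
                · rw [abs_mul]
                  exact mul_le_mul (hωbound x hx0 i) (hω'bound x hx0 i) (abs_nonneg _) (hC0 i)
  have hgLip : ∀ s ∈ Set.Ici (0:ℝ), ∀ u ∈ Set.Ici (0:ℝ), |g u - g s| ≤ M * |u - s| := by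
    intro s hs u hu
    have := Convex.norm_image_sub_le_of_norm_deriv_le (f := g)
      (fun x _ => (hgd x).differentiableAt) hderivg_bound (convex_Ici 0) hs hu
    simpa [Real.norm_eq_abs] using this
  -- E converges at infinity
  have hElb : ∀ t, 0 ≤ t → -(A2/2) ≤ E t := by
    intro t ht
    have h1 : 0 ≤ ∑ i, m i * (ω i t * ω i t) :=
      Finset.sum_nonneg fun i _ => mul_nonneg (hm i).le (mul_self_nonneg _)
    have h2 := hpot_le t
    simp only [hEdef]
    linarith
  set F : ℝ → ℝ := fun t => E (max t 0) with hFdef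
  have hFanti : Antitone F := fun s t hst =>
    hanti (le_max_right s 0) (le_max_right t 0) (max_le_max hst le_rfl)
  have hFbdd : BddBelow (Set.range F) :=
    ⟨-(A2/2), by rintro x ⟨t, rfl⟩; exact hElb _ (le_max_right t 0)⟩
  have hFtend : Tendsto F atTop (nhds (⨅ t, F t)) := tendsto_atTop_ciInf hFanti hFbdd
  set L := ⨅ t, F t with hLdef
  have hEtend : Tendsto E atTop (nhds L) := by
    apply hFtend.congr'
    filter_upwards [eventually_ge_atTop (0:ℝ)] with t ht
    simp only [hFdef, max_eq_left ht]
  -- Barbalat: g → 0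
  have hg0 : Tendsto g atTop (nhds 0) := by
    rw [Metric.tendsto_atTop]
    intro ε hε
    obtain ⟨δ, hδdef⟩ : ∃ δ : ℝ, δ = ε / (2 * (M + 1)) := ⟨_, rfl⟩
    have h2M : (0:ℝ) < 2 * (M + 1) := by linarith
    have hδ0 : 0 < δ := hδdef ▸ div_pos hε h2M
    have hMδ : M * δ ≤ ε / 2 := by
      rw [hδdef, ← mul_div_assoc, div_le_div_iff₀ h2M (by norm_num)]
      nlinarith
    obtain ⟨T0, hT0⟩ := (Metric.tendsto_atTop.mp hEtend) (ε * δ / 8) (by positivity)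
    refine ⟨max T0 0, fun t ht => ?_⟩
    rw [Real.dist_eq, sub_zero]
    by_contra hcon
    push_neg at hcon
    have ht0 : (0:ℝ) ≤ t := le_trans (le_max_right T0 0) ht
    have htT0 : T0 ≤ t := le_trans (le_max_left T0 0) ht
    have hgt : g t ≤ -ε := by
      have h := hg_nonpos t
      rw [abs_of_nonpos h] at hcon
      linarith
    have hgs : ∀ s ∈ Set.Icc t (t + δ), g s ≤ -(ε/2) := by
      intro s hs
      have hs0 : (0:ℝ) ≤ s := le_trans ht0 hs.1
      have h1 := hgLip t ht0 s hs0
      have h2 : |s - t| ≤ δ := by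
        rw [abs_of_nonneg (by linarith [hs.1])]
        linarith [hs.2]
      have h3 : g s - g t ≤ M * δ :=
        calc g s - g t ≤ |g s - g t| := le_abs_self _
          _ ≤ M * |s - t| := h1
          _ ≤ M * δ := mul_le_mul_of_nonneg_left h2 hM0
      have hfin : ∀ x y p : ℝ, x - y ≤ p → y ≤ -ε → p ≤ ε / 2 → x ≤ -(ε/2) := by
        intro x y p a1 a2 a3; linarith
      exact hfin (g s) (g t) (M * δ) h3 hgt hMδ
    have hhanti : AntitoneOn (fun s => E s + ε/2 * s) (Set.Icc t (t+δ)) := by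
      apply antitoneOn_of_deriv_nonpos (convex_Icc _ _)
      · exact (hEdiffble.add (differentiable_id.const_mul _)).continuous.continuousOn
      · exact (hEdiffble.add (differentiable_id.const_mul _)).differentiableOn
      · intro x hx
        rw [interior_Icc] at hx
        have hx0 : (0:ℝ) ≤ x := le_trans ht0 hx.1.le
        have hdx : HasDerivAt (fun s => E s + ε/2 * s) (g x + ε/2 * 1) x :=
          (hE' x hx0).add ((hasDerivAt_id x).const_mul (ε/2))
        rw [hdx.deriv]
        have := hgs x ⟨hx.1.le, hx.2.le⟩
        linarith
    have hstep := hhanti (Set.left_mem_Icc.mpr (by linarith)) (Set.right_mem_Icc.mpr (by linarith))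
      (by linarith)
    simp only at hstep
    have hE1 := hT0 t htT0
    have hE2 := hT0 (t + δ) (by linarith)
    rw [Real.dist_eq] at hE1 hE2
    have hE1' := abs_lt.mp hE1
    have hE2' := abs_lt.mp hE2
    have hfin2 : ∀ x y l d : ℝ, 0 < d → y + ε/2*(t+d) ≤ x + ε/2*t →
        x - l < ε*d/8 → -(ε*d/8) < x - l → y - l < ε*d/8 → -(ε*d/8) < y - l → False := by
      intro x y l d hd a1 a2 a3 a4 a5
      nlinarith
    exact hfin2 (E t) (E (t+δ)) L δ hδ0 hstep hE1'.2 hE1'.1 hE2'.2 hE2'.1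
  -- conclude
  have hsum0 : Tendsto (fun t => ∑ i, γ i * (ω i t * ω i t)) atTop (nhds 0) := by
    have h := hg0.neg
    simpa [hgdef] using h
  have hmain : ∀ i, Tendsto (fun t => ω i t) atTop (nhds 0) := by
    intro i
    have hterm : Tendsto (fun t => γ i * (ω i t * ω i t)) atTop (nhds 0) := by
      refine tendsto_of_tendsto_of_tendsto_of_le_of_le tendsto_const_nhds hsum0
        (fun t => mul_nonneg (hγ i).le (mul_self_nonneg _))
        (fun t => Finset.single_le_sum (f := fun j => γ j * (ω j t * ω j t))
          (fun j _ => mul_nonneg (hγ j).le (mul_self_nonneg _)) (Finset.mem_univ i))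
    have hsq : Tendsto (fun t => ω i t * ω i t) atTop (nhds 0) := by
      have h2 := hterm.const_mul (γ i)⁻¹
      simp only [mul_zero] at h2
      refine h2.congr fun t => ?_
      rw [inv_mul_cancel_left₀ (hγ i).ne']
    have habs : Tendsto (fun t => |ω i t|) atTop (nhds 0) := by
      have h3 := hsq.sqrt
      simpa [Real.sqrt_mul_self_eq_abs] using h3
    exact (tendsto_zero_iff_abs_tendsto_zero _).mpr habs
  refine ⟨fun i => hmain i, fun i j => ?_⟩
  have h := ((hmain i).sub (hmain j)).abs
  simpa using h
end

section
/- Let θ : [0,∞) → ℝ^N solve the inertial Kuramoto model on a symmetric network with heterogeneous inertia and friction. Then the angular accelerations vanish asymptotically: lim_{t→∞} θ_i''(t) = 0 for each i = 1,…,N. -/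
open Filter


lemma barbalat_step (f g g' : ℝ → ℝ) (K ε t : ℝ) (hK0 : 0 < K) (hε : 0 < ε)
    (ht : 0 ≤ t)
    (hf : ∀ s ≥ (0:ℝ), HasDerivAt f (g s) s)
    (hg : ∀ s ≥ (0:ℝ), HasDerivAt g (g' s) s)
    (hKb : ∀ s ≥ (0:ℝ), |g' s| ≤ K) (hg'c : Continuous g')
    (hgt : ε ≤ g t) :
    ε^2/(4*K) ≤ f (t + ε/(2*K)) - f t := by
  set δ := ε/(2*K) with hδdef
  have hδpos : 0 < δ := by positivity
  have hKδ : K * δ = ε/2 := by rw [hδdef, mul_div_assoc', mul_comm 2 K, mul_div_mul_left _ _ hK0.ne']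
  have hgcont : ∀ u v : ℝ, 0 ≤ u → ContinuousOn g (Set.uIcc u v) → True := fun _ _ _ _ => trivial
  have hglb : ∀ s ∈ Set.Icc t (t+δ), ε/2 ≤ g s := by
    intro s hs
    have hts : t ≤ s := hs.1
    have hs0 : 0 ≤ s := le_trans ht hts
    have hint : ∫ x in t..s, g' x = g s - g t := by
      apply intervalIntegral.integral_eq_sub_of_hasDerivAt
      · intro x hx
        rw [Set.uIcc_of_le hts] at hx
        exact hg x (le_trans ht hx.1)
      · exact hg'c.intervalIntegrable _ _
    have hbnd : |g s - g t| ≤ K * |s - t| := by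
      rw [← hint]
      have := intervalIntegral.norm_integral_le_of_norm_le_const
        (C := K) (f := g') (a := t) (b := s) ?_
      · simpa [Real.norm_eq_abs, abs_of_nonneg (sub_nonneg.mpr hts)] using this
      · intro x hx
        rw [Set.uIoc_of_le hts] at hx
        exact hKb x (le_trans ht (le_of_lt hx.1))
    have h1 : g t - g s ≤ K * (s - t) := by
      have := abs_le.mp hbnd
      rw [abs_of_nonneg (sub_nonneg.mpr hts)] at this
      linarith [this.1]
    have h2 : K * (s - t) ≤ K * δ := by
      apply mul_le_mul_of_nonneg_left _ (le_of_lt hK0)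
      linarith [hs.2]
    linarith [hKδ ▸ le_trans h1 h2]
  have hint2 : ∫ x in t..(t+δ), g x = f (t+δ) - f t := by
    apply intervalIntegral.integral_eq_sub_of_hasDerivAt
    · intro x hx
      rw [Set.uIcc_of_le (by linarith : t ≤ t + δ)] at hx
      exact hf x (le_trans ht hx.1)
    · apply ContinuousOn.intervalIntegrable
      intro x hx
      rw [Set.uIcc_of_le (by linarith : t ≤ t + δ)] at hx
      exact ((hg x (le_trans ht hx.1)).continuousAt).continuousWithinAt
  have hmono : ∫ x in t..(t+δ), (ε/2) ≤ ∫ x in t..(t+δ), g x := by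
    apply intervalIntegral.integral_mono_on (by linarith : t ≤ t + δ)
    · exact intervalIntegrable_const
    · apply ContinuousOn.intervalIntegrable
      intro x hx
      rw [Set.uIcc_of_le (by linarith : t ≤ t + δ)] at hx
      exact ((hg x (le_trans ht hx.1)).continuousAt).continuousWithinAt
    · exact hglb
  rw [intervalIntegral.integral_const] at hmono
  simp only [add_sub_cancel_left, smul_eq_mul] at hmono
  have : δ * (ε/2) = ε^2/(4*K) := by rw [hδdef]; ring
  rw [hint2] at hmono
  linarith [this ▸ hmono]

lemma barbalat_s11 (f g g' : ℝ → ℝ) (K L : ℝ)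
    (hf : ∀ s ≥ (0:ℝ), HasDerivAt f (g s) s)
    (hg : ∀ s ≥ (0:ℝ), HasDerivAt g (g' s) s)
    (hKb : ∀ s ≥ (0:ℝ), |g' s| ≤ K) (hg'c : Continuous g')
    (hfL : Tendsto f atTop (nhds L)) :
    Tendsto g atTop (nhds 0) := by
  set K' := max K 1 with hK'def
  have hK'0 : (0:ℝ) < K' := lt_of_lt_of_le one_pos (le_max_right _ _)
  have hKb' : ∀ s ≥ (0:ℝ), |g' s| ≤ K' := fun s hs => (hKb s hs).trans (le_max_left _ _)
  rw [Metric.tendsto_atTop]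
  intro ε hε
  set η := ε^2/(4*K') with hηdef
  have hη : 0 < η := by positivity
  obtain ⟨T, hT⟩ := (Metric.tendsto_atTop.mp hfL) (η/2) (by positivity)
  refine ⟨max T 0, fun t ht => ?_⟩
  have ht0 : (0:ℝ) ≤ t := le_trans (le_max_right _ _) ht
  have htT : T ≤ t := le_trans (le_max_left _ _) ht
  rw [Real.dist_eq, sub_zero]
  by_contra hcon
  push_neg at hcon
  have hcauchy : ∀ s ≥ t, |f s - f t| < η := by
    intro s hs
    have h1 := hT s (le_trans htT hs)
    have h2 := hT t htT
    rw [Real.dist_eq] at h1 h2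
    calc |f s - f t| = |(f s - L) - (f t - L)| := by ring_nf
      _ ≤ |f s - L| + |f t - L| := abs_sub _ _
      _ < η := by linarith
  set δ := ε/(2*K') with hδdef
  have hδpos : 0 < δ := by positivity
  rcases le_or_gt ε (g t) with hca | hca
  · have := barbalat_step f g g' K' ε t hK'0 hε ht0 hf hg hKb' hg'c hca
    have h2 := hcauchy (t + δ) (by linarith)
    rw [abs_lt] at h2
    rw [← hδdef, ← hηdef] at this
    linarith [h2.2]
  · have hca2 : ε ≤ -g t := by
      rcases abs_cases (g t) with ⟨h, _⟩ | ⟨h, _⟩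
      · linarith [hcon, h ▸ hcon]
      · linarith [h ▸ hcon]
    have := barbalat_step (fun s => -f s) (fun s => -g s) (fun s => -g' s) K' ε t hK'0 hε ht0
      (fun s hs => (hf s hs).neg) (fun s hs => (hg s hs).neg)
      (fun s hs => by rw [abs_neg]; exact hKb' s hs) hg'c.neg hca2
    have h2 := hcauchy (t + δ) (by linarith)
    rw [abs_lt] at h2
    simp only [← hδdef, ← hηdef] at this
    linarith [h2.1]

/-- For the inertial Kuramoto model on a symmetric network with
heterogeneous inertia and friction, the angular accelerations vanish
asymptotically: `θ_i''(t) → 0` as `t → ∞` for each `i`. -/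
theorem kuramoto_heterogeneous_acceleration_decay
    (N : ℕ) (hN : 1 ≤ N)
    (m γ : Fin N → ℝ) (hm : ∀ i, 0 < m i) (hγ : ∀ i, 0 < γ i)
    (a : Fin N → Fin N → ℝ)
    (hsym : ∀ i j, a i j = a j i) (hnn : ∀ i j, 0 ≤ a i j)
    (θ : ℝ → Fin N → ℝ)
    (hreg : ∀ i, ContDiff ℝ 2 (fun t => θ t i))
    (hode : ∀ t ≥ (0:ℝ), ∀ i,
      m i * deriv (deriv (fun s => θ s i)) t
        = -γ i * deriv (fun s => θ s i) t
          + ∑ j, a i j * Real.sin (θ t j - θ t i)) :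
    ∀ i, Tendsto (fun t => deriv (deriv (fun s => θ s i)) t)
      atTop (nhds 0) := by
  -- abbreviations
  set ω : Fin N → ℝ → ℝ := fun i => deriv (fun s => θ s i) with hωdef
  set α : Fin N → ℝ → ℝ := fun i => deriv (ω i) with hαdef
  set F : Fin N → ℝ → ℝ := fun i t => ∑ j, a i j * Real.sin (θ t j - θ t i) with hFdef
  set F' : Fin N → ℝ → ℝ :=
    fun i t => ∑ j, a i j * (Real.cos (θ t j - θ t i) * (ω j t - ω i t)) with hF'def
  -- regularity
  have hθdiff : ∀ i, Differentiable ℝ (fun s => θ s i) :=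
    fun i => (hreg i).differentiable (by norm_num)
  have hωC1 : ∀ i, ContDiff ℝ 1 (ω i) := by
    intro i
    have h2 : ContDiff ℝ ((1:WithTop ℕ∞) + 1) (fun t => θ t i) := by norm_num; exact hreg i
    exact (contDiff_succ_iff_deriv.mp h2).2.2
  have hωdiff : ∀ i, Differentiable ℝ (ω i) := fun i => (hωC1 i).differentiable (by norm_num)
  have hαcont : ∀ i, Continuous (α i) := fun i => (contDiff_one_iff_deriv.mp (hωC1 i)).2
  have hωcont : ∀ i, Continuous (ω i) := fun i => (hωdiff i).continuous
  have hθcont : ∀ i, Continuous (fun s => θ s i) := fun i => (hθdiff i).continuous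
  have hθhas : ∀ i t, HasDerivAt (fun s => θ s i) (ω i t) t :=
    fun i t => (hθdiff i t).hasDerivAt
  have hωhas : ∀ i t, HasDerivAt (ω i) (α i t) t := fun i t => (hωdiff i t).hasDerivAt
  -- the ODE in abbreviated form
  have hodem : ∀ t, 0 ≤ t → ∀ i, m i * α i t = -γ i * ω i t + F i t := fun t ht i =>
    hode t ht i
  -- derivative of F
  have hFhas : ∀ i t, HasDerivAt (F i) (F' i t) t := by
    intro i t
    apply HasDerivAt.fun_sum
    intro j _
    have hsub : HasDerivAt (fun s => θ s j - θ s i) (ω j t - ω i t) t :=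
      (hθhas j t).sub (hθhas i t)
    have hsin : HasDerivAt (fun s => Real.sin (θ s j - θ s i))
        (Real.cos (θ t j - θ t i) * (ω j t - ω i t)) t :=
      (Real.hasDerivAt_sin (θ t j - θ t i)).comp (h₂ := Real.sin) t hsub
    exact hsin.const_mul (a i j)
  have hFcont : ∀ i, Continuous (F i) := by
    intro i
    apply continuous_finset_sum
    intro j _
    exact continuous_const.mul (Real.continuous_sin.comp ((hθcont j).sub (hθcont i)))
  have hF'cont : ∀ i, Continuous (F' i) := by
    intro i
    apply continuous_finset_sum
    intro j _
    exact continuous_const.mul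
      ((Real.continuous_cos.comp ((hθcont j).sub (hθcont i))).mul ((hωcont j).sub (hωcont i)))
  -- energy
  set E : ℝ → ℝ := fun t => ∑ i, m i / 2 * (ω i t)^2
      + 1/2 * ∑ i, ∑ j, a i j * (1 - Real.cos (θ t j - θ t i)) with hEdef
  set D : ℝ → ℝ := fun t => ∑ i, m i * (ω i t * α i t)
      + 1/2 * ∑ i, ∑ j, a i j * (Real.sin (θ t j - θ t i) * (ω j t - ω i t)) with hDdef
  have hEhas : ∀ t, HasDerivAt E (D t) t := by
    intro t
    apply HasDerivAt.add
    · apply HasDerivAt.fun_sum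
      intro i _
      have := ((hωhas i t).fun_pow 2).const_mul (m i / 2)
      refine this.congr_deriv ?_
      push_cast
      ring
    · apply HasDerivAt.const_mul
      apply HasDerivAt.fun_sum
      intro i _
      apply HasDerivAt.fun_sum
      intro j _
      have hsub : HasDerivAt (fun s => θ s j - θ s i) (ω j t - ω i t) t :=
        (hθhas j t).sub (hθhas i t)
      have hcos : HasDerivAt (fun s => Real.cos (θ s j - θ s i))
          (-Real.sin (θ t j - θ t i) * (ω j t - ω i t)) t :=
        (Real.hasDerivAt_cos (θ t j - θ t i)).comp (h₂ := Real.cos) t hsub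
      have := (hcos.const_sub 1).const_mul (a i j)
      refine this.congr_deriv ?_
      ring
  -- algebraic identity: for t ≥ 0, D t = -∑ γ ω²
  have halg : ∀ t, 0 ≤ t → D t = -∑ i, γ i * (ω i t)^2 := by
    intro t ht
    have hS : ∑ i, ∑ j, a i j * (Real.sin (θ t j - θ t i) * ω j t)
        = ∑ i, ∑ j, -(a i j * (Real.sin (θ t j - θ t i) * ω i t)) := by
      rw [Finset.sum_comm]
      refine Finset.sum_congr rfl fun i _ => Finset.sum_congr rfl fun j _ => ?_
      have hneg : θ t i - θ t j = -(θ t j - θ t i) := by ring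
      rw [hsym j i, hneg, Real.sin_neg]
      ring
    have hsplit : ∑ i, ∑ j, a i j * (Real.sin (θ t j - θ t i) * (ω j t - ω i t))
        = ∑ i, ∑ j, a i j * (Real.sin (θ t j - θ t i) * ω j t)
          - ∑ i, ∑ j, a i j * (Real.sin (θ t j - θ t i) * ω i t) := by
      rw [← Finset.sum_sub_distrib]
      refine Finset.sum_congr rfl fun i _ => ?_
      rw [← Finset.sum_sub_distrib]
      exact Finset.sum_congr rfl fun j _ => by ring
    have hrow : ∀ i, ∑ j, a i j * (Real.sin (θ t j - θ t i) * ω i t) = ω i t * F i t := by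
      intro i
      rw [hFdef]
      simp only
      rw [Finset.mul_sum]
      exact Finset.sum_congr rfl fun j _ => by ring
    have hsum : ∑ i, ∑ j, a i j * (Real.sin (θ t j - θ t i) * (ω j t - ω i t))
        = -2 * ∑ i, ω i t * F i t := by
      rw [hsplit, hS]
      simp only [Finset.sum_neg_distrib]
      simp only [hrow]
      ring
    have hterm : ∀ i, m i * (ω i t * α i t) - ω i t * F i t = -(γ i * ω i t ^ 2) := by
      intro i
      have h := hodem t ht i
      have h2 : m i * α i t - F i t = -γ i * ω i t := by linarith
      calc m i * (ω i t * α i t) - ω i t * F i t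
          = ω i t * (m i * α i t - F i t) := by ring
        _ = ω i t * (-γ i * ω i t) := by rw [h2]
        _ = -(γ i * ω i t ^ 2) := by ring
    rw [hDdef]
    simp only
    rw [hsum]
    calc ∑ i, m i * (ω i t * α i t) + 1/2 * (-2 * ∑ i, ω i t * F i t)
        = ∑ i, (m i * (ω i t * α i t) - ω i t * F i t) := by
          rw [Finset.sum_sub_distrib]; ring
      _ = ∑ i, -(γ i * ω i t ^ 2) := Finset.sum_congr rfl fun i _ => hterm i
      _ = -∑ i, γ i * (ω i t)^2 := by rw [Finset.sum_neg_distrib]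
  -- nonnegativity of the energy pieces
  have hpot_nonneg : ∀ t, 0 ≤ ∑ i, ∑ j, a i j * (1 - Real.cos (θ t j - θ t i)) :=
    fun t => Finset.sum_nonneg fun i _ => Finset.sum_nonneg fun j _ =>
      mul_nonneg (hnn i j) (by linarith [Real.cos_le_one (θ t j - θ t i)])
  have hkin_nonneg : ∀ t, 0 ≤ ∑ i, m i / 2 * (ω i t)^2 :=
    fun t => Finset.sum_nonneg fun i _ =>
      mul_nonneg (by linarith [hm i]) (sq_nonneg _)
  have hEnonneg : ∀ t, 0 ≤ E t := by
    intro t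
    rw [hEdef]
    simp only
    have h1 := hkin_nonneg t
    have h2 := hpot_nonneg t
    linarith
  -- E is antitone on [0, ∞)
  have hEdiff : Differentiable ℝ E := fun t => (hEhas t).differentiableAt
  have hEanti : AntitoneOn E (Set.Ici 0) := by
    apply antitoneOn_of_deriv_nonpos (convex_Ici 0) hEdiff.continuous.continuousOn
      hEdiff.differentiableOn
    intro x hx
    rw [interior_Ici] at hx
    rw [(hEhas x).deriv, halg x (le_of_lt hx)]
    simp only [neg_nonpos]
    exact Finset.sum_nonneg fun i _ => mul_nonneg (hγ i).le (sq_nonneg _)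
  -- bound on ω
  set B : Fin N → ℝ := fun i => Real.sqrt (2 * E 0 / m i) with hBdef
  have hBnonneg : ∀ i, 0 ≤ B i := fun i => Real.sqrt_nonneg _
  have hωbound : ∀ i, ∀ t, 0 ≤ t → |ω i t| ≤ B i := by
    intro i t ht
    have hEt : E t ≤ E 0 := hEanti Set.self_mem_Ici ht ht
    have hkin : m i / 2 * (ω i t)^2 ≤ E t := by
      rw [hEdef]
      simp only
      have h1 : m i / 2 * (ω i t)^2 ≤ ∑ j, m j / 2 * (ω j t)^2 :=
        Finset.single_le_sum (f := fun j => m j / 2 * (ω j t)^2)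
          (fun j _ => mul_nonneg (by linarith [hm j]) (sq_nonneg _)) (Finset.mem_univ i)
      have h2 := hpot_nonneg t
      linarith
    have hsq : (ω i t)^2 ≤ 2 * E 0 / m i := by
      rw [le_div_iff₀ (hm i)]
      have h6 : m i / 2 * (ω i t)^2 ≤ E 0 := le_trans hkin hEt
      calc (ω i t)^2 * m i = 2 * (m i / 2 * (ω i t)^2) := by ring
        _ ≤ 2 * E 0 := mul_le_mul_of_nonneg_left h6 (by norm_num)
    calc |ω i t| = Real.sqrt ((ω i t)^2) := (Real.sqrt_sq_eq_abs _).symm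
      _ ≤ B i := Real.sqrt_le_sqrt hsq
  -- bound on F and α
  set A : Fin N → ℝ := fun i => ∑ j, a i j with hAdef
  have hAnonneg : ∀ i, 0 ≤ A i := fun i => Finset.sum_nonneg fun j _ => hnn i j
  have hsinabs : ∀ x : ℝ, |Real.sin x| ≤ 1 :=
    fun x => abs_le.mpr ⟨Real.neg_one_le_sin x, Real.sin_le_one x⟩
  have hcosabs : ∀ x : ℝ, |Real.cos x| ≤ 1 :=
    fun x => abs_le.mpr ⟨Real.neg_one_le_cos x, Real.cos_le_one x⟩
  have hFbound : ∀ i t, |F i t| ≤ A i := by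
    intro i t
    rw [hFdef, hAdef]
    simp only
    calc |∑ j, a i j * Real.sin (θ t j - θ t i)|
        ≤ ∑ j, |a i j * Real.sin (θ t j - θ t i)| := Finset.abs_sum_le_sum_abs _ _
      _ ≤ ∑ j, a i j := Finset.sum_le_sum fun j _ => by
          rw [abs_mul, abs_of_nonneg (hnn i j)]
          exact mul_le_of_le_one_right (hnn i j) (hsinabs _)
  set C : Fin N → ℝ := fun i => (γ i * B i + A i) / m i with hCdef
  have hCnonneg : ∀ i, 0 ≤ C i := fun i =>
    div_nonneg (add_nonneg (mul_nonneg (hγ i).le (hBnonneg i)) (hAnonneg i)) (le_of_lt (hm i))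
  have hαexpr : ∀ i, ∀ t, 0 ≤ t → α i t = (-γ i * ω i t + F i t) / m i := by
    intro i t ht
    have h := hodem t ht i
    rw [eq_div_iff (ne_of_gt (hm i))]
    linarith
  have hαbound : ∀ i, ∀ t, 0 ≤ t → |α i t| ≤ C i := by
    intro i t ht
    rw [hαexpr i t ht, hCdef]
    simp only
    rw [abs_div, abs_of_pos (hm i)]
    have hnum : |(-γ i * ω i t + F i t)| ≤ γ i * B i + A i := by
      calc |(-γ i * ω i t + F i t)| ≤ |(-γ i) * ω i t| + |F i t| := abs_add_le _ _
        _ = γ i * |ω i t| + |F i t| := by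
            rw [abs_mul, abs_neg, abs_of_nonneg (le_of_lt (hγ i))]
        _ ≤ γ i * B i + A i := by
            have := hωbound i t ht
            have := hFbound i t
            have := (hγ i).le
            gcongr
    exact div_le_div_of_nonneg_right hnum (hm i).le
  -- the dissipation function g and its derivative
  set g : ℝ → ℝ := fun t => -∑ i, γ i * (ω i t)^2 with hgdef
  set g' : ℝ → ℝ := fun t => -∑ i, γ i * (2 * ω i t * α i t) with hg'def
  have hghas : ∀ t, HasDerivAt g (g' t) t := by
    intro t
    apply HasDerivAt.neg
    apply HasDerivAt.fun_sum
    intro i _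
    have := ((hωhas i t).fun_pow 2).const_mul (γ i)
    refine this.congr_deriv ?_
    push_cast
    ring
  have hg'cont : Continuous g' := by
    apply Continuous.neg
    apply continuous_finset_sum
    intro i _
    exact continuous_const.mul ((continuous_const.mul (hωcont i)).mul (hαcont i))
  set K1 : ℝ := ∑ i, γ i * (2 * B i * C i) with hK1def
  have hg'bound : ∀ t, 0 ≤ t → |g' t| ≤ K1 := by
    intro t ht
    rw [hg'def, hK1def]
    simp only [abs_neg]
    calc |∑ i, γ i * (2 * ω i t * α i t)|
        ≤ ∑ i, |γ i * (2 * ω i t * α i t)| := Finset.abs_sum_le_sum_abs _ _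
      _ ≤ ∑ i, γ i * (2 * B i * C i) := by
          apply Finset.sum_le_sum
          intro i _
          rw [abs_mul, abs_of_nonneg (le_of_lt (hγ i)), abs_mul, abs_mul, abs_two]
          have h1 := hωbound i t ht
          have h2 := hαbound i t ht
          have h3 := (hγ i).le
          have h4 := abs_nonneg (α i t)
          have h5 := abs_nonneg (ω i t)
          gcongr
  -- E tends to a limit
  have hEf : ∀ t, 0 ≤ t → HasDerivAt E (g t) t := by
    intro t ht
    rw [hgdef]
    simp only
    rw [← halg t ht]
    exact hEhas t
  obtain ⟨L, hL⟩ : ∃ L, Tendsto E atTop (nhds L) := by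
    have hanti : Antitone (fun t => E (max t 0)) := by
      intro s t hst
      exact hEanti (le_max_right s 0) (le_max_right t 0) (max_le_max hst le_rfl)
    rcases tendsto_of_antitone hanti with hbot | ⟨l, hl⟩
    · exfalso
      obtain ⟨t, ht⟩ := (hbot.eventually (eventually_le_atBot (-1))).exists
      linarith [hEnonneg (max t 0)]
    · refine ⟨l, hl.congr' ?_⟩
      filter_upwards [Ici_mem_atTop (0:ℝ)] with t ht
      rw [max_eq_left ht]
  -- first Barbalat application: g → 0
  have hgto : Tendsto g atTop (nhds 0) :=
    barbalat_s11 E g g' K1 L hEf (fun t ht => hghas t) hg'bound hg'cont hL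
  -- hence ω i → 0 for each i
  have hωto : ∀ i, Tendsto (ω i) atTop (nhds 0) := by
    intro i
    have hsq : Tendsto (fun t => γ i * (ω i t)^2) atTop (nhds 0) := by
      have hneg : Tendsto (fun t => -g t) atTop (nhds 0) := by
        have := hgto.neg
        rwa [neg_zero] at this
      apply tendsto_of_tendsto_of_tendsto_of_le_of_le tendsto_const_nhds hneg
      · intro t
        exact mul_nonneg (hγ i).le (sq_nonneg _)
      · intro t
        rw [hgdef]
        simp only [neg_neg]
        exact Finset.single_le_sum (f := fun j => γ j * (ω j t)^2)
          (fun j _ => mul_nonneg (hγ j).le (sq_nonneg _)) (Finset.mem_univ i)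
    have h2 : Tendsto (fun t => (ω i t)^2) atTop (nhds 0) := by
      have h3 := hsq.const_mul (γ i)⁻¹
      rw [mul_zero] at h3
      refine h3.congr fun t => ?_
      rw [inv_mul_cancel_left₀ (ne_of_gt (hγ i))]
    have h4 : Tendsto (fun t => |ω i t|) atTop (nhds 0) := by
      have h5 := h2.sqrt
      rw [Real.sqrt_zero] at h5
      exact h5.congr fun t => Real.sqrt_sq_eq_abs _
    exact (tendsto_zero_iff_abs_tendsto_zero _).mpr h4
  -- second Barbalat application, for each i
  intro i
  set h : ℝ → ℝ := fun t => (-γ i * ω i t + F i t) / m i with hhdef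
  set h' : ℝ → ℝ := fun t => (-γ i * α i t + F' i t) / m i with hh'def
  have hαh : ∀ t, 0 ≤ t → α i t = h t := by
    intro t ht
    rw [hhdef]
    simp only
    exact hαexpr i t ht
  have hfh : ∀ t, 0 ≤ t → HasDerivAt (ω i) (h t) t := by
    intro t ht
    rw [← hαh t ht]
    exact hωhas i t
  have hhhas : ∀ t, HasDerivAt h (h' t) t := by
    intro t
    exact (((hωhas i t).const_mul (-γ i)).add (hFhas i t)).div_const (m i)
  have hh'cont : Continuous h' :=
    ((continuous_const.mul (hαcont i)).add (hF'cont i)).div_const (m i)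
  set K2 : ℝ := (γ i * C i + ∑ j, a i j * (B j + B i)) / m i with hK2def
  have hF'bound : ∀ t, 0 ≤ t → |F' i t| ≤ ∑ j, a i j * (B j + B i) := by
    intro t ht
    rw [hF'def]
    simp only
    calc |∑ j, a i j * (Real.cos (θ t j - θ t i) * (ω j t - ω i t))|
        ≤ ∑ j, |a i j * (Real.cos (θ t j - θ t i) * (ω j t - ω i t))| :=
          Finset.abs_sum_le_sum_abs _ _
      _ ≤ ∑ j, a i j * (B j + B i) := by
          apply Finset.sum_le_sum
          intro j _
          rw [abs_mul, abs_of_nonneg (hnn i j), abs_mul]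
          have h1 : |ω j t - ω i t| ≤ B j + B i := by
            calc |ω j t - ω i t| ≤ |ω j t| + |ω i t| := abs_sub _ _
              _ ≤ B j + B i := add_le_add (hωbound j t ht) (hωbound i t ht)
          have h2 := hcosabs (θ t j - θ t i)
          have h3 := abs_nonneg (ω j t - ω i t)
          have h4 : |Real.cos (θ t j - θ t i)| * |ω j t - ω i t| ≤ B j + B i := by
            calc |Real.cos (θ t j - θ t i)| * |ω j t - ω i t|
                ≤ 1 * (B j + B i) := mul_le_mul h2 h1 h3 zero_le_one
              _ = B j + B i := one_mul _
          exact mul_le_mul_of_nonneg_left h4 (hnn i j)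
  have hh'bound : ∀ t, 0 ≤ t → |h' t| ≤ K2 := by
    intro t ht
    rw [hh'def, hK2def]
    simp only
    rw [abs_div, abs_of_pos (hm i)]
    have hnum : |(-γ i * α i t + F' i t)| ≤ γ i * C i + ∑ j, a i j * (B j + B i) := by
      calc |(-γ i * α i t + F' i t)| ≤ |(-γ i) * α i t| + |F' i t| := abs_add_le _ _
        _ = γ i * |α i t| + |F' i t| := by
            rw [abs_mul, abs_neg, abs_of_nonneg (le_of_lt (hγ i))]
        _ ≤ γ i * C i + ∑ j, a i j * (B j + B i) := by
            have := hαbound i t ht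
            have := hF'bound t ht
            have := (hγ i).le
            gcongr
    exact div_le_div_of_nonneg_right hnum (hm i).le
  have hhto : Tendsto h atTop (nhds 0) :=
    barbalat_s11 (ω i) h h' K2 0 hfh (fun t _ => hhhas t) hh'bound hh'cont (hωto i)
  have hfinal : Tendsto (α i) atTop (nhds 0) := by
    refine hhto.congr' ?_
    filter_upwards [Ici_mem_atTop (0:ℝ)] with t ht
    exact (hαh t ht).symm
  exact hfinal
end

section
/- Let θ : [0,∞) → ℝ^N solve the inertial Kuramoto model on a symmetric network with heterogeneous inertia and friction, and suppose there exist ā > 0 and δ ≥ 0 such that Σ_{j=1}^N |a_{ij} − ā| ≤ δ for every i, and such that the initial data satisfy J > 3δN + δ²/ā, where J := Σ_{i,j=1}^N a_{ij}·cos(θ_i(0) − θ_j(0)) − Σ_{i=1}^N m_i·ω_i(0)². Then the order parameters admit the uniform-in-time lower bounds: for all t ≥ 0 and all i, R_p(t)² ≥ (J − δN)/(ā·N²) and R_{p,i}(t)² ≥ ā·(J − 3δN) − δ² > 0. -/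
theorem kuramoto_aux_abs_sq_sum_exp {N : ℕ} (θ : Fin N → ℝ) :
    ‖∑ j, Complex.exp (Complex.I * (θ j : ℂ))‖ ^ 2
      = ∑ j, ∑ k, Real.cos (θ j - θ k) := by
  have hre : (∑ j, Complex.exp (Complex.I * (θ j : ℂ))).re = ∑ j, Real.cos (θ j) := by
    rw [Complex.re_sum]
    exact Finset.sum_congr rfl fun j _ => by rw [mul_comm]; exact Complex.exp_ofReal_mul_I_re _
  have him : (∑ j, Complex.exp (Complex.I * (θ j : ℂ))).im = ∑ j, Real.sin (θ j) := by
    rw [Complex.im_sum]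
    exact Finset.sum_congr rfl fun j _ => by rw [mul_comm]; exact Complex.exp_ofReal_mul_I_im _
  rw [Complex.sq_norm, Complex.normSq_apply, hre, him]
  rw [Fintype.sum_mul_sum, Fintype.sum_mul_sum, ← Finset.sum_add_distrib]
  refine Finset.sum_congr rfl fun j _ => ?_
  rw [← Finset.sum_add_distrib]
  refine Finset.sum_congr rfl fun k _ => ?_
  rw [Real.cos_sub]

theorem kuramoto_aux_energy_mono {N : ℕ} (m γ : Fin N → ℝ) (hγ : ∀ i, 0 < γ i)
    (a : Fin N → Fin N → ℝ) (hsym : ∀ i j, a i j = a j i)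
    (θ : ℝ → Fin N → ℝ) (hreg : ∀ i, ContDiff ℝ 2 (fun t => θ t i))
    (hode : ∀ t ≥ (0:ℝ), ∀ i,
      m i * deriv (deriv (fun s => θ s i)) t
        = -γ i * deriv (fun s => θ s i) t + ∑ j, a i j * Real.sin (θ t j - θ t i))
    (t : ℝ) (ht : 0 ≤ t) :
    (∑ i, ∑ j, a i j * Real.cos (θ 0 i - θ 0 j)) - ∑ i, m i * (deriv (fun s => θ s i) 0)^2
      ≤ (∑ i, ∑ j, a i j * Real.cos (θ t i - θ t j)) - ∑ i, m i * (deriv (fun s => θ s i) t)^2 := by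
  have hθd : ∀ i, Differentiable ℝ (fun s => θ s i) := fun i =>
    (hreg i).differentiable (by norm_num)
  have hωd : ∀ i, Differentiable ℝ (deriv (fun s => θ s i)) := by
    intro i
    have h2 : ContDiff ℝ ((1:ℕ) + 1) (fun s => θ s i) := by exact_mod_cast hreg i
    rw [contDiff_succ_iff_deriv] at h2
    exact h2.2.2.differentiable (by norm_num)
  set F : ℝ → ℝ := fun s =>
    (∑ i, ∑ j, a i j * Real.cos (θ s i - θ s j)) - ∑ i, m i * (deriv (fun u => θ u i) s)^2
    with hF
  set D : ℝ → ℝ := fun s =>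
    (∑ i, ∑ j, a i j * (-Real.sin (θ s i - θ s j) *
      (deriv (fun u => θ u i) s - deriv (fun u => θ u j) s)))
    - ∑ i, m i * (2 * deriv (fun u => θ u i) s * deriv (deriv (fun u => θ u i)) s)
    with hD
  have hder : ∀ s, HasDerivAt F (D s) s := by
    intro s
    have h1 : HasDerivAt (fun u => ∑ i, ∑ j, a i j * Real.cos (θ u i - θ u j))
        (∑ i, ∑ j, a i j * (-Real.sin (θ s i - θ s j) *
          (deriv (fun u => θ u i) s - deriv (fun u => θ u j) s))) s := by
      refine HasDerivAt.fun_sum fun i _ => HasDerivAt.fun_sum fun j _ => ?_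
      have hij : HasDerivAt (fun u => θ u i - θ u j)
          (deriv (fun u => θ u i) s - deriv (fun u => θ u j) s) s :=
        ((hθd i).differentiableAt.hasDerivAt).sub ((hθd j).differentiableAt.hasDerivAt)
      exact (hij.cos).const_mul (a i j)
    have h2 : HasDerivAt (fun u => ∑ i, m i * (deriv (fun v => θ v i) u)^2)
        (∑ i, m i * (2 * deriv (fun u => θ u i) s * deriv (deriv (fun u => θ u i)) s)) s := by
      refine HasDerivAt.fun_sum fun i _ => ?_
      have hw : HasDerivAt (fun u => deriv (fun v => θ v i) u)
          (deriv (deriv (fun u => θ u i)) s) s := ((hωd i) s).hasDerivAt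
      have := (hw.pow 2).const_mul (m i)
      simpa [pow_one, mul_comm, mul_assoc, mul_left_comm] using this
    exact h1.sub h2
  have hkey : ∀ s, 0 ≤ s → 0 ≤ D s := by
    intro s hs
    have hmode := hode s hs
    set w : Fin N → ℝ := fun i => deriv (fun u => θ u i) s with hw
    set w' : Fin N → ℝ := fun i => deriv (deriv (fun u => θ u i)) s with hw'
    have calc1 : ∀ i, m i * (2 * w i * w' i)
        = 2 * w i * (-γ i * w i + ∑ j, a i j * Real.sin (θ s j - θ s i)) := by
      intro i
      have : m i * (2 * w i * w' i) = 2 * w i * (m i * w' i) := by ring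
      rw [this, hmode i]
    have hsplit : D s = 2 * (∑ i, γ i * (w i)^2)
        + ∑ i, ∑ j, (a i j * (-Real.sin (θ s i - θ s j) * (w i - w j))
            - 2 * w i * (a i j * Real.sin (θ s j - θ s i))) := by
      rw [hD]
      simp only
      rw [Finset.mul_sum, ← Finset.sum_add_distrib, ← Finset.sum_sub_distrib]
      refine Finset.sum_congr rfl fun i _ => ?_
      rw [calc1 i, Finset.sum_sub_distrib, mul_add, Finset.mul_sum]
      ring
    have hzero : (∑ i, ∑ j, (a i j * (-Real.sin (θ s i - θ s j) * (w i - w j))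
            - 2 * w i * (a i j * Real.sin (θ s j - θ s i)))) = 0 := by
      set f : Fin N → Fin N → ℝ := fun i j =>
        a i j * (-Real.sin (θ s i - θ s j) * (w i - w j))
          - 2 * w i * (a i j * Real.sin (θ s j - θ s i)) with hf
      have hanti : ∀ i j, f j i = - f i j := by
        intro i j
        have h1 : Real.sin (θ s j - θ s i) = -Real.sin (θ s i - θ s j) := by
          rw [← Real.sin_neg, neg_sub]
        simp only [hf, hsym j i, h1]
        ring
      have h2 : ∑ i, ∑ j, f i j = ∑ j, ∑ i, f i j := Finset.sum_comm
      have h3 : ∑ j, ∑ i, f i j = - ∑ i, ∑ j, f i j := by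
        rw [← Finset.sum_neg_distrib]
        exact Finset.sum_congr rfl fun i _ => by
          rw [← Finset.sum_neg_distrib]
          exact Finset.sum_congr rfl fun j _ => hanti i j
      linarith [h2, h3]
    rw [hsplit, hzero, add_zero]
    have : 0 ≤ ∑ i, γ i * (w i)^2 :=
      Finset.sum_nonneg fun i _ => mul_nonneg (hγ i).le (sq_nonneg _)
    linarith
  have hmono : MonotoneOn F (Set.Ici (0:ℝ)) := by
    refine monotoneOn_of_deriv_nonneg (convex_Ici 0) ?_ ?_ ?_
    · exact fun s _ => ((hder s).differentiableAt.continuousAt).continuousWithinAt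
    · exact fun s _ => ((hder s).differentiableAt).differentiableWithinAt
    · intro s hs
      rw [interior_Ici] at hs
      rw [(hder s).deriv]
      exact hkey s (le_of_lt hs)
  exact hmono (Set.self_mem_Ici) ht ht

set_option maxHeartbeats 1000000 in
/-- Uniform-in-time positive lower bounds on the global and
local order parameters for the inertial Kuramoto model on a nearly all-to-all
symmetric network, under the initial energy condition `J > 3δN + δ²/ā`:
`R_p(t)² ≥ (J − δN)/(ā·N²)` and `R_{p,i}(t)² ≥ ā·(J − 3δN) − δ² > 0`. -/
theorem kuramoto_heterogeneous_order_parameter_lower_bound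
    (N : ℕ) (hN : 1 ≤ N)
    (m γ : Fin N → ℝ) (hm : ∀ i, 0 < m i) (hγ : ∀ i, 0 < γ i)
    (a : Fin N → Fin N → ℝ)
    (hsym : ∀ i j, a i j = a j i) (hnn : ∀ i j, 0 ≤ a i j)
    (θ : ℝ → Fin N → ℝ)
    (hreg : ∀ i, ContDiff ℝ 2 (fun t => θ t i))
    (hode : ∀ t ≥ (0:ℝ), ∀ i,
      m i * deriv (deriv (fun s => θ s i)) t
        = -γ i * deriv (fun s => θ s i) t
          + ∑ j, a i j * Real.sin (θ t j - θ t i))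
    (abar δ : ℝ) (habar : 0 < abar) (hδ : 0 ≤ δ)
    (hnet : ∀ i, ∑ j, |a i j - abar| ≤ δ)
    (J : ℝ)
    (hJ : J = ∑ i, ∑ j, a i j * Real.cos (θ 0 i - θ 0 j)
      - ∑ i, m i * (deriv (fun s => θ s i) 0) ^ 2)
    (hinit : J > 3 * δ * N + δ ^ 2 / abar)
    (Rp : ℝ → ℝ)
    (hRp : Rp = fun t =>
      ‖(N : ℂ)⁻¹ * ∑ j, Complex.exp (Complex.I * (θ t j : ℂ))‖)
    (Rpi : Fin N → ℝ → ℝ)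
    (hRpi : Rpi = fun i t =>
      ‖∑ j, (a i j : ℂ) * Complex.exp (Complex.I * (θ t j : ℂ))‖) :
    ∀ t ≥ (0:ℝ), ∀ i,
      (J - δ * N) / (abar * N ^ 2) ≤ (Rp t) ^ 2 ∧
      abar * (J - 3 * δ * N) - δ ^ 2 ≤ (Rpi i t) ^ 2 ∧
      0 < abar * (J - 3 * δ * N) - δ ^ 2 := by
  intro t ht i
  have hNpos : (0:ℝ) < N := by exact_mod_cast hN
  -- energy bound
  have hmono := kuramoto_aux_energy_mono m γ hγ a hsym θ hreg hode t ht
  set C : ℝ := ∑ i, ∑ j, a i j * Real.cos (θ t i - θ t j) with hCdef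
  have hK : 0 ≤ ∑ i, m i * (deriv (fun s => θ s i) t)^2 :=
    Finset.sum_nonneg fun i _ => mul_nonneg (hm i).le (sq_nonneg _)
  have hC : J ≤ C := by rw [hJ]; linarith
  -- order parameter identities
  set z : ℂ := ∑ j, Complex.exp (Complex.I * (θ t j : ℂ)) with hzdef
  set S : ℝ := ∑ j, ∑ k, Real.cos (θ t j - θ t k) with hSdef
  have hS : ‖z‖ ^ 2 = S := kuramoto_aux_abs_sq_sum_exp (fun j => θ t j)
  have hSnn : 0 ≤ S := by rw [← hS]; positivity
  -- bound |C - abar * S| ≤ δ * N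
  have hCS : |C - abar * S| ≤ δ * N := by
    have h1 : C - abar * S = ∑ i, ∑ j, (a i j - abar) * Real.cos (θ t i - θ t j) := by
      rw [hCdef, hSdef, Finset.mul_sum, ← Finset.sum_sub_distrib]
      refine Finset.sum_congr rfl fun i _ => ?_
      rw [Finset.mul_sum, ← Finset.sum_sub_distrib]
      exact Finset.sum_congr rfl fun j _ => by ring
    rw [h1]
    calc |∑ i, ∑ j, (a i j - abar) * Real.cos (θ t i - θ t j)|
        ≤ ∑ i, |∑ j, (a i j - abar) * Real.cos (θ t i - θ t j)| :=
          Finset.abs_sum_le_sum_abs _ _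
      _ ≤ ∑ i : Fin N, δ := by
          refine Finset.sum_le_sum fun i _ => ?_
          calc |∑ j, (a i j - abar) * Real.cos (θ t i - θ t j)|
              ≤ ∑ j, |(a i j - abar) * Real.cos (θ t i - θ t j)| :=
                Finset.abs_sum_le_sum_abs _ _
            _ ≤ ∑ j, |a i j - abar| := by
                refine Finset.sum_le_sum fun j _ => ?_
                rw [abs_mul]
                calc |a i j - abar| * |Real.cos (θ t i - θ t j)|
                    ≤ |a i j - abar| * 1 :=
                      mul_le_mul_of_nonneg_left (Real.abs_cos_le_one _) (abs_nonneg _)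
                  _ = |a i j - abar| := mul_one _
            _ ≤ δ := hnet i
      _ = δ * N := by rw [Finset.sum_const, Finset.card_univ, Fintype.card_fin,
            nsmul_eq_mul, mul_comm]
  have hS1 : J - δ * N ≤ abar * S := by
    have := abs_le.mp hCS
    linarith [this.1, this.2]
  -- global order parameter
  have hRp2 : (Rp t) ^ 2 = S / (N:ℝ) ^ 2 := by
    rw [hRp]
    simp only
    rw [norm_mul, norm_inv, Complex.norm_natCast]
    rw [mul_pow, ← hzdef, hS, inv_pow]
    rw [inv_mul_eq_div]
  have goal1 : (J - δ * N) / (abar * N ^ 2) ≤ (Rp t) ^ 2 := by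
    rw [hRp2, div_le_div_iff₀ (by positivity) (by positivity)]
    nlinarith [hS1, hSnn]
  -- local order parameter
  have hzN : ‖z‖ ≤ N := by
    rw [hzdef]
    calc ‖∑ j, Complex.exp (Complex.I * (θ t j : ℂ))‖
        ≤ ∑ j, ‖Complex.exp (Complex.I * (θ t j : ℂ))‖ :=
          norm_sum_le _ _
      _ = ∑ j : Fin N, (1:ℝ) := by
          refine Finset.sum_congr rfl fun j _ => ?_
          rw [Complex.norm_exp]
          simp
      _ = N := by simp
  set x : ℝ := abar * ‖z‖ with hxdef
  have hxnn : 0 ≤ x := mul_nonneg habar.le (norm_nonneg _)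
  have hx2 : abar * (J - δ * N) ≤ x ^ 2 := by
    have : x ^ 2 = abar * (abar * S) := by rw [hxdef, mul_pow, hS]; ring
    rw [this]
    exact mul_le_mul_of_nonneg_left hS1 habar.le
  have hdd : δ ^ 2 ≤ abar * (J - δ * N) := by
    have h1 : δ ^ 2 / abar ≤ J - δ * N := by nlinarith [mul_nonneg hδ hNpos.le]
    calc δ ^ 2 = abar * (δ ^ 2 / abar) := by field_simp
      _ ≤ abar * (J - δ * N) := mul_le_mul_of_nonneg_left h1 habar.le
  have hδx : δ ≤ x := by nlinarith [hx2, hdd, hxnn, hδ]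
  have hxaN : x ≤ abar * N := mul_le_mul_of_nonneg_left hzN habar.le
  have hRpi_ge : x - δ ≤ Rpi i t := by
    rw [hRpi]
    simp only
    have hd2 : ‖(∑ j, (a i j:ℂ) * Complex.exp (Complex.I * (θ t j : ℂ)))
        - (abar:ℂ) * z‖ ≤ δ := by
      have he : (∑ j, (a i j:ℂ) * Complex.exp (Complex.I * (θ t j : ℂ))) - (abar:ℂ) * z
          = ∑ j, ((a i j - abar : ℝ):ℂ) * Complex.exp (Complex.I * (θ t j : ℂ)) := by
        rw [hzdef, Finset.mul_sum, ← Finset.sum_sub_distrib]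
        refine Finset.sum_congr rfl fun j _ => ?_
        push_cast
        ring
      rw [he]
      calc ‖∑ j, ((a i j - abar : ℝ):ℂ) * Complex.exp (Complex.I * (θ t j : ℂ))‖
          ≤ ∑ j, ‖((a i j - abar : ℝ):ℂ) * Complex.exp (Complex.I * (θ t j : ℂ))‖ :=
            norm_sum_le _ _
        _ = ∑ j, |a i j - abar| := by
            refine Finset.sum_congr rfl fun j _ => ?_
            rw [norm_mul, Complex.norm_real, Complex.norm_exp]
            simp
        _ ≤ δ := hnet i
    have htri : x ≤ ‖∑ j, (a i j:ℂ) * Complex.exp (Complex.I * (θ t j : ℂ))‖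
        + ‖(∑ j, (a i j:ℂ) * Complex.exp (Complex.I * (θ t j : ℂ))) - (abar:ℂ) * z‖ := by
      have : x = ‖(abar:ℂ) * z‖ := by
        rw [hxdef, norm_mul, Complex.norm_real, Real.norm_eq_abs, abs_of_pos habar]
      rw [this]
      set u : ℂ := ∑ j, (a i j:ℂ) * Complex.exp (Complex.I * (θ t j : ℂ)) with hu
      calc ‖(abar:ℂ) * z‖ = ‖u + ((abar:ℂ) * z - u)‖ := by
            congr 1; ring
        _ ≤ ‖u‖ + ‖(abar:ℂ) * z - u‖ := norm_add_le _ _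
        _ = ‖u‖ + ‖u - (abar:ℂ) * z‖ := by
            rw [norm_sub_rev]
    linarith
  have hRpinn : (0:ℝ) ≤ Rpi i t := by rw [hRpi]; exact norm_nonneg _
  have goal2 : abar * (J - 3 * δ * N) - δ ^ 2 ≤ (Rpi i t) ^ 2 := by
    have h1 : (x - δ) ^ 2 ≤ (Rpi i t) ^ 2 := by
      apply pow_le_pow_left₀ (by linarith) hRpi_ge
    nlinarith [hx2, hxaN, mul_le_mul_of_nonneg_left hxaN hδ]
  have goal3 : 0 < abar * (J - 3 * δ * N) - δ ^ 2 := by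
    have h1 : δ ^ 2 / abar < J - 3 * δ * N := by linarith
    have h2 : abar * (δ ^ 2 / abar) = δ ^ 2 := by field_simp
    have h3 := mul_lt_mul_of_pos_left h1 habar
    linarith
  exact ⟨goal1, goal2, goal3⟩
end

section
/- Let θ : [0,∞) → ℝ^N solve the inertial Kuramoto model on a symmetric network with heterogeneous inertia and friction, and suppose there exist ā > 0 and δ ≥ 0 such that Σ_{j=1}^N |a_{ij} − ā| ≤ δ for every i, and such that the initial data satisfy Σ_{i,j=1}^N a_{ij}·cos(θ_i(0) − θ_j(0)) > Σ_{i=1}^N m_i·ω_i(0)² + 3δN + δ²/ā. Then for each i, the oscillator phases align with their local average phases asymptotically: lim_{t→∞} (1/R_{p,i}(t))·Σ_{j=1}^N a_{ij}·sin(θ_j(t) − θ_i(t)) = 0; equivalently, sin(θ_i(t) − φ_{p,i}(t)) → 0 as t → ∞, where φ_{p,i}(t) is the local average phase defined by R_{p,i}(t)·e^{√−1·φ_{p,i}(t)} = Σ_{j=1}^N a_{ij}·e^{√−1·θ_j(t)}. -/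
set_option maxHeartbeats 1000000

open Filter

lemma lem_slope_lower (f f' : ℝ → ℝ) {x y C : ℝ} (hxy : x ≤ y)
    (hd : ∀ u ∈ Set.Icc x y, HasDerivAt f (f' u) u)
    (hC : ∀ u ∈ Set.Icc x y, C ≤ f' u) :
    C * (y - x) ≤ f y - f x := by
  have hconv : Convex ℝ (Set.Icc x y) := convex_Icc x y
  have hcont : ContinuousOn f (Set.Icc x y) := fun u hu =>
    ((hd u hu).continuousAt).continuousWithinAt
  have hdiff : DifferentiableOn ℝ f (interior (Set.Icc x y)) := fun u hu =>
    ((hd u (interior_subset hu)).differentiableAt).differentiableWithinAt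
  exact hconv.mul_sub_le_image_sub_of_le_deriv hcont hdiff
    (fun u hu => by rw [(hd u (interior_subset hu)).deriv]; exact hC u (interior_subset hu))
    x (Set.left_mem_Icc.2 hxy) y (Set.right_mem_Icc.2 hxy) hxy

lemma lem_slope_upper (f f' : ℝ → ℝ) {x y C : ℝ} (hxy : x ≤ y)
    (hd : ∀ u ∈ Set.Icc x y, HasDerivAt f (f' u) u)
    (hC : ∀ u ∈ Set.Icc x y, f' u ≤ C) :
    f y - f x ≤ C * (y - x) := by
  have h := lem_slope_lower (fun t => -f t) (fun t => -f' t) hxy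
    (fun u hu => (hd u hu).neg) (fun u hu => neg_le_neg (hC u hu))
  have h2 : -C * (y - x) = -(C * (y - x)) := by ring
  simp only [h2] at h
  linarith

lemma lem_lip_of_deriv_bound (f f' : ℝ → ℝ) (D : ℝ)
    (hd : ∀ u, 0 ≤ u → HasDerivAt f (f' u) u)
    (hb : ∀ u, 0 ≤ u → |f' u| ≤ D) :
    ∀ s t, 0 ≤ s → 0 ≤ t → |f t - f s| ≤ D * |t - s| := by
  have key : ∀ s t, 0 ≤ s → s ≤ t → |f t - f s| ≤ D * (t - s) := by
    intro s t hs hst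
    have hd' : ∀ u ∈ Set.Icc s t, HasDerivAt f (f' u) u := fun u hu => hd u (le_trans hs hu.1)
    have h1 := lem_slope_lower f f' hst hd'
      (fun u hu => neg_le_of_abs_le (by simpa using hb u (hs.trans hu.1)) |>.trans_eq rfl)
    have h2 := lem_slope_upper f f' hst hd'
      (fun u hu => le_of_abs_le (hb u (hs.trans hu.1)))
    have h3 : -D * (t - s) = -(D * (t - s)) := by ring
    rw [h3] at h1
    exact abs_le.2 ⟨by linarith, h2⟩
  intro s t hs ht
  rcases le_total s t with h | h
  · rw [show |t - s| = t - s from abs_of_nonneg (by linarith)]; exact key s t hs h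
  · rw [show |t - s| = s - t from by rw [abs_sub_comm]; exact abs_of_nonneg (by linarith),
      abs_sub_comm]
    exact key t s ht h
lemma lem_barbalat (f f' : ℝ → ℝ) (c L : ℝ) (hL : 0 < L)
    (hd : ∀ t, 0 ≤ t → HasDerivAt f (f' t) t)
    (hlip : ∀ s t, 0 ≤ s → 0 ≤ t → |f' t - f' s| ≤ L * |t - s|)
    (hf : Tendsto f atTop (nhds c)) :
    Tendsto f' atTop (nhds 0) := by
  rw [Metric.tendsto_atTop] at hf ⊢
  intro ε hε
  have hdpos : 0 < ε / (2 * L) := by positivity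
  set d := ε / (2 * L) with hd0
  have hLd : L * d = ε / 2 := by rw [hd0]; field_simp
  obtain ⟨T, hT⟩ := hf (ε * d / 8) (by positivity)
  refine ⟨max T 0, fun t ht => ?_⟩
  have ht0 : 0 ≤ t := le_trans (le_max_right T 0) ht
  have htT : T ≤ t := le_trans (le_max_left T 0) ht
  rw [Real.dist_0_eq_abs]
  by_contra hcon
  push_neg at hcon
  have hseg : ∀ u ∈ Set.Icc t (t + d), (0:ℝ) ≤ u := fun u hu => le_trans ht0 hu.1
  have hder : ∀ u ∈ Set.Icc t (t + d), HasDerivAt f (f' u) u := fun u hu => hd u (hseg u hu)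
  have hdist1 : dist (f t) c < ε * d / 8 := hT t htT
  have hdist2 : dist (f (t + d)) c < ε * d / 8 := hT (t + d) (by linarith)
  rw [Real.dist_eq] at hdist1 hdist2
  have hdiff : |f (t + d) - f t| ≤ ε * d / 4 := by
    have h1 := abs_sub_le (f (t+d)) c (f t)
    have h2 : |c - f t| = |f t - c| := abs_sub_comm _ _
    linarith
  have hLlip : ∀ u ∈ Set.Icc t (t + d), |f' u - f' t| ≤ ε / 2 := by
    intro u hu
    have h1 := hlip t u ht0 (hseg u hu)
    have habs : |u - t| ≤ d := by
      rw [abs_of_nonneg (by linarith [hu.1])]; linarith [hu.2]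
    calc |f' u - f' t| ≤ L * |u - t| := h1
      _ ≤ L * d := by nlinarith
      _ = ε / 2 := hLd
  have habsd := abs_le.mp hdiff
  rcases le_or_gt ε (f' t) with hpos | hrest
  · have hge : ∀ u ∈ Set.Icc t (t + d), ε / 2 ≤ f' u := by
      intro u hu
      have := abs_le.mp (hLlip u hu)
      linarith
    have hlow := lem_slope_lower f f' (by linarith : t ≤ t + d) hder hge
    nlinarith
  · have hneg : f' t ≤ -ε := by
      rcases abs_cases (f' t) with ⟨h1, h2⟩ | ⟨h1, h2⟩ <;> [linarith; linarith]
    have hle : ∀ u ∈ Set.Icc t (t + d), f' u ≤ -(ε / 2) := by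
      intro u hu
      have := abs_le.mp (hLlip u hu)
      linarith
    have hup := lem_slope_upper f f' (by linarith : t ≤ t + d) hder hle
    nlinarith
lemma lem_abs_exp (x : ℝ) : ‖Complex.exp (Complex.I * (x:ℂ))‖ = 1 := by
  rw [Complex.norm_exp]
  simp

lemma lem_normSq_sum_exp {N : ℕ} (x : Fin N → ℝ) :
    Complex.normSq (∑ j, Complex.exp (Complex.I * (x j : ℂ)))
      = ∑ j, ∑ k, Real.cos (x j - x k) := by
  have h1 : ((∑ j, Complex.exp (Complex.I * (x j : ℂ))) *
      (starRingEnd ℂ) (∑ k, Complex.exp (Complex.I * (x k : ℂ))))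
      = ∑ j, ∑ k, Complex.exp (((x j - x k : ℝ) : ℂ) * Complex.I) := by
    rw [map_sum, Finset.sum_mul_sum]
    refine Finset.sum_congr rfl fun j _ => Finset.sum_congr rfl fun k _ => ?_
    rw [← Complex.exp_conj, map_mul, Complex.conj_I, Complex.conj_ofReal, ← Complex.exp_add]
    congr 1
    push_cast
    ring
  have h2 := congrArg Complex.re (Complex.mul_conj (∑ j, Complex.exp (Complex.I * (x j : ℂ))))
  rw [h1] at h2
  simp only [Complex.re_sum, Complex.ofReal_re] at h2
  rw [← h2]
  refine Finset.sum_congr rfl fun j _ => Finset.sum_congr rfl fun k _ => ?_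
  exact Complex.exp_ofReal_mul_I_re _

/-- Asymptotic alignment of each oscillator with its local
average phase for the inertial Kuramoto model on a nearly all-to-all
symmetric network: under the initial condition
`Σ_{i,j} a_{ij}·cos(θ_i(0) − θ_j(0)) > Σ_i m_i·ω_i(0)² + 3δN + δ²/ā`,
one has `(1/R_{p,i}(t))·Σ_j a_{ij}·sin(θ_j(t) − θ_i(t)) → 0` as `t → ∞`,
i.e. `sin(θ_i(t) − φ_{p,i}(t)) → 0`. -/
theorem kuramoto_heterogeneous_phase_alignment
    (N : ℕ) (hN : 1 ≤ N)
    (m γ : Fin N → ℝ) (hm : ∀ i, 0 < m i) (hγ : ∀ i, 0 < γ i)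
    (a : Fin N → Fin N → ℝ)
    (hsym : ∀ i j, a i j = a j i) (hnn : ∀ i j, 0 ≤ a i j)
    (θ : ℝ → Fin N → ℝ)
    (hreg : ∀ i, ContDiff ℝ 2 (fun t => θ t i))
    (hode : ∀ t ≥ (0:ℝ), ∀ i,
      m i * deriv (deriv (fun s => θ s i)) t
        = -γ i * deriv (fun s => θ s i) t
          + ∑ j, a i j * Real.sin (θ t j - θ t i))
    (abar δ : ℝ) (habar : 0 < abar) (hδ : 0 ≤ δ)
    (hnet : ∀ i, ∑ j, |a i j - abar| ≤ δ)
    (hinit : ∑ i, ∑ j, a i j * Real.cos (θ 0 i - θ 0 j)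
      > ∑ i, m i * (deriv (fun s => θ s i) 0) ^ 2
        + 3 * δ * N + δ ^ 2 / abar)
    (Rpi : Fin N → ℝ → ℝ)
    (hRpi : Rpi = fun i t =>
      ‖∑ j, (a i j : ℂ) * Complex.exp (Complex.I * (θ t j : ℂ))‖) :
    ∀ i, Tendsto
      (fun t => (Rpi i t)⁻¹ * ∑ j, a i j * Real.sin (θ t j - θ t i))
      atTop (nhds 0) := by
  subst hRpi
  -- basic differentiability
  have hθdiff : ∀ i, Differentiable ℝ (fun s => θ s i) := fun i =>
    (hreg i).differentiable (by norm_num)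
  have hωdiff : ∀ i, Differentiable ℝ (deriv (fun s => θ s i)) := by
    intro i
    have h2 : ContDiff ℝ (1 + 1) (fun s => θ s i) := by
      have := hreg i
      norm_num at this ⊢
      exact this
    exact ((contDiff_succ_iff_deriv.mp h2).2.2).differentiable (by norm_num)
  have hθhas : ∀ i t, HasDerivAt (fun s => θ s i) (deriv (fun s => θ s i) t) t :=
    fun i t => (hθdiff i t).hasDerivAt
  have hωhas : ∀ i t, HasDerivAt (deriv (fun s => θ s i))
      (deriv (deriv (fun s => θ s i)) t) t :=
    fun i t => (hωdiff i t).hasDerivAt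
  -- the energy function
  set E : ℝ → ℝ := fun t => (∑ i, m i * (deriv (fun s => θ s i) t) ^ 2)
      + ∑ i, ∑ j, a i j * (1 - Real.cos (θ t i - θ t j)) with hE
  set E' : ℝ → ℝ := fun t =>
      (∑ i, m i * (2 * deriv (fun s => θ s i) t * deriv (deriv (fun s => θ s i)) t))
      + ∑ i, ∑ j, a i j * (Real.sin (θ t i - θ t j)
          * (deriv (fun s => θ s i) t - deriv (fun s => θ s j) t)) with hE'
  have hEhas : ∀ t, HasDerivAt E (E' t) t := by
    intro t
    rw [hE, hE']
    apply HasDerivAt.add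
    · apply HasDerivAt.fun_sum
      intro i _
      have h := ((hωhas i t).pow 2).const_mul (m i)
      refine h.congr_deriv ?_
      push_cast
      ring
    · apply HasDerivAt.fun_sum
      intro i _
      apply HasDerivAt.fun_sum
      intro j _
      have hsub : HasDerivAt (fun u => θ u i - θ u j)
          (deriv (fun s => θ s i) t - deriv (fun s => θ s j) t) t :=
        (hθhas i t).sub (hθhas j t)
      have h := ((hasDerivAt_const t (1:ℝ)).sub hsub.cos).const_mul (a i j)
      refine h.congr_deriv ?_
      ring
  -- the derivative along solutions
  have hEode : ∀ t, 0 ≤ t → E' t = -2 * ∑ i, γ i * (deriv (fun s => θ s i) t) ^ 2 := by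
    intro t ht
    rw [hE']
    have hterm : ∀ i, m i * (2 * deriv (fun s => θ s i) t * deriv (deriv (fun s => θ s i)) t)
        = -(2 * (γ i * (deriv (fun s => θ s i) t) ^ 2))
          + ∑ j, 2 * (a i j * (Real.sin (θ t j - θ t i) * deriv (fun s => θ s i) t)) := by
      intro i
      have h := hode t ht i
      calc m i * (2 * deriv (fun s => θ s i) t * deriv (deriv (fun s => θ s i)) t)
          = 2 * deriv (fun s => θ s i) t * (m i * deriv (deriv (fun s => θ s i)) t) := by ring
        _ = 2 * deriv (fun s => θ s i) t * (-γ i * deriv (fun s => θ s i) t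
              + ∑ j, a i j * Real.sin (θ t j - θ t i)) := by rw [h]
        _ = -(2 * (γ i * (deriv (fun s => θ s i) t) ^ 2))
              + ∑ j, 2 * (a i j * (Real.sin (θ t j - θ t i) * deriv (fun s => θ s i) t)) := by
            rw [mul_add, Finset.mul_sum]
            congr 1
            · ring
            · exact Finset.sum_congr rfl fun j _ => by ring
    have hswap : ∑ i, ∑ j, a i j * (Real.sin (θ t i - θ t j)
          * (deriv (fun s => θ s i) t - deriv (fun s => θ s j) t))
        = -∑ i, ∑ j, 2 * (a i j * (Real.sin (θ t j - θ t i) * deriv (fun s => θ s i) t)) := by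
      have hQ : ∑ i, ∑ j, a i j * (Real.sin (θ t j - θ t i) * deriv (fun s => θ s j) t)
          = -∑ i, ∑ j, a i j * (Real.sin (θ t j - θ t i) * deriv (fun s => θ s i) t) := by
        rw [Finset.sum_comm, ← Finset.sum_neg_distrib]
        refine Finset.sum_congr rfl fun x _ => ?_
        rw [← Finset.sum_neg_distrib]
        refine Finset.sum_congr rfl fun y _ => ?_
        rw [hsym y x]
        have hs : Real.sin (θ t x - θ t y) = -Real.sin (θ t y - θ t x) := by
          rw [← neg_sub (θ t y) (θ t x), Real.sin_neg]
        rw [hs]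
        ring
      have hsplit : ∀ i j, a i j * (Real.sin (θ t i - θ t j)
            * (deriv (fun s => θ s i) t - deriv (fun s => θ s j) t))
          = -(a i j * (Real.sin (θ t j - θ t i) * deriv (fun s => θ s i) t))
            + a i j * (Real.sin (θ t j - θ t i) * deriv (fun s => θ s j) t) := by
        intro i j
        have hs : Real.sin (θ t i - θ t j) = -Real.sin (θ t j - θ t i) := by
          rw [← neg_sub (θ t j) (θ t i), Real.sin_neg]
        rw [hs]
        ring
      calc ∑ i, ∑ j, a i j * (Real.sin (θ t i - θ t j)
            * (deriv (fun s => θ s i) t - deriv (fun s => θ s j) t))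
          = ∑ i, ∑ j, (-(a i j * (Real.sin (θ t j - θ t i) * deriv (fun s => θ s i) t))
              + a i j * (Real.sin (θ t j - θ t i) * deriv (fun s => θ s j) t)) :=
            Finset.sum_congr rfl fun i _ => Finset.sum_congr rfl fun j _ => hsplit i j
        _ = (∑ i, ∑ j, -(a i j * (Real.sin (θ t j - θ t i) * deriv (fun s => θ s i) t)))
              + ∑ i, ∑ j, a i j * (Real.sin (θ t j - θ t i) * deriv (fun s => θ s j) t) := by
            rw [← Finset.sum_add_distrib]
            exact Finset.sum_congr rfl fun i _ => Finset.sum_add_distrib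
        _ = -∑ i, ∑ j, 2 * (a i j * (Real.sin (θ t j - θ t i) * deriv (fun s => θ s i) t)) := by
            rw [hQ]
            simp only [Finset.sum_neg_distrib]
            have h4 : ∑ i, ∑ j, 2 * (a i j * (Real.sin (θ t j - θ t i) * deriv (fun s => θ s i) t))
                = 2 * ∑ i, ∑ j, a i j * (Real.sin (θ t j - θ t i) * deriv (fun s => θ s i) t) := by
              rw [Finset.mul_sum]
              exact Finset.sum_congr rfl fun i _ => (Finset.mul_sum _ _ _).symm
            rw [h4]
            ring
    beta_reduce
    rw [hswap, Finset.sum_congr rfl fun i _ => hterm i, Finset.sum_add_distrib]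
    have h3 : ∑ i, -(2 * (γ i * (deriv (fun s => θ s i) t) ^ 2))
        = -2 * ∑ i, γ i * (deriv (fun s => θ s i) t) ^ 2 := by
      rw [Finset.mul_sum]
      exact Finset.sum_congr rfl fun i _ => by ring
    rw [h3]
    ring
  have hEhas0 : ∀ t, 0 ≤ t → HasDerivAt E (-2 * ∑ i, γ i * (deriv (fun s => θ s i) t) ^ 2) t :=
    fun t ht => hEode t ht ▸ hEhas t
  have hcosnn : ∀ t, 0 ≤ ∑ i, ∑ j, a i j * (1 - Real.cos (θ t i - θ t j)) := fun t =>
    Finset.sum_nonneg fun i _ => Finset.sum_nonneg fun j _ => mul_nonneg (hnn i j)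
      (by have := Real.cos_le_one (θ t i - θ t j); linarith)
  have hEanti : AntitoneOn E (Set.Ici (0:ℝ)) := by
    apply antitoneOn_of_deriv_nonpos (convex_Ici 0)
    · exact fun u _ => (hEhas u).differentiableAt.continuousAt.continuousWithinAt
    · exact fun u _ => (hEhas u).differentiableAt.differentiableWithinAt
    · intro u hu
      rw [interior_Ici] at hu
      rw [(hEhas u).deriv, hEode u (le_of_lt hu)]
      have h1 : 0 ≤ ∑ i, γ i * (deriv (fun s => θ s i) u) ^ 2 :=
        Finset.sum_nonneg fun i _ => mul_nonneg (hγ i).le (sq_nonneg _)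
      linarith
  have hEnn : ∀ t, 0 ≤ E t := by
    intro t
    rw [hE]
    exact add_nonneg (Finset.sum_nonneg fun i _ => mul_nonneg (hm i).le (sq_nonneg _)) (hcosnn t)
  have hEbound : ∀ t, 0 ≤ t → E t ≤ E 0 :=
    fun t ht => hEanti Set.self_mem_Ici (Set.mem_Ici.2 ht) ht
  set B : Fin N → ℝ := fun i => Real.sqrt (E 0 / m i) with hB
  have hBnn : ∀ i, 0 ≤ B i := fun i => Real.sqrt_nonneg _
  have hmw : ∀ i t, m i * (deriv (fun s => θ s i) t) ^ 2 ≤ E t := by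
    intro i t
    have h2 : m i * (deriv (fun s => θ s i) t) ^ 2
        ≤ ∑ k, m k * (deriv (fun s => θ s k) t) ^ 2 :=
      Finset.single_le_sum (f := fun k => m k * (deriv (fun s => θ s k) t) ^ 2)
        (fun k _ => mul_nonneg (hm k).le (sq_nonneg _)) (Finset.mem_univ i)
    rw [hE]
    beta_reduce
    have := hcosnn t
    linarith
  have hdB : ∀ i t, 0 ≤ t → |deriv (fun s => θ s i) t| ≤ B i := by
    intro i t ht
    have h4 : (deriv (fun s => θ s i) t) ^ 2 ≤ E 0 / m i := by
      rw [le_div_iff₀ (hm i)]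
      have := hmw i t
      have := hEbound t ht
      nlinarith
    calc |deriv (fun s => θ s i) t| = Real.sqrt ((deriv (fun s => θ s i) t) ^ 2) :=
        (Real.sqrt_sq_eq_abs _).symm
      _ ≤ B i := by rw [hB]; exact Real.sqrt_le_sqrt h4
  set A : Fin N → ℝ := fun i => ∑ j, a i j with hA
  have hAnn : ∀ i, 0 ≤ A i := fun i => Finset.sum_nonneg fun j _ => hnn i j
  set S : Fin N → ℝ → ℝ := fun i t => ∑ j, a i j * Real.sin (θ t j - θ t i) with hS
  have hSbound : ∀ i t, |S i t| ≤ A i := by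
    intro i t
    rw [hS, hA]
    calc |∑ j, a i j * Real.sin (θ t j - θ t i)| ≤ ∑ j, |a i j * Real.sin (θ t j - θ t i)| :=
        Finset.abs_sum_le_sum_abs _ _
      _ ≤ ∑ j, a i j := Finset.sum_le_sum fun j _ => by
          rw [abs_mul, abs_of_nonneg (hnn i j)]
          exact mul_le_of_le_one_right (hnn i j) (Real.abs_sin_le_one _)
  set D2 : Fin N → ℝ := fun i => (γ i * B i + A i) / m i with hD2
  have hD2nn : ∀ i, 0 ≤ D2 i := fun i => by
    rw [hD2]
    exact div_nonneg (add_nonneg (mul_nonneg (hγ i).le (hBnn i)) (hAnn i)) (hm i).le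
  have hd2B : ∀ i t, 0 ≤ t → |deriv (deriv (fun s => θ s i)) t| ≤ D2 i := by
    intro i t ht
    have h := hode t ht i
    have h6 : |m i * deriv (deriv (fun s => θ s i)) t| ≤ γ i * B i + A i := by
      rw [h]
      calc |-γ i * deriv (fun s => θ s i) t + ∑ j, a i j * Real.sin (θ t j - θ t i)|
          ≤ |(-γ i) * deriv (fun s => θ s i) t| + |∑ j, a i j * Real.sin (θ t j - θ t i)| :=
            abs_add_le _ _
        _ ≤ γ i * B i + A i := by
            apply add_le_add
            · rw [abs_mul, abs_neg, abs_of_pos (hγ i)]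
              exact mul_le_mul_of_nonneg_left (hdB i t ht) (hγ i).le
            · have := hSbound i t
              rw [hS] at this
              exact this
    have h5 : m i * |deriv (deriv (fun s => θ s i)) t| = |m i * deriv (deriv (fun s => θ s i)) t| := by
      rw [abs_mul, abs_of_pos (hm i)]
    rw [hD2, le_div_iff₀ (hm i)]
    calc |deriv (deriv (fun s => θ s i)) t| * m i = m i * |deriv (deriv (fun s => θ s i)) t| :=
        mul_comm _ _
      _ = |m i * deriv (deriv (fun s => θ s i)) t| := h5
      _ ≤ γ i * B i + A i := h6
  have hlipd : ∀ i, ∀ s t, 0 ≤ s → 0 ≤ t →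
      |deriv (fun s' => θ s' i) t - deriv (fun s' => θ s' i) s| ≤ D2 i * |t - s| :=
    fun i => lem_lip_of_deriv_bound _ _ (D2 i) (fun u _ => hωhas i u) (hd2B i)
  set LS : Fin N → ℝ := fun i => ∑ j, a i j * (B j + B i) with hLS
  have hLSnn : ∀ i, 0 ≤ LS i := fun i => by
    rw [hLS]
    exact Finset.sum_nonneg fun j _ =>
      mul_nonneg (hnn i j) (add_nonneg (hBnn j) (hBnn i))
  have hShas : ∀ i t, HasDerivAt (S i)
      (∑ j, a i j * (Real.cos (θ t j - θ t i)
        * (deriv (fun s => θ s j) t - deriv (fun s => θ s i) t))) t := by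
    intro i t
    rw [hS]
    apply HasDerivAt.fun_sum
    intro j _
    exact (((hθhas j t).sub (hθhas i t)).sin).const_mul (a i j)
  have hSlip : ∀ i, ∀ s t, 0 ≤ s → 0 ≤ t → |S i t - S i s| ≤ LS i * |t - s| := by
    intro i
    apply lem_lip_of_deriv_bound (S i) _ (LS i) (fun u _ => hShas i u)
    intro u hu
    rw [hLS]
    calc |∑ j, a i j * (Real.cos (θ u j - θ u i)
          * (deriv (fun s => θ s j) u - deriv (fun s => θ s i) u))|
        ≤ ∑ j, |a i j * (Real.cos (θ u j - θ u i)
          * (deriv (fun s => θ s j) u - deriv (fun s => θ s i) u))| :=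
          Finset.abs_sum_le_sum_abs _ _
      _ ≤ ∑ j, a i j * (B j + B i) := by
          apply Finset.sum_le_sum
          intro j _
          rw [abs_mul, abs_of_nonneg (hnn i j)]
          apply mul_le_mul_of_nonneg_left _ (hnn i j)
          rw [abs_mul]
          calc |Real.cos (θ u j - θ u i)|
                * |deriv (fun s => θ s j) u - deriv (fun s => θ s i) u|
              ≤ 1 * |deriv (fun s => θ s j) u - deriv (fun s => θ s i) u| :=
                mul_le_mul_of_nonneg_right (Real.abs_cos_le_one _) (abs_nonneg _)
            _ = |deriv (fun s => θ s j) u - deriv (fun s => θ s i) u| := one_mul _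
            _ ≤ |deriv (fun s => θ s j) u| + |deriv (fun s => θ s i) u| := abs_sub _ _
            _ ≤ B j + B i := add_le_add (hdB j u hu) (hdB i u hu)
  -- convergence of the energy
  obtain ⟨cE, hEtend⟩ : ∃ c, Tendsto E atTop (nhds c) := by
    set E2 : ℝ → ℝ := fun t => E (max t 0) with hE2
    have hanti2 : Antitone E2 := by
      intro s t hst
      rw [hE2]
      exact hEanti (Set.mem_Ici.2 (le_max_right s 0)) (Set.mem_Ici.2 (le_max_right t 0))
        (max_le_max hst le_rfl)
    have hbdd : BddBelow (Set.range E2) := ⟨0, by rintro y ⟨t, rfl⟩; exact hEnn _⟩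
    refine ⟨_, (tendsto_atTop_ciInf hanti2 hbdd).congr' ?_⟩
    filter_upwards [eventually_ge_atTop (0:ℝ)] with t ht
    rw [hE2]
    simp [max_eq_left ht]
  -- G = dE/dt tends to 0 by Barbalat
  set G : ℝ → ℝ := fun t => -2 * ∑ i, γ i * (deriv (fun s => θ s i) t) ^ 2 with hG
  set G' : ℝ → ℝ := fun t =>
      -2 * ∑ i, γ i * (2 * deriv (fun s => θ s i) t * deriv (deriv (fun s => θ s i)) t) with hG'
  have hGhas : ∀ t, HasDerivAt G (G' t) t := by
    intro t
    rw [hG, hG']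
    apply HasDerivAt.const_mul
    apply HasDerivAt.fun_sum
    intro i _
    have h := ((hωhas i t).pow 2).const_mul (γ i)
    refine h.congr_deriv ?_
    push_cast
    ring
  set LG : ℝ := 2 * ∑ i, γ i * (2 * B i * D2 i) with hLG
  have hLGnn : 0 ≤ LG := by
    rw [hLG]
    have : 0 ≤ ∑ i, γ i * (2 * B i * D2 i) :=
      Finset.sum_nonneg fun i _ => mul_nonneg (hγ i).le
        (mul_nonneg (mul_nonneg (by norm_num) (hBnn i)) (hD2nn i))
    linarith
  have hG'b : ∀ u, 0 ≤ u → |G' u| ≤ LG := by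
    intro u hu
    rw [hG', hLG]
    beta_reduce
    rw [abs_mul]
    have h1 : |(-2 : ℝ)| = 2 := by norm_num
    rw [h1]
    apply mul_le_mul_of_nonneg_left _ (by norm_num : (0:ℝ) ≤ 2)
    calc |∑ i, γ i * (2 * deriv (fun s => θ s i) u * deriv (deriv (fun s => θ s i)) u)|
        ≤ ∑ i, |γ i * (2 * deriv (fun s => θ s i) u * deriv (deriv (fun s => θ s i)) u)| :=
          Finset.abs_sum_le_sum_abs _ _
      _ ≤ ∑ i, γ i * (2 * B i * D2 i) := by
          apply Finset.sum_le_sum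
          intro i _
          rw [abs_mul, abs_of_pos (hγ i)]
          apply mul_le_mul_of_nonneg_left _ (hγ i).le
          rw [abs_mul, abs_mul]
          have h2 : |(2:ℝ)| = 2 := by norm_num
          rw [h2]
          have hb1 := hdB i u hu
          have hb2 := hd2B i u hu
          have := abs_nonneg (deriv (fun s => θ s i) u)
          have := abs_nonneg (deriv (deriv (fun s => θ s i)) u)
          nlinarith [hBnn i, hD2nn i]
  have hGlip := lem_lip_of_deriv_bound G G' LG (fun u _ => hGhas u) hG'b
  have hGto0 : Tendsto G atTop (nhds 0) := by
    apply lem_barbalat E G cE (LG + 1) (by linarith)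
    · intro t ht
      rw [hG]
      exact hEhas0 t ht
    · intro s t hs ht
      calc |G t - G s| ≤ LG * |t - s| := hGlip s t hs ht
        _ ≤ (LG + 1) * |t - s| := by nlinarith [abs_nonneg (t - s)]
    · exact hEtend
  -- each frequency tends to 0
  have hdto0 : ∀ i, Tendsto (fun t => deriv (fun s => θ s i) t) atTop (nhds 0) := by
    intro i
    have hsum : Tendsto (fun t => ∑ k, γ k * (deriv (fun s => θ s k) t) ^ 2) atTop (nhds 0) := by
      have h := hGto0.const_mul (-1/2 : ℝ)
      rw [mul_zero] at h
      apply h.congr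
      intro t
      ring
    have hsq : Tendsto (fun t => (deriv (fun s => θ s i) t) ^ 2) atTop (nhds 0) := by
      have h1 : Tendsto (fun t => γ i * (deriv (fun s => θ s i) t) ^ 2) atTop (nhds 0) := by
        apply squeeze_zero_norm _ hsum
        intro t
        rw [Real.norm_eq_abs, abs_of_nonneg (mul_nonneg (hγ i).le (sq_nonneg _))]
        exact Finset.single_le_sum (f := fun k => γ k * (deriv (fun s => θ s k) t) ^ 2)
          (fun k _ => mul_nonneg (hγ k).le (sq_nonneg _)) (Finset.mem_univ i)
      have h2 := h1.const_mul (γ i)⁻¹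
      rw [mul_zero] at h2
      apply h2.congr
      intro t
      field_simp [(hγ i).ne']
    have habs : Tendsto (fun t => |deriv (fun s => θ s i) t|) atTop (nhds 0) := by
      have h := (Real.continuous_sqrt.tendsto 0).comp hsq
      rw [Real.sqrt_zero] at h
      apply h.congr
      intro t
      simp [Function.comp, Real.sqrt_sq_eq_abs]
    exact squeeze_zero_norm (fun t => le_of_eq (Real.norm_eq_abs _)) habs
  -- the accelerations tend to 0
  have hd2to0 : ∀ i, Tendsto (fun t => deriv (deriv (fun s => θ s i)) t) atTop (nhds 0) := by
    intro i
    apply lem_barbalat (deriv (fun s => θ s i)) _ 0 ((γ i * D2 i + LS i) / m i + 1) _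
      (fun t _ => hωhas i t) _ (hdto0 i)
    · have : 0 ≤ (γ i * D2 i + LS i) / m i :=
        div_nonneg (add_nonneg (mul_nonneg (hγ i).le (hD2nn i)) (hLSnn i)) (hm i).le
      linarith
    · intro s t hs ht
      have h1 := hode t ht i
      have h2 := hode s hs i
      have hSts := hSlip i s t hs ht
      have hdts := hlipd i s t hs ht
      rw [hS] at hSts
      beta_reduce at hSts
      have h3 : m i * (deriv (deriv (fun s => θ s i)) t - deriv (deriv (fun s => θ s i)) s)
          = -γ i * (deriv (fun s' => θ s' i) t - deriv (fun s' => θ s' i) s)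
            + ((∑ j, a i j * Real.sin (θ t j - θ t i)) - ∑ j, a i j * Real.sin (θ s j - θ s i)) := by
        have e1 : m i * (deriv (deriv (fun s => θ s i)) t - deriv (deriv (fun s => θ s i)) s)
            = m i * deriv (deriv (fun s => θ s i)) t - m i * deriv (deriv (fun s => θ s i)) s := by
          ring
        rw [e1, h1, h2]
        ring
      have h4 : m i * |deriv (deriv (fun s => θ s i)) t - deriv (deriv (fun s => θ s i)) s|
          ≤ γ i * (D2 i * |t - s|) + LS i * |t - s| := by
        rw [← abs_of_pos (hm i), ← abs_mul, h3]
        calc |(-γ i * (deriv (fun s' => θ s' i) t - deriv (fun s' => θ s' i) s))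
              + ((∑ j, a i j * Real.sin (θ t j - θ t i)) - ∑ j, a i j * Real.sin (θ s j - θ s i))|
            ≤ |(-γ i) * (deriv (fun s' => θ s' i) t - deriv (fun s' => θ s' i) s)|
              + |(∑ j, a i j * Real.sin (θ t j - θ t i)) - ∑ j, a i j * Real.sin (θ s j - θ s i)| :=
              abs_add_le _ _
          _ ≤ γ i * (D2 i * |t - s|) + LS i * |t - s| := by
              apply add_le_add
              · rw [abs_mul, abs_neg, abs_of_pos (hγ i)]
                exact mul_le_mul_of_nonneg_left hdts (hγ i).le
              · exact hSts
      have hmpos := hm i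
      have habs := abs_nonneg (t - s)
      have habsd2 := abs_nonneg (deriv (deriv (fun s => θ s i)) t - deriv (deriv (fun s => θ s i)) s)
      rw [div_add' _ _ _ (ne_of_gt hmpos), div_mul_eq_mul_div, le_div_iff₀ hmpos]
      nlinarith
  -- the coupling terms tend to 0
  have hSto0 : ∀ i, Tendsto (S i) atTop (nhds 0) := by
    intro i
    have h := ((hd2to0 i).const_mul (m i)).add ((hdto0 i).const_mul (γ i))
    rw [mul_zero, mul_zero, add_zero] at h
    apply h.congr'
    filter_upwards [eventually_ge_atTop (0:ℝ)] with t ht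
    have h1 := hode t ht i
    rw [hS]
    beta_reduce
    linarith
  -- conclusion for each oscillator
  intro i
  beta_reduce
  set K : ℝ := (∑ i, ∑ j, a i j * Real.cos (θ 0 i - θ 0 j))
      - ∑ i, m i * (deriv (fun s => θ s i) 0) ^ 2 with hK
  have hKgt : 3 * δ * N + δ ^ 2 / abar < K := by rw [hK]; linarith [hinit]
  have hδN : 0 ≤ δ * N := mul_nonneg hδ (Nat.cast_nonneg N)
  have hexpand : ∀ u : ℝ, ∑ i, ∑ j, a i j * (1 - Real.cos (θ u i - θ u j))
      = (∑ i, ∑ j, a i j) - ∑ i, ∑ j, a i j * Real.cos (θ u i - θ u j) := by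
    intro u
    rw [← Finset.sum_sub_distrib]
    refine Finset.sum_congr rfl fun i _ => ?_
    rw [← Finset.sum_sub_distrib]
    exact Finset.sum_congr rfl fun j _ => by ring
  have hcost : ∀ t, 0 ≤ t → K ≤ ∑ i, ∑ j, a i j * Real.cos (θ t i - θ t j) := by
    intro t ht
    have h1 := hEbound t ht
    rw [hE] at h1
    beta_reduce at h1
    rw [hexpand t, hexpand 0] at h1
    have h2 : 0 ≤ ∑ i, m i * (deriv (fun s => θ s i) t) ^ 2 :=
      Finset.sum_nonneg fun i _ => mul_nonneg (hm i).le (sq_nonneg _)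
    rw [hK]
    linarith
  have hZlow : ∀ t, 0 ≤ t → (K - δ * N) / abar ≤ ∑ j, ∑ k, Real.cos (θ t j - θ t k) := by
    intro t ht
    have hb1 : |∑ j, ∑ k, (a j k - abar) * Real.cos (θ t j - θ t k)| ≤ δ * N := by
      calc |∑ j, ∑ k, (a j k - abar) * Real.cos (θ t j - θ t k)|
          ≤ ∑ j, |∑ k, (a j k - abar) * Real.cos (θ t j - θ t k)| :=
            Finset.abs_sum_le_sum_abs _ _
        _ ≤ ∑ _j : Fin N, δ := by
            apply Finset.sum_le_sum
            intro j _
            calc |∑ k, (a j k - abar) * Real.cos (θ t j - θ t k)|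
                ≤ ∑ k, |(a j k - abar) * Real.cos (θ t j - θ t k)| :=
                  Finset.abs_sum_le_sum_abs _ _
              _ ≤ ∑ k, |a j k - abar| := by
                  apply Finset.sum_le_sum
                  intro k _
                  rw [abs_mul]
                  exact mul_le_of_le_one_right (abs_nonneg _) (Real.abs_cos_le_one _)
              _ ≤ δ := hnet j
        _ = δ * N := by
            rw [Finset.sum_const, Finset.card_univ, Fintype.card_fin, nsmul_eq_mul, mul_comm]
    have hb2 : ∑ j, ∑ k, (a j k - abar) * Real.cos (θ t j - θ t k)
        = (∑ j, ∑ k, a j k * Real.cos (θ t j - θ t k))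
          - abar * ∑ j, ∑ k, Real.cos (θ t j - θ t k) := by
      rw [Finset.mul_sum, ← Finset.sum_sub_distrib]
      refine Finset.sum_congr rfl fun j _ => ?_
      rw [Finset.mul_sum, ← Finset.sum_sub_distrib]
      exact Finset.sum_congr rfl fun k _ => by ring
    have h3 := hcost t ht
    have h4 := (abs_le.mp hb1).2
    rw [div_le_iff₀ habar]
    have h5 := mul_comm (∑ j, ∑ k, Real.cos (θ t j - θ t k)) abar
    linarith
  have hKpos : 0 < (K - δ * N) / abar := by
    apply div_pos _ habar
    have : 0 ≤ δ ^ 2 / abar := div_nonneg (sq_nonneg δ) habar.le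
    linarith
  have hZabs : ∀ t, 0 ≤ t → Real.sqrt ((K - δ * N) / abar)
      ≤ ‖∑ j, Complex.exp (Complex.I * (θ t j : ℂ))‖ := by
    intro t ht
    rw [Complex.norm_def]
    apply Real.sqrt_le_sqrt
    rw [lem_normSq_sum_exp]
    exact hZlow t ht
  set c : ℝ := abar * Real.sqrt ((K - δ * N) / abar) - δ with hc
  have hcpos : 0 < c := by
    rw [hc]
    have hsq : abar ^ 2 * ((K - δ * N) / abar) = abar * (K - δ * N) := by
      field_simp
    have e1 : abar * (δ ^ 2 / abar) = δ ^ 2 := by field_simp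
    have h1 : δ ^ 2 < (abar * Real.sqrt ((K - δ * N) / abar)) ^ 2 := by
      rw [mul_pow, Real.sq_sqrt hKpos.le, hsq]
      nlinarith [mul_pos habar (show (0:ℝ) < K - δ * N - δ ^ 2 / abar - 2 * (δ * N) by linarith)]
    have h2 : δ < abar * Real.sqrt ((K - δ * N) / abar) :=
      lt_of_pow_lt_pow_left₀ 2 (mul_nonneg habar.le (Real.sqrt_nonneg _)) h1
    linarith
  have hRlow : ∀ t, 0 ≤ t →
      c ≤ ‖∑ j, (a i j : ℂ) * Complex.exp (Complex.I * (θ t j : ℂ))‖ := by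
    intro t ht
    have hdecomp : (∑ j, (a i j : ℂ) * Complex.exp (Complex.I * (θ t j : ℂ)))
        = (abar : ℂ) * (∑ j, Complex.exp (Complex.I * (θ t j : ℂ)))
          + ∑ j, ((a i j - abar : ℝ) : ℂ) * Complex.exp (Complex.I * (θ t j : ℂ)) := by
      rw [Finset.mul_sum, ← Finset.sum_add_distrib]
      refine Finset.sum_congr rfl fun j _ => ?_
      push_cast
      ring
    have hW : ‖∑ j, ((a i j - abar : ℝ) : ℂ)
        * Complex.exp (Complex.I * (θ t j : ℂ))‖ ≤ δ := by
      calc ‖∑ j, ((a i j - abar : ℝ) : ℂ) * Complex.exp (Complex.I * (θ t j : ℂ))‖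
          ≤ ∑ j, ‖((a i j - abar : ℝ) : ℂ) * Complex.exp (Complex.I * (θ t j : ℂ))‖ :=
            norm_sum_le _ _
        _ = ∑ j, |a i j - abar| := by
            refine Finset.sum_congr rfl fun j _ => ?_
            rw [norm_mul, Complex.norm_real, Real.norm_eq_abs, lem_abs_exp, mul_one]
        _ ≤ δ := hnet i
    have habarZ : ‖(abar : ℂ) * ∑ j, Complex.exp (Complex.I * (θ t j : ℂ))‖
        = abar * ‖∑ j, Complex.exp (Complex.I * (θ t j : ℂ))‖ := by
      rw [norm_mul, Complex.norm_real, Real.norm_eq_abs, abs_of_pos habar]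
    have h2 := norm_sub_norm_le ((abar : ℂ) * ∑ j, Complex.exp (Complex.I * (θ t j : ℂ)))
      (-∑ j, ((a i j - abar : ℝ) : ℂ) * Complex.exp (Complex.I * (θ t j : ℂ)))
    rw [norm_neg, sub_neg_eq_add] at h2
    rw [← hdecomp, habarZ] at h2
    have hZ := hZabs t ht
    have h6 := mul_le_mul_of_nonneg_left hZ habar.le
    rw [hc]
    linarith [h2, hW, h6]
  refine squeeze_zero_norm' (a := fun t => c⁻¹ * |S i t|) ?_ ?_
  · filter_upwards [eventually_ge_atTop (0:ℝ)] with t ht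
    have hR := hRlow t ht
    have hRnn : 0 ≤ ‖∑ j, (a i j : ℂ) * Complex.exp (Complex.I * (θ t j : ℂ))‖ :=
      norm_nonneg _
    show ‖(‖∑ j, (a i j : ℂ) * Complex.exp (Complex.I * (θ t j : ℂ))‖)⁻¹
        * ∑ j, a i j * Real.sin (θ t j - θ t i)‖ ≤ c⁻¹ * |S i t|
    rw [Real.norm_eq_abs, abs_mul, abs_inv, abs_of_nonneg hRnn]
    have h1 : (‖∑ j, (a i j : ℂ) * Complex.exp (Complex.I * (θ t j : ℂ))‖)⁻¹ ≤ c⁻¹ :=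
      inv_anti₀ hcpos hR
    have h2 : |∑ j, a i j * Real.sin (θ t j - θ t i)| = |S i t| := by rw [hS]
    rw [h2]
    exact mul_le_mul_of_nonneg_right h1 (abs_nonneg _)
  · have h := (hSto0 i).abs
    rw [abs_zero] at h
    have h2 := h.const_mul c⁻¹
    rw [mul_zero] at h2
    exact h2
end

section
/- Let θ : [0,∞) → ℝ^N solve the inertial Kuramoto model on a symmetric network with heterogeneous inertia and friction, and suppose there exist ā > 0 and δ ≥ 0 such that Σ_{j=1}^N |a_{ij} − ā| ≤ δ for every i, and such that the initial data satisfy J > 3δN + δ²/ā, where J := Σ_{i,j=1}^N a_{ij}·cos(θ_i(0) − θ_j(0)) − Σ_{i=1}^N m_i·ω_i(0)². Then each local order parameter is majorized by the global one: for all t ≥ 0 and all i, R_{p,i}(t) ≤ C_0·R_p(t), where C_0 := sqrt( ā²N² + ā·N²·(2āδN + δ²)/(J − δN) ). -/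
lemma absSq_sum_exp (N : ℕ) (x : Fin N → ℝ) :
    ‖∑ j, Complex.exp (Complex.I * (x j : ℂ))‖ ^ 2
      = ∑ i, ∑ j, Real.cos (x i - x j) := by
  have h : ∀ y : ℝ, Complex.exp (Complex.I * (y:ℂ)) = Complex.exp ((y:ℂ) * Complex.I) := by
    intro y; rw [mul_comm]
  set z := ∑ j, Complex.exp (Complex.I * (x j : ℂ)) with hz
  have h0 : ‖z‖ ^ 2 = (z * (starRingEnd ℂ) z).re := by
    rw [Complex.mul_conj, ← Complex.sq_norm]
    norm_cast
  rw [h0, hz, map_sum, Finset.sum_mul_sum, Complex.re_sum]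
  refine Finset.sum_congr rfl fun i _ => ?_
  rw [Complex.re_sum]
  refine Finset.sum_congr rfl fun j _ => ?_
  have hc : (starRingEnd ℂ) ((x j : ℂ) * Complex.I) = -((x j : ℂ) * Complex.I) := by
    simp [Complex.conj_I]
  rw [h, h, ← Complex.exp_conj, hc, ← Complex.exp_add]
  have : (x i : ℂ) * Complex.I + -((x j : ℂ) * Complex.I) = ((x i - x j : ℝ) : ℂ) * Complex.I := by
    push_cast; ring
  rw [this, Complex.exp_ofReal_mul_I_re]


lemma energy_mono (N : ℕ) (m γ : Fin N → ℝ) (hγ : ∀ i, 0 ≤ γ i)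
    (a : Fin N → Fin N → ℝ) (hsym : ∀ i j, a i j = a j i)
    (θ : ℝ → Fin N → ℝ) (hreg : ∀ i, ContDiff ℝ 2 (fun t => θ t i))
    (hode : ∀ t ≥ (0:ℝ), ∀ i, m i * deriv (deriv (fun s => θ s i)) t
      = -γ i * deriv (fun s => θ s i) t + ∑ j, a i j * Real.sin (θ t j - θ t i))
    (t : ℝ) (ht : 0 ≤ t) :
    (∑ i, ∑ j, a i j * Real.cos (θ 0 i - θ 0 j)
        - ∑ i, m i * (deriv (fun s => θ s i) 0) ^ 2)
      ≤ ∑ i, ∑ j, a i j * Real.cos (θ t i - θ t j)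
        - ∑ i, m i * (deriv (fun s => θ s i) t) ^ 2 := by
  set ω : Fin N → ℝ → ℝ := fun i => deriv (fun s => θ s i) with hω
  have hdθ : ∀ i, Differentiable ℝ (fun s => θ s i) := fun i =>
    (hreg i).differentiable (by norm_num)
  have hdω : ∀ i, Differentiable ℝ (ω i) := by
    intro i
    have h2 : ContDiff ℝ ((1:ℕ) + 1) (fun s => θ s i) := by exact_mod_cast hreg i
    exact (contDiff_succ_iff_deriv.mp h2).2.2.differentiable (by norm_num)
  set E : ℝ → ℝ := fun t => (∑ i, ∑ j, a i j * Real.cos (θ t i - θ t j))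
    - ∑ i, m i * (ω i t) ^ 2 with hEdef
  set D : ℝ → ℝ := fun t =>
    (∑ i, ∑ j, a i j * (-Real.sin (θ t i - θ t j) * (ω i t - ω j t)))
      - ∑ i, m i * ((2:ℕ) * ω i t ^ 1 * deriv (ω i) t) with hDdef
  have hE : ∀ s, HasDerivAt E (D s) s := by
    intro s
    apply HasDerivAt.sub
    · apply HasDerivAt.fun_sum
      intro i _
      apply HasDerivAt.fun_sum
      intro j _
      exact (((hdθ i s).hasDerivAt.sub (hdθ j s).hasDerivAt).cos).const_mul (a i j)
    · apply HasDerivAt.fun_sum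
      intro i _
      exact (((hdω i s).hasDerivAt).pow 2).const_mul (m i)
  have key : ∀ s ≥ (0:ℝ), D s = 2 * ∑ i, γ i * ω i s ^ 2 := by
    intro s hs
    have hT : ∀ i, ∑ j, a i j * Real.sin (θ s j - θ s i)
        = m i * deriv (ω i) s + γ i * ω i s := by
      intro i
      have h := hode s hs i
      rw [hω]
      linarith [h]
    have e2 : ∑ i, ∑ j, a i j * Real.sin (θ s j - θ s i) * ω j s
        = ∑ i, ∑ j, -(a i j * Real.sin (θ s j - θ s i) * ω i s) := by
      rw [Finset.sum_comm]
      refine Finset.sum_congr rfl fun i _ => Finset.sum_congr rfl fun j _ => ?_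
      have hs' : Real.sin (θ s i - θ s j) = -Real.sin (θ s j - θ s i) := by
        rw [← Real.sin_neg, neg_sub]
      rw [hsym j i, hs']
      ring
    have e1 : ∑ i, ∑ j, a i j * (-Real.sin (θ s i - θ s j) * (ω i s - ω j s))
        = ∑ i, ∑ j, (a i j * Real.sin (θ s j - θ s i) * ω i s
            - a i j * Real.sin (θ s j - θ s i) * ω j s) := by
      refine Finset.sum_congr rfl fun i _ => Finset.sum_congr rfl fun j _ => ?_
      have hs' : Real.sin (θ s i - θ s j) = -Real.sin (θ s j - θ s i) := by
        rw [← Real.sin_neg, neg_sub]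
      rw [hs']
      ring
    have e3 : ∑ i, ∑ j, a i j * (-Real.sin (θ s i - θ s j) * (ω i s - ω j s))
        = 2 * ∑ i, (∑ j, a i j * Real.sin (θ s j - θ s i)) * ω i s := by
      rw [e1]
      simp only [Finset.sum_sub_distrib]
      rw [e2]
      simp only [Finset.sum_neg_distrib]
      rw [sub_neg_eq_add, ← two_mul]
      congr 1
      refine Finset.sum_congr rfl fun i _ => ?_
      rw [Finset.sum_mul]
    rw [hDdef]
    simp only
    rw [e3]
    simp only [hT]
    rw [Finset.mul_sum, Finset.mul_sum, ← Finset.sum_sub_distrib]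
    refine Finset.sum_congr rfl fun i _ => ?_
    push_cast
    ring
  have hEdiff : Differentiable ℝ E := fun s => (hE s).differentiableAt
  have mono : MonotoneOn E (Set.Ici (0:ℝ)) := by
    apply monotoneOn_of_deriv_nonneg (convex_Ici 0) hEdiff.continuous.continuousOn
      hEdiff.differentiableOn
    intro x hx
    rw [interior_Ici] at hx
    rw [(hE x).deriv, key x (le_of_lt hx)]
    have : 0 ≤ ∑ i, γ i * ω i x ^ 2 :=
      Finset.sum_nonneg fun i _ => mul_nonneg (hγ i) (sq_nonneg _)
    linarith
  exact mono Set.self_mem_Ici ht ht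

/-- Each local order parameter is majorized by the global one
for the inertial Kuramoto model on a nearly all-to-all symmetric network:
under `J > 3δN + δ²/ā`, it holds `R_{p,i}(t) ≤ C₀·R_p(t)` for all `t ≥ 0`,
where `C₀ = sqrt(ā²N² + ā·N²·(2āδN + δ²)/(J − δN))`. -/
theorem kuramoto_heterogeneous_local_global_majorization
    (N : ℕ) (hN : 1 ≤ N)
    (m γ : Fin N → ℝ) (hm : ∀ i, 0 < m i) (hγ : ∀ i, 0 < γ i)
    (a : Fin N → Fin N → ℝ)
    (hsym : ∀ i j, a i j = a j i) (hnn : ∀ i j, 0 ≤ a i j)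
    (θ : ℝ → Fin N → ℝ)
    (hreg : ∀ i, ContDiff ℝ 2 (fun t => θ t i))
    (hode : ∀ t ≥ (0:ℝ), ∀ i,
      m i * deriv (deriv (fun s => θ s i)) t
        = -γ i * deriv (fun s => θ s i) t
          + ∑ j, a i j * Real.sin (θ t j - θ t i))
    (abar δ : ℝ) (habar : 0 < abar) (hδ : 0 ≤ δ)
    (hnet : ∀ i, ∑ j, |a i j - abar| ≤ δ)
    (J : ℝ)
    (hJ : J = ∑ i, ∑ j, a i j * Real.cos (θ 0 i - θ 0 j)
      - ∑ i, m i * (deriv (fun s => θ s i) 0) ^ 2)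
    (hinit : J > 3 * δ * N + δ ^ 2 / abar)
    (Rp : ℝ → ℝ)
    (hRp : Rp = fun t =>
      ‖(N : ℂ)⁻¹ * ∑ j, Complex.exp (Complex.I * (θ t j : ℂ))‖)
    (Rpi : Fin N → ℝ → ℝ)
    (hRpi : Rpi = fun i t =>
      ‖∑ j, (a i j : ℂ) * Complex.exp (Complex.I * (θ t j : ℂ))‖)
    (C₀ : ℝ)
    (hC₀ : C₀ = Real.sqrt (abar ^ 2 * N ^ 2
      + abar * N ^ 2 * (2 * abar * δ * N + δ ^ 2) / (J - δ * N))) :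
    ∀ t ≥ (0:ℝ), ∀ i, Rpi i t ≤ C₀ * Rp t := by
  have energy : ∀ t ≥ (0:ℝ),
      J ≤ ∑ i, ∑ j, a i j * Real.cos (θ t i - θ t j)
        - ∑ i, m i * (deriv (fun s => θ s i) t) ^ 2 := by
    intro t ht
    rw [hJ]
    exact energy_mono N m γ (fun i => (hγ i).le) a hsym θ hreg hode t ht
  intro t ht i
  have hNR : (0:ℝ) < N := by exact_mod_cast hN
  set z := ∑ j, Complex.exp (Complex.I * (θ t j : ℂ)) with hz
  have habs : ‖z‖ ^ 2 = ∑ i, ∑ j, Real.cos (θ t i - θ t j) :=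
    absSq_sum_exp N (θ t)
  set r := Rp t with hr
  have hzr : ‖z‖ = N * r := by
    rw [hr, hRp]
    simp only [norm_mul, norm_inv, Complex.norm_natCast]
    field_simp
    rfl
  have hr0 : 0 ≤ r := by rw [hr, hRp]; positivity
  have hz_le : ‖z‖ ≤ N := by
    calc ‖z‖ ≤ ∑ j, ‖Complex.exp (Complex.I * (θ t j : ℂ))‖ :=
          norm_sum_le _ _
      _ = N := by
          simp [Complex.norm_exp]
  have hr1 : r ≤ 1 := by
    rw [hzr] at hz_le; nlinarith
  -- lower bound on a·cos sum
  have hm0 : 0 ≤ ∑ i, m i * (deriv (fun s => θ s i) t) ^ 2 :=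
    Finset.sum_nonneg fun i _ => mul_nonneg (hm i).le (sq_nonneg _)
  have hcos_le : J ≤ ∑ i, ∑ j, a i j * Real.cos (θ t i - θ t j) := by
    have h := energy t ht
    linarith
  have hdev2 : |∑ i', ∑ j, (a i' j - abar) * Real.cos (θ t i' - θ t j)| ≤ δ * N := by
    calc |∑ i', ∑ j, (a i' j - abar) * Real.cos (θ t i' - θ t j)|
        ≤ ∑ i', |∑ j, (a i' j - abar) * Real.cos (θ t i' - θ t j)| :=
          Finset.abs_sum_le_sum_abs _ _
      _ ≤ ∑ i' : Fin N, δ := by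
          refine Finset.sum_le_sum fun i' _ => ?_
          calc |∑ j, (a i' j - abar) * Real.cos (θ t i' - θ t j)|
              ≤ ∑ j, |(a i' j - abar) * Real.cos (θ t i' - θ t j)| :=
                Finset.abs_sum_le_sum_abs _ _
            _ ≤ ∑ j, |a i' j - abar| := by
                refine Finset.sum_le_sum fun j _ => ?_
                rw [abs_mul]
                exact mul_le_of_le_one_right (abs_nonneg _) (Real.abs_cos_le_one _)
            _ ≤ δ := hnet i'
      _ = δ * N := by simp [mul_comm]
  have hsplitcos : ∑ i', ∑ j, a i' j * Real.cos (θ t i' - θ t j)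
      = abar * (∑ i', ∑ j, Real.cos (θ t i' - θ t j))
        + ∑ i', ∑ j, (a i' j - abar) * Real.cos (θ t i' - θ t j) := by
    rw [Finset.mul_sum, ← Finset.sum_add_distrib]
    refine Finset.sum_congr rfl fun i' _ => ?_
    rw [Finset.mul_sum, ← Finset.sum_add_distrib]
    refine Finset.sum_congr rfl fun j _ => ?_
    ring
  have hlow : J - δ * N ≤ abar * ((N:ℝ) * r) ^ 2 := by
    have h1 : abar * ((N:ℝ) * r) ^ 2 = abar * (∑ i', ∑ j, Real.cos (θ t i' - θ t j)) := by
      rw [← habs, hzr]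
    rw [h1]
    have h2 := (abs_le.mp hdev2).2
    have h3 := (abs_le.mp hdev2).1
    linarith [hcos_le, hsplitcos ▸ hcos_le, h3,
      (by linarith [hsplitcos] :
        abar * (∑ i', ∑ j, Real.cos (θ t i' - θ t j))
          = ∑ i', ∑ j, a i' j * Real.cos (θ t i' - θ t j)
            - ∑ i', ∑ j, (a i' j - abar) * Real.cos (θ t i' - θ t j))]
  -- positivity of J - δN
  have hP : 0 < J - δ * N := by
    have h1 : 0 ≤ δ * N := mul_nonneg hδ hNR.le
    have h2 : 0 ≤ δ ^ 2 / abar := div_nonneg (sq_nonneg _) habar.le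
    nlinarith
  -- bound Rpi
  have hdev : ‖∑ j, ((a i j - abar : ℝ) : ℂ)
      * Complex.exp (Complex.I * (θ t j : ℂ))‖ ≤ δ := by
    calc ‖∑ j, ((a i j - abar : ℝ) : ℂ) * Complex.exp (Complex.I * (θ t j : ℂ))‖
        ≤ ∑ j, ‖((a i j - abar : ℝ) : ℂ) * Complex.exp (Complex.I * (θ t j : ℂ))‖ :=
          norm_sum_le _ _
      _ = ∑ j, |a i j - abar| := by
          refine Finset.sum_congr rfl fun j _ => ?_
          rw [norm_mul, Complex.norm_real]
          simp [Complex.norm_exp]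
      _ ≤ δ := hnet i
  have hRpi_le : Rpi i t ≤ abar * ((N:ℝ) * r) + δ := by
    rw [hRpi]
    simp only
    have split : (∑ j, (a i j : ℂ) * Complex.exp (Complex.I * (θ t j : ℂ)))
        = (abar : ℂ) * z + ∑ j, ((a i j - abar : ℝ) : ℂ)
            * Complex.exp (Complex.I * (θ t j : ℂ)) := by
      rw [hz, Finset.mul_sum, ← Finset.sum_add_distrib]
      refine Finset.sum_congr rfl fun j _ => ?_
      push_cast
      ring
    rw [split]
    calc ‖(abar : ℂ) * z + ∑ j, ((a i j - abar : ℝ) : ℂ)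
            * Complex.exp (Complex.I * (θ t j : ℂ))‖
        ≤ ‖(abar : ℂ) * z‖ + ‖∑ j, ((a i j - abar : ℝ) : ℂ)
            * Complex.exp (Complex.I * (θ t j : ℂ))‖ := norm_add_le _ _
      _ ≤ abar * ((N:ℝ) * r) + δ := by
          rw [norm_mul, Complex.norm_real, Real.norm_eq_abs, abs_of_pos habar, hzr]
          linarith [hdev]
  -- final algebra
  have hC0nonneg : 0 ≤ C₀ := hC₀ ▸ Real.sqrt_nonneg _
  set X := abar * (N:ℝ) ^ 2 * (2 * abar * δ * (N:ℝ) + δ ^ 2) / (J - δ * (N:ℝ)) with hX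
  have hC2 : C₀ ^ 2 = abar ^ 2 * (N:ℝ) ^ 2 + X := by
    rw [hX]
    rw [hC₀, Real.sq_sqrt]
    have : 0 ≤ abar * (N:ℝ) ^ 2 * (2 * abar * δ * N + δ ^ 2) / (J - δ * N) := by
      apply div_nonneg _ hP.le
      have : 0 ≤ 2 * abar * δ * (N:ℝ) + δ ^ 2 := by positivity
      positivity
    positivity
  have hkey : (abar * ((N:ℝ) * r) + δ) ^ 2 ≤ (C₀ * r) ^ 2 := by
    rw [mul_pow, hC2]
    have h1 : J - δ * N ≤ abar * (N:ℝ) ^ 2 * r ^ 2 := by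
      have e : abar * ((N:ℝ) * r) ^ 2 = abar * (N:ℝ) ^ 2 * r ^ 2 := by ring
      linarith [hlow, e.symm.le, e.le]
    have hfac : 0 ≤ 2 * abar * δ * (N:ℝ) + δ ^ 2 := by positivity
    have h2 : 2 * abar * δ * (N:ℝ) + δ ^ 2 ≤ X * r ^ 2 := by
      rw [hX, div_mul_eq_mul_div, le_div_iff₀ hP]
      calc (2 * abar * δ * (N:ℝ) + δ ^ 2) * (J - δ * N)
          ≤ (2 * abar * δ * (N:ℝ) + δ ^ 2) * (abar * (N:ℝ) ^ 2 * r ^ 2) :=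
            mul_le_mul_of_nonneg_left h1 hfac
        _ = abar * (N:ℝ) ^ 2 * (2 * abar * δ * N + δ ^ 2) * r ^ 2 := by ring
    have hc : 0 ≤ 2 * abar * δ * (N:ℝ) := by positivity
    have h3 : 2 * (abar * ((N:ℝ) * r)) * δ ≤ 2 * abar * δ * N := by
      calc 2 * (abar * ((N:ℝ) * r)) * δ = (2 * abar * δ * (N:ℝ)) * r := by ring
        _ ≤ (2 * abar * δ * (N:ℝ)) * 1 := mul_le_mul_of_nonneg_left hr1 hc
        _ = 2 * abar * δ * (N:ℝ) := mul_one _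
    have e1 : (abar * ((N:ℝ) * r) + δ) ^ 2
        = abar ^ 2 * (N:ℝ) ^ 2 * r ^ 2 + 2 * (abar * ((N:ℝ) * r)) * δ + δ ^ 2 := by ring
    have e2 : (abar ^ 2 * (N:ℝ) ^ 2 + X) * r ^ 2
        = abar ^ 2 * (N:ℝ) ^ 2 * r ^ 2 + X * r ^ 2 := by ring
    rw [e1, e2]
    linarith [h2, h3]
  have hnn1 : 0 ≤ abar * ((N:ℝ) * r) + δ := by positivity
  have hnn2 : 0 ≤ C₀ * r := mul_nonneg hC0nonneg hr0
  have h4 : abar * ((N:ℝ) * r) + δ ≤ C₀ * r := by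
    calc abar * ((N:ℝ) * r) + δ = Real.sqrt ((abar * ((N:ℝ) * r) + δ) ^ 2) :=
          (Real.sqrt_sq hnn1).symm
      _ ≤ Real.sqrt ((C₀ * r) ^ 2) := Real.sqrt_le_sqrt hkey
      _ = C₀ * r := Real.sqrt_sq hnn2
  linarith [hRpi_le]
end
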